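/- arXiv:2202.09712 — 9 statements merged into one kernel-verified Lean document; each statement's English description precedes it below -/
import Mathlib

section
/- Let g : ℝ → ℝ be continuous and 1-periodic (g(y+1) = g(y) for all y). Then for every x ≥ 0, the oscillatory averages converge to the mean: lim_{ε→0⁺} ∫₀ˣ g(t/ε) dt = x · ∫₀¹ g(s) ds. -/
open MeasureTheory Set Filter

/-- Averaging of periodic oscillations: for continuous 1-periodic `g`,
`∫₀ˣ g(t/ε) dt → x ∫₀¹ g` as `ε → 0⁺`. -/
theorem stmt_2 (g : ℝ → ℝ) (hg : Continuous g) (hper : ∀ y, g (y + 1) = g y)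
    (x : ℝ) (hx : 0 ≤ x) :
    Tendsto (fun ε => ∫ t in (0:ℝ)..x, g (t / ε))
      (nhdsWithin 0 (Ioi 0)) (nhds (x * ∫ s in (0:ℝ)..1, g s)) := by
  have per : Function.Periodic g 1 := hper
  have hint : ∀ t₁ t₂, IntervalIntegrable g MeasureSpace.volume t₁ t₂ := fun t₁ t₂ =>
    hg.intervalIntegrable t₁ t₂
  set I : ℝ := ∫ s in (0:ℝ)..1, g s with hI
  set C : ℝ := ∫ s in (0:ℝ)..1, |g s| with hC
  have hC0 : 0 ≤ C := intervalIntegral.integral_nonneg zero_le_one (fun u _ => abs_nonneg _)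
  -- main bound
  have key : ∀ ε : ℝ, 0 < ε → dist (∫ t in (0:ℝ)..x, g (t / ε)) (x * I) ≤ ε * (C + |I|) := by
    intro ε hε
    have hεne : ε ≠ 0 := ne_of_gt hε
    have hsub : (∫ t in (0:ℝ)..x, g (t / ε)) = ε * ∫ s in (0:ℝ)..(x/ε), g s := by
      rw [intervalIntegral.integral_comp_div (fun y => g y) hεne]
      simp [smul_eq_mul]
    set u : ℝ := x / ε with hu
    set r : ℝ := Int.fract u with hr
    set n : ℤ := ⌊u⌋ with hn
    have hr0 : 0 ≤ r := Int.fract_nonneg u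
    have hr1 : r ≤ 1 := le_of_lt (Int.fract_lt_one u)
    have hru : r + n • (1:ℝ) = u := by
      rw [hr, hn, zsmul_eq_mul, mul_one]
      exact_mod_cast Int.fract_add_floor u
    have hdecomp : (∫ s in (0:ℝ)..u, g s) = (∫ s in (0:ℝ)..r, g s) + n • I := by
      rw [← hru, ← intervalIntegral.integral_add_adjacent_intervals (hint 0 r) (hint r _),
        per.intervalIntegral_add_zsmul_eq n r hint, per.intervalIntegral_add_eq r 0]
      simp [hI]
    -- bound on ∫₀^r g
    have hRb : |∫ s in (0:ℝ)..r, g s| ≤ C := by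
      calc |∫ s in (0:ℝ)..r, g s| ≤ ∫ s in (0:ℝ)..r, |g s| := by
            simpa using intervalIntegral.abs_integral_le_integral_abs hr0
        _ ≤ C := by
            rw [hC, ← intervalIntegral.integral_add_adjacent_intervals
              (hg.abs.intervalIntegrable 0 r) (hg.abs.intervalIntegrable r 1)]
            have : 0 ≤ ∫ s in r..(1:ℝ), |g s| :=
              intervalIntegral.integral_nonneg hr1 (fun u _ => abs_nonneg _)
            linarith
    -- bound on ε * n vs x
    have hεn : |ε * (n:ℝ) - x| ≤ ε := by
      have h1 : (n:ℝ) ≤ u := Int.floor_le u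
      have h2 : u - 1 ≤ (n:ℝ) := by
        have := Int.lt_floor_add_one u; linarith
      have hx1 : ε * (n:ℝ) ≤ x := by
        have := mul_le_mul_of_nonneg_left h1 hε.le
        rwa [hu, mul_div_cancel₀ _ hεne] at this
      have hx2 : x - ε ≤ ε * (n:ℝ) := by
        have := mul_le_mul_of_nonneg_left h2 hε.le
        rw [mul_sub, hu, mul_div_cancel₀ _ hεne, mul_one] at this
        linarith
      rw [abs_le]; constructor <;> linarith
    rw [Real.dist_eq, hsub, hdecomp]
    have expand : ε * ((∫ s in (0:ℝ)..r, g s) + n • I) - x * I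
        = ε * (∫ s in (0:ℝ)..r, g s) + (ε * (n:ℝ) - x) * I := by
      push_cast [zsmul_eq_mul]; ring
    rw [expand]
    calc |ε * (∫ s in (0:ℝ)..r, g s) + (ε * (n:ℝ) - x) * I|
        ≤ |ε * (∫ s in (0:ℝ)..r, g s)| + |(ε * (n:ℝ) - x) * I| := abs_add_le _ _
      _ ≤ ε * C + ε * |I| := by
          rw [abs_mul, abs_mul, abs_of_pos hε]
          gcongr
      _ = ε * (C + |I|) := by ring
  -- conclude by squeezing
  rw [tendsto_iff_dist_tendsto_zero]
  apply squeeze_zero' (Eventually.of_forall fun ε => dist_nonneg)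
  · exact eventually_nhdsWithin_of_forall fun ε hε => key ε hε
  · have : Tendsto (fun ε : ℝ => ε * (C + |I|)) (nhds 0) (nhds 0) := by
      have h := ((continuous_id.mul (continuous_const (y := C + |I|)))).tendsto (0:ℝ)
      simpa [Pi.mul_def] using h
    exact this.mono_left nhdsWithin_le_nhds
end

section
/- Let g : ℝ → ℝ be continuous and 1-periodic (g(y+1) = g(y) for all y), and let M := sup_{y∈[0,1]} |g(y)|. Then for every ε > 0 and every x ∈ [0,1], |∫₀ˣ g(t/ε) dt − x · ∫₀¹ g(s) ds| ≤ 2 M ε. -/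
open MeasureTheory Set

/-- Quantitative averaging: for continuous 1-periodic `g` with `M = max_{[0,1]} |g|`,
`|∫₀ˣ g(t/ε) dt − x ∫₀¹ g| ≤ 2 M ε` for all `ε > 0` and `x ∈ [0,1]`. -/
theorem stmt_3 (g : ℝ → ℝ) (hg : Continuous g) (hper : ∀ y, g (y + 1) = g y)
    (M : ℝ) (hM : IsGreatest ((fun y => |g y|) '' Icc (0:ℝ) 1) M) :
    ∀ ε > (0:ℝ), ∀ x ∈ Icc (0:ℝ) 1,
      |(∫ t in (0:ℝ)..x, g (t / ε)) - x * ∫ s in (0:ℝ)..1, g s| ≤ 2 * M * ε := by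
  intro ε hε x hx
  have hP : Function.Periodic g 1 := hper
  -- global bound
  have hbound : ∀ y, |g y| ≤ M := by
    intro y
    have h1 : g y = g (Int.fract y) := by
      have h := hP.sub_int_mul_eq (x := y) ⌊y⌋
      rw [mul_one] at h
      simp only [Int.fract]
      exact h.symm
    rw [h1]
    exact hM.2 ⟨Int.fract y, ⟨Int.fract_nonneg y, (Int.fract_lt_one y).le⟩, rfl⟩
  have hMnn : 0 ≤ M := le_trans (abs_nonneg _) (hbound 0)
  have hint : ∀ t₁ t₂, IntervalIntegrable g MeasureSpace.volume t₁ t₂ :=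
    fun t₁ t₂ => hg.intervalIntegrable t₁ t₂
  set I : ℝ := ∫ s in (0:ℝ)..1, g s with hI
  -- substitution
  have hsub : (∫ t in (0:ℝ)..x, g (t / ε)) = ε • ∫ s in (0:ℝ)..(x / ε), g s := by
    rw [intervalIntegral.integral_comp_div g (ne_of_gt hε)]
    simp
  set r : ℝ := x / ε with hr
  have hr0 : 0 ≤ r := div_nonneg hx.1 hε.le
  set n : ℤ := ⌊r⌋ with hn
  have hn0 : (0:ℝ) ≤ n := by exact_mod_cast Int.floor_nonneg.mpr hr0
  have hfloor : ∫ s in (0:ℝ)..(n:ℝ), g s = n • I := by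
    have := hP.intervalIntegral_add_zsmul_eq n 0 hint
    simpa using this
  have hsplit : (∫ s in (0:ℝ)..r, g s) = n • I + ∫ s in (n:ℝ)..r, g s := by
    rw [← hfloor, intervalIntegral.integral_add_adjacent_intervals (hint _ _) (hint _ _)]
  -- bounds
  have hfrac0 : (n:ℝ) ≤ r := Int.floor_le r
  have hfrac1 : r - n ≤ 1 := by
    have := (Int.lt_floor_add_one r).le
    linarith
  have htail : |∫ s in (n:ℝ)..r, g s| ≤ M * (r - n) := by
    have := intervalIntegral.norm_integral_le_of_norm_le_const
      (C := M) (a := (n:ℝ)) (b := r) (f := g) (fun y _ => hbound y)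
    simpa [abs_of_nonneg (sub_nonneg.mpr hfrac0)] using this
  have hIbd : |I| ≤ M := by
    have := intervalIntegral.norm_integral_le_of_norm_le_const
      (C := M) (a := (0:ℝ)) (b := 1) (f := g) (fun y _ => hbound y)
    simpa using this
  -- put together
  rw [hsub, hsplit]
  have hxr : x = ε * r := by rw [hr]; field_simp [ne_of_gt hε]
  have key : ε • ((n:ℤ) • I + ∫ s in (n:ℝ)..r, g s) - x * I
      = ε * (∫ s in (n:ℝ)..r, g s) + ε * ((n - r) * I) := by
    simp only [smul_eq_mul, zsmul_eq_mul, hxr]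
    ring
  rw [key]
  have h1 : |ε * (∫ s in (n:ℝ)..r, g s)| ≤ ε * M := by
    rw [abs_mul, abs_of_pos hε]
    calc ε * |∫ s in (n:ℝ)..r, g s| ≤ ε * (M * (r - n)) := by
          exact mul_le_mul_of_nonneg_left htail hε.le
      _ ≤ ε * (M * 1) := by
          apply mul_le_mul_of_nonneg_left _ hε.le
          exact mul_le_mul_of_nonneg_left hfrac1 hMnn
      _ = ε * M := by ring
  have h2 : |ε * ((n - r) * I)| ≤ ε * M := by
    rw [abs_mul, abs_of_pos hε, abs_mul]
    have : |(n:ℝ) - r| ≤ 1 := by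
      rw [abs_sub_comm, abs_of_nonneg (sub_nonneg.mpr hfrac0)]; exact hfrac1
    calc ε * (|(n:ℝ) - r| * |I|) ≤ ε * (1 * M) :=
          mul_le_mul_of_nonneg_left (mul_le_mul this hIbd (abs_nonneg _) zero_le_one) hε.le
      _ = ε * M := by ring
  calc |ε * (∫ s in (n:ℝ)..r, g s) + ε * ((n - r) * I)|
      ≤ |ε * (∫ s in (n:ℝ)..r, g s)| + |ε * ((n - r) * I)| := abs_add_le _ _
    _ ≤ ε * M + ε * M := add_le_add h1 h2
    _ = 2 * M * ε := by ring
end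

section
/- Let g : ℝ → ℝ be continuous and 1-periodic (g(y+1) = g(y) for all y), and let φ : [0,1] → ℝ be continuous. Then lim_{ε→0⁺} ∫₀¹ g(x/ε) φ(x) dx = (∫₀¹ g(s) ds) · (∫₀¹ φ(x) dx); i.e., the rescaled functions g(·/ε) converge weakly (against continuous test functions) to the constant ∫₀¹ g. -/
open MeasureTheory Set Filter intervalIntegral Polynomial

/-- A continuous 1-periodic function is uniformly bounded. -/
lemma periodic_abs_bound {h : ℝ → ℝ} (hh : Continuous h) (hp : Function.Periodic h 1) :
    ∃ K : ℝ, 0 ≤ K ∧ ∀ y, |h y| ≤ K := by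
  obtain ⟨K, hK⟩ := isBounded_iff_forall_norm_le.1
    (hp.isBounded_of_continuous one_ne_zero hh)
  exact ⟨K, le_trans (abs_nonneg _) (hK _ ⟨0, rfl⟩), fun y => hK _ ⟨y, rfl⟩⟩

/-- Key integration-by-parts bound for mean-zero oscillation against a polynomial. -/
lemma osc_poly_bound {h : ℝ → ℝ} (hh : Continuous h) (hp : Function.Periodic h 1)
    (hmean : (∫ s in (0:ℝ)..1, h s) = 0) (p : Polynomial ℝ) :
    ∃ C : ℝ, 0 ≤ C ∧ ∀ ε : ℝ, 0 < ε →
      |∫ x in (0:ℝ)..1, h (x / ε) * p.eval x| ≤ ε * C := by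
  set H : ℝ → ℝ := fun y => ∫ s in (0:ℝ)..y, h s with hHdef
  have hHderiv : ∀ y, HasDerivAt H (h y) y := fun y =>
    (hh.integral_hasStrictDerivAt 0 y).hasDerivAt
  have hHcont : Continuous H :=
    continuous_iff_continuousAt.2 fun y => (hHderiv y).continuousAt
  have hHper : Function.Periodic H 1 := by
    intro y
    have h1 : H (y + 1) = H y + ∫ s in y..(y+1), h s := by
      rw [hHdef]
      simp only
      rw [← intervalIntegral.integral_add_adjacent_intervals
        (hh.intervalIntegrable 0 y) (hh.intervalIntegrable y (y+1))]
    have h2 : (∫ s in y..(y+1), h s) = ∫ s in (0:ℝ)..(0+1:ℝ), h s :=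
      hp.intervalIntegral_add_eq y 0
    rw [h1, h2]
    simp [hmean]
  obtain ⟨M, hM0, hM⟩ := periodic_abs_bound hHcont hHper
  obtain ⟨D, hD⟩ := (isCompact_Icc (a := (0:ℝ)) (b := 1)).exists_bound_of_continuousOn
    ((p.derivative.continuous_aeval).continuousOn)
  set D' : ℝ := max D 0 with hD'
  have hD'nn : 0 ≤ D' := le_max_right _ _
  have hDle : ∀ x ∈ Icc (0:ℝ) 1, |p.derivative.eval x| ≤ D' := by
    intro x hx
    calc |p.derivative.eval x| = ‖p.derivative.aeval x‖ := by
          simp [Polynomial.aeval_def, Real.norm_eq_abs]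
      _ ≤ D := hD x hx
      _ ≤ D' := le_max_left _ _
  refine ⟨M * |p.eval 1| + M * D', by positivity, fun ε hε => ?_⟩
  have hεne : ε ≠ 0 := ne_of_gt hε
  -- integration by parts
  have hu : ∀ x ∈ uIcc (0:ℝ) 1, HasDerivAt (fun x => ε * H (x / ε)) (h (x / ε)) x := by
    intro x _
    have h1 : HasDerivAt (fun x : ℝ => x / ε) (1 / ε) x := (hasDerivAt_id x).div_const ε
    have h2 := ((hHderiv (x / ε)).comp x h1).const_mul ε
    have h3 : ε * (h (x / ε) * (1 / ε)) = h (x / ε) := by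
      rw [mul_comm, mul_assoc, one_div, inv_mul_cancel₀ hεne, mul_one]
    rw [h3] at h2
    exact h2
  have hv : ∀ x ∈ uIcc (0:ℝ) 1, HasDerivAt (fun x => p.eval x) (p.derivative.eval x) x :=
    fun x _ => p.hasDerivAt x
  have hu' : IntervalIntegrable (fun x => h (x / ε)) volume 0 1 :=
    (hh.comp (continuous_id.div_const ε)).intervalIntegrable 0 1
  have hv' : IntervalIntegrable (fun x => p.derivative.eval x) volume 0 1 :=
    (p.derivative.continuous).intervalIntegrable 0 1
  have ibp := intervalIntegral.integral_mul_deriv_eq_deriv_mul hu hv hu' hv'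
  -- `ibp : ∫ (ε * H(x/ε)) * p' = u 1 * p 1 - u 0 * p 0 - ∫ h(x/ε) * p`
  have hH0 : H 0 = 0 := intervalIntegral.integral_same
  have key : (∫ x in (0:ℝ)..1, h (x / ε) * p.eval x)
      = ε * H (1 / ε) * p.eval 1 - ∫ x in (0:ℝ)..1, (ε * H (x / ε)) * p.derivative.eval x := by
    have := ibp
    simp only [zero_div, hH0, mul_zero, zero_mul, sub_zero] at this
    linarith [this]
  rw [key]
  have b1 : |ε * H (1 / ε) * p.eval 1| ≤ ε * (M * |p.eval 1|) := by
    rw [abs_mul, abs_mul, abs_of_pos hε]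
    have := hM (1 / ε)
    calc ε * |H (1/ε)| * |p.eval 1| ≤ ε * M * |p.eval 1| := by
          apply mul_le_mul_of_nonneg_right _ (abs_nonneg _)
          exact mul_le_mul_of_nonneg_left this (le_of_lt hε)
      _ = ε * (M * |p.eval 1|) := by ring
  have b2 : |∫ x in (0:ℝ)..1, (ε * H (x / ε)) * p.derivative.eval x| ≤ ε * (M * D') := by
    have hb : ∀ x ∈ uIoc (0:ℝ) 1, ‖(ε * H (x / ε)) * p.derivative.eval x‖ ≤ ε * M * D' := by
      intro x hx
      have hx' : x ∈ Icc (0:ℝ) 1 := by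
        rw [uIoc_of_le (by norm_num : (0:ℝ) ≤ 1)] at hx
        exact ⟨le_of_lt hx.1, hx.2⟩
      rw [Real.norm_eq_abs, abs_mul, abs_mul, abs_of_pos hε]
      have h1 : |H (x / ε)| ≤ M := hM _
      have h2 : |p.derivative.eval x| ≤ D' := hDle x hx'
      calc ε * |H (x/ε)| * |p.derivative.eval x| ≤ ε * M * |p.derivative.eval x| := by
            apply mul_le_mul_of_nonneg_right _ (abs_nonneg _)
            exact mul_le_mul_of_nonneg_left h1 (le_of_lt hε)
        _ ≤ ε * M * D' := mul_le_mul_of_nonneg_left h2 (by positivity)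
    have := intervalIntegral.norm_integral_le_of_norm_le_const hb
    simp only [Real.norm_eq_abs] at this
    calc |∫ x in (0:ℝ)..1, (ε * H (x / ε)) * p.derivative.eval x|
        ≤ ε * M * D' * |(1:ℝ) - 0| := this
      _ = ε * (M * D') := by norm_num; ring
  calc |ε * H (1 / ε) * p.eval 1 - ∫ x in (0:ℝ)..1, (ε * H (x / ε)) * p.derivative.eval x|
      ≤ |ε * H (1 / ε) * p.eval 1| + |∫ x in (0:ℝ)..1, (ε * H (x / ε)) * p.derivative.eval x| :=
        abs_sub _ _
    _ ≤ ε * (M * |p.eval 1|) + ε * (M * D') := add_le_add b1 b2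
    _ = ε * (M * |p.eval 1| + M * D') := by ring



lemma osc_zero {h φ : ℝ → ℝ} (hh : Continuous h) (hp : Function.Periodic h 1)
    (hmean : (∫ s in (0:ℝ)..1, h s) = 0) (hφ : ContinuousOn φ (Icc 0 1))
    (bnd : ∀ p : Polynomial ℝ, ∃ C : ℝ, 0 ≤ C ∧ ∀ ε : ℝ, 0 < ε →
      |∫ x in (0:ℝ)..1, h (x / ε) * p.eval x| ≤ ε * C)
    (Kbd : ∃ K : ℝ, 0 ≤ K ∧ ∀ y, |h y| ≤ K) :
    Tendsto (fun ε => ∫ x in (0:ℝ)..1, h (x / ε) * φ x)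
      (nhdsWithin 0 (Ioi 0)) (nhds 0) := by
  obtain ⟨K, hK0, hK⟩ := Kbd
  rw [Metric.tendsto_nhdsWithin_nhds]
  intro η hη
  obtain ⟨p, hpapp⟩ := exists_polynomial_near_of_continuousOn 0 1 φ hφ (η / (4 * (K + 1)))
    (by positivity)
  obtain ⟨C, hC0, hC⟩ := bnd p
  refine ⟨η / (2 * (C + 1)), by positivity, fun {ε} hεI hεd => ?_⟩
  have hε : 0 < ε := hεI
  have hεne : ε ≠ 0 := ne_of_gt hε
  have hεlt : ε < η / (2 * (C + 1)) := by
    rwa [Real.dist_eq, sub_zero, abs_of_pos hε] at hεd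
  have hcont1 : Continuous fun x => h (x / ε) := hh.comp (continuous_id.div_const ε)
  have hint1 : IntervalIntegrable (fun x => h (x / ε) * p.eval x) volume 0 1 :=
    (hcont1.mul p.continuous).intervalIntegrable 0 1
  have hint2 : IntervalIntegrable (fun x => h (x / ε) * (φ x - p.eval x)) volume 0 1 := by
    apply ContinuousOn.intervalIntegrable
    rw [uIcc_of_le (by norm_num : (0:ℝ) ≤ 1)]
    exact hcont1.continuousOn.mul (hφ.sub p.continuous.continuousOn)
  have hsplit : (∫ x in (0:ℝ)..1, h (x / ε) * φ x)
      = (∫ x in (0:ℝ)..1, h (x / ε) * p.eval x)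
        + ∫ x in (0:ℝ)..1, h (x / ε) * (φ x - p.eval x) := by
    rw [← intervalIntegral.integral_add hint1 hint2]
    congr 1
    funext x
    ring
  rw [Real.dist_eq, sub_zero, hsplit]
  have b1 : |∫ x in (0:ℝ)..1, h (x / ε) * p.eval x| ≤ ε * C := hC ε hε
  have b2 : |∫ x in (0:ℝ)..1, h (x / ε) * (φ x - p.eval x)| ≤ K * (η / (4 * (K + 1))) := by
    have hb : ∀ x ∈ uIoc (0:ℝ) 1, ‖h (x / ε) * (φ x - p.eval x)‖ ≤ K * (η / (4 * (K + 1))) := by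
      intro x hx
      have hx' : x ∈ Icc (0:ℝ) 1 := by
        rw [uIoc_of_le (by norm_num : (0:ℝ) ≤ 1)] at hx
        exact ⟨le_of_lt hx.1, hx.2⟩
      rw [Real.norm_eq_abs, abs_mul]
      have h2 : |φ x - p.eval x| ≤ η / (4 * (K + 1)) := by
        rw [abs_sub_comm]
        exact le_of_lt (hpapp x hx')
      exact mul_le_mul (hK _) h2 (abs_nonneg _) hK0
    have := intervalIntegral.norm_integral_le_of_norm_le_const hb
    simpa using this
  have b2' : K * (η / (4 * (K + 1))) ≤ η / 4 := by
    rw [mul_div_assoc', div_le_div_iff₀ (by positivity) (by norm_num : (0:ℝ) < 4)]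
    nlinarith [hη.le, hK0]
  have b1' : ε * C < η / 2 := by
    have : ε * C ≤ ε * (C + 1) := by nlinarith
    have h2 : ε * (C + 1) < (η / (2 * (C + 1))) * (C + 1) := by
      apply mul_lt_mul_of_pos_right hεlt (by positivity)
    have h3 : (η / (2 * (C + 1))) * (C + 1) = η / 2 := by
      field_simp
    linarith
  calc |(∫ x in (0:ℝ)..1, h (x / ε) * p.eval x)
        + ∫ x in (0:ℝ)..1, h (x / ε) * (φ x - p.eval x)|
      ≤ |∫ x in (0:ℝ)..1, h (x / ε) * p.eval x|
        + |∫ x in (0:ℝ)..1, h (x / ε) * (φ x - p.eval x)| := abs_add_le _ _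
    _ ≤ ε * C + K * (η / (4 * (K + 1))) := add_le_add b1 b2
    _ < η / 2 + η / 4 := by
        apply add_lt_add_of_lt_of_le b1' b2'
    _ < η := by linarith

/-- Weak convergence of oscillatory periodic functions to their mean:
`∫₀¹ g(x/ε) φ(x) dx → (∫₀¹ g)(∫₀¹ φ)` as `ε → 0⁺`. -/
theorem stmt_4 (g φ : ℝ → ℝ) (hg : Continuous g) (hper : ∀ y, g (y + 1) = g y)
    (hφ : ContinuousOn φ (Icc 0 1)) :
    Tendsto (fun ε => ∫ x in (0:ℝ)..1, g (x / ε) * φ x)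
      (nhdsWithin 0 (Ioi 0))
      (nhds ((∫ s in (0:ℝ)..1, g s) * ∫ x in (0:ℝ)..1, φ x)) := by
  set c : ℝ := ∫ s in (0:ℝ)..1, g s with hc
  set h : ℝ → ℝ := fun y => g y - c with hhdef
  have hhc : Continuous h := hg.sub continuous_const
  have hhp : Function.Periodic h 1 := fun y => by simp only [hhdef, hper y]
  have hφint : IntervalIntegrable φ volume 0 1 := by
    apply ContinuousOn.intervalIntegrable
    rwa [uIcc_of_le (by norm_num : (0:ℝ) ≤ 1)]
  have hmean : (∫ s in (0:ℝ)..1, h s) = 0 := by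
    simp only [hhdef]
    rw [intervalIntegral.integral_sub (hg.intervalIntegrable 0 1)
      (intervalIntegrable_const)]
    simp [hc]
  have heq : ∀ ε : ℝ, (∫ x in (0:ℝ)..1, g (x / ε) * φ x)
      = (∫ x in (0:ℝ)..1, h (x / ε) * φ x) + c * ∫ x in (0:ℝ)..1, φ x := by
    intro ε
    have hcont1 : Continuous fun x => h (x / ε) := hhc.comp (continuous_id.div_const ε)
    have i1 : IntervalIntegrable (fun x => h (x / ε) * φ x) volume 0 1 := by
      apply ContinuousOn.intervalIntegrable
      rw [uIcc_of_le (by norm_num : (0:ℝ) ≤ 1)]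
      exact hcont1.continuousOn.mul hφ
    have i2 : IntervalIntegrable (fun x => c * φ x) volume 0 1 := hφint.const_mul c
    calc (∫ x in (0:ℝ)..1, g (x / ε) * φ x)
        = ∫ x in (0:ℝ)..1, (h (x / ε) * φ x + c * φ x) := by
          congr 1
          funext x
          simp only [hhdef]
          ring
      _ = (∫ x in (0:ℝ)..1, h (x / ε) * φ x) + ∫ x in (0:ℝ)..1, c * φ x :=
          intervalIntegral.integral_add i1 i2
      _ = (∫ x in (0:ℝ)..1, h (x / ε) * φ x) + c * ∫ x in (0:ℝ)..1, φ x := by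
          rw [intervalIntegral.integral_const_mul]
  have T := (osc_zero hhc hhp hmean hφ (fun p => osc_poly_bound hhc hhp hmean p)
      (periodic_abs_bound hhc hhp)).add_const (c * ∫ x in (0:ℝ)..1, φ x)
  simp only [zero_add] at T
  have hfun : (fun ε => ∫ x in (0:ℝ)..1, g (x / ε) * φ x)
      = fun ε => (∫ x in (0:ℝ)..1, h (x / ε) * φ x) + c * ∫ x in (0:ℝ)..1, φ x :=
    funext heq
  rw [hfun]
  exact T
end

section
/- Let a : ℝ → ℝ be continuous and 1-periodic with α ≤ a(y) ≤ β for all y (0 < α ≤ β), and let f : [0,1] → ℝ be continuous. For ε > 0 set F(x) := ∫₀ˣ f(t) dt, c_ε := (∫₀¹ F(t)/a(t/ε) dt)/(∫₀¹ 1/a(t/ε) dt), and u_ε(x) := ∫₀ˣ (c_ε − F(t))/a(t/ε) dt, so that u_ε is the solution of −(a(x/ε) u_ε′)′ = f with u_ε(0) = u_ε(1) = 0. Let a* := (∫₀¹ 1/a(y) dy)⁻¹, c₀ := ∫₀¹ F(t) dt, and u₀(x) := (1/a*) ∫₀ˣ (c₀ − F(t)) dt, the solution of the homogenized problem −(a*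 u₀′)′ = f with u₀(0) = u₀(1) = 0. Then there exists a constant C > 0, independent of ε, such that for every ε ∈ (0,1], sup_{x∈[0,1]} |u_ε(x) − u₀(x)| ≤ C ε. -/
open MeasureTheory Set intervalIntegral

lemma key_ibp (b B : ℝ → ℝ) (m Mc : ℝ) (hb : Continuous b)
    (hBd : ∀ y, HasDerivAt B (b y - m) y) (hB0 : B 0 = 0)
    (hBbd : ∀ y, |B y| ≤ Mc)
    (g g' : ℝ → ℝ) (hg : ∀ t, HasDerivAt g (g' t) t) (hg'c : Continuous g')
    (G L : ℝ) (hG : ∀ t ∈ Icc (0:ℝ) 1, |g t| ≤ G) (hL : ∀ t ∈ Icc (0:ℝ) 1, |g' t| ≤ L)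
    (ε : ℝ) (hε0 : 0 < ε) (x : ℝ) (hx : x ∈ Icc (0:ℝ) 1) :
    |(∫ t in (0:ℝ)..x, g t * b (t/ε)) - m * ∫ t in (0:ℝ)..x, g t| ≤ ε * (Mc * (G + L)) := by
  have hgc : Continuous g := by
    rw [continuous_iff_continuousAt]; exact fun t => (hg t).continuousAt
  set v : ℝ → ℝ := fun t => ε * B (t / ε) with hv_def
  have hv : ∀ t, HasDerivAt v (b (t/ε) - m) t := by
    intro t
    have h1 : HasDerivAt (fun s : ℝ => s / ε) (1 / ε) t := (hasDerivAt_id t).div_const ε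
    have h2 := ((hBd (t/ε)).comp t h1).const_mul ε
    refine h2.congr_deriv ?_
    field_simp
  have hbε : Continuous fun t => b (t / ε) := hb.comp (continuous_id.div_const ε)
  have hsub : (∫ t in (0:ℝ)..x, g t * (b (t/ε) - m))
      = (∫ t in (0:ℝ)..x, g t * b (t/ε)) - m * ∫ t in (0:ℝ)..x, g t := by
    rw [← intervalIntegral.integral_const_mul, ← intervalIntegral.integral_sub
      (f := fun t => g t * b (t/ε)) (g := fun t => m * g t) ((hgc.mul hbε).intervalIntegrable _ _) ((continuous_const.mul hgc).intervalIntegrable _ _)]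
    congr 1; funext t; ring
  have hIBP := intervalIntegral.integral_mul_deriv_eq_deriv_mul
    (u := g) (u' := g') (v := v) (v' := fun t => b (t/ε) - m) (a := 0) (b := x)
    (fun t _ => hg t) (fun t _ => hv t)
    (hg'c.intervalIntegrable _ _) ((hbε.sub continuous_const).intervalIntegrable _ _)
  have hv0 : v 0 = 0 := by simp [hv_def, hB0]
  have hMc : 0 ≤ Mc := le_trans (abs_nonneg _) (hBbd 0)
  have hGnn : 0 ≤ G := le_trans (abs_nonneg _) (hG 0 (by norm_num))
  have hLnn : 0 ≤ L := le_trans (abs_nonneg _) (hL 0 (by norm_num))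
  have hvbd : ∀ t, |v t| ≤ ε * Mc := by
    intro t
    rw [hv_def, abs_mul, abs_of_pos hε0]
    exact mul_le_mul_of_nonneg_left (hBbd _) hε0.le
  have hbound1 : |g x * v x| ≤ G * (ε * Mc) := by
    rw [abs_mul]
    exact mul_le_mul (hG x hx) (hvbd x) (abs_nonneg _) hGnn
  have hbound2 : |∫ t in (0:ℝ)..x, g' t * v t| ≤ (L * (ε * Mc)) * |x - 0| := by
    rw [← Real.norm_eq_abs]
    apply intervalIntegral.norm_integral_le_of_norm_le_const
    intro t ht
    rw [uIoc_of_le hx.1] at ht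
    have ht' : t ∈ Icc (0:ℝ) 1 := ⟨ht.1.le, le_trans ht.2 hx.2⟩
    rw [Real.norm_eq_abs, abs_mul]
    exact mul_le_mul (hL t ht') (hvbd t) (abs_nonneg _) hLnn
  have hxabs : |x - 0| ≤ 1 := by rw [sub_zero, abs_of_nonneg hx.1]; exact hx.2
  calc |(∫ t in (0:ℝ)..x, g t * b (t/ε)) - m * ∫ t in (0:ℝ)..x, g t|
      = |g x * v x - g 0 * v 0 - ∫ t in (0:ℝ)..x, g' t * v t| := by rw [← hsub, hIBP]
    _ ≤ |g x * v x| + |∫ t in (0:ℝ)..x, g' t * v t| := by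
        rw [hv0, mul_zero, sub_zero]; exact abs_sub _ _
    _ ≤ G * (ε * Mc) + (L * (ε * Mc)) * |x - 0| := add_le_add hbound1 hbound2
    _ ≤ G * (ε * Mc) + (L * (ε * Mc)) * 1 := by
        apply add_le_add (le_refl _)
        exact mul_le_mul_of_nonneg_left hxabs (by positivity)
    _ = ε * (Mc * (G + L)) := by ring

set_option maxHeartbeats 1000000 in
/-- `L^∞` convergence rate of periodic homogenization in 1D:
`sup_{x∈[0,1]} |u_ε(x) − u₀(x)| ≤ C ε`. -/
theorem stmt_7 (a f F u0 : ℝ → ℝ) (α β astar c0 : ℝ) (c : ℝ → ℝ) (u : ℝ → ℝ → ℝ)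
    (hα : 0 < α) (hαβ : α ≤ β)
    (ha : Continuous a) (hper : ∀ y, a (y + 1) = a y)
    (hbd : ∀ y, α ≤ a y ∧ a y ≤ β)
    (hf : ContinuousOn f (Icc 0 1))
    (hF : ∀ x, F x = ∫ t in (0:ℝ)..x, f t)
    (hc : ∀ ε, c ε = (∫ t in (0:ℝ)..1, F t / a (t / ε)) / (∫ t in (0:ℝ)..1, 1 / a (t / ε)))
    (hu : ∀ ε x, u ε x = ∫ t in (0:ℝ)..x, (c ε - F t) / a (t / ε))
    (hastar : astar = (∫ y in (0:ℝ)..1, 1 / a y)⁻¹)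
    (hc0 : c0 = ∫ t in (0:ℝ)..1, F t)
    (hu0 : ∀ x, u0 x = (1 / astar) * ∫ t in (0:ℝ)..x, (c0 - F t)) :
    ∃ C > (0:ℝ), ∀ ε ∈ Ioc (0:ℝ) 1, ∀ x ∈ Icc (0:ℝ) 1,
      |u ε x - u0 x| ≤ C * ε := by
  have hβ : 0 < β := lt_of_lt_of_le hα hαβ
  have hapos : ∀ y, 0 < a y := fun y => lt_of_lt_of_le hα (hbd y).1
  set b : ℝ → ℝ := fun y => (a y)⁻¹ with hb_def
  have hbcont : Continuous b := ha.inv₀ (fun y => (hapos y).ne')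
  have hb_lb : ∀ y, β⁻¹ ≤ b y := fun y => inv_anti₀ (hapos y) (hbd y).2
  have hb_ub : ∀ y, b y ≤ α⁻¹ := fun y => inv_anti₀ hα (hbd y).1
  have hbper : Function.Periodic b 1 := fun y => by simp [hb_def, hper y]
  set m : ℝ := ∫ y in (0:ℝ)..1, b y with hm_def
  have hm_lb : β⁻¹ ≤ m := by
    calc β⁻¹ = ∫ y in (0:ℝ)..1, (β⁻¹:ℝ) := by simp
      _ ≤ m := intervalIntegral.integral_mono_on zero_le_one (intervalIntegrable_const)
          (hbcont.intervalIntegrable _ _) (fun y _ => hb_lb y)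
  have hm_ub : m ≤ α⁻¹ := by
    calc m ≤ ∫ y in (0:ℝ)..1, (α⁻¹:ℝ) := intervalIntegral.integral_mono_on zero_le_one
          (hbcont.intervalIntegrable _ _) (intervalIntegrable_const) (fun y _ => hb_ub y)
      _ = α⁻¹ := by simp
  have hm_pos : 0 < m := lt_of_lt_of_le (inv_pos.2 hβ) hm_lb
  have hastar_m : 1 / astar = m := by
    rw [hastar, hm_def, one_div, inv_inv]
    congr 1; funext y; rw [one_div]
  -- the antiderivative B
  set B : ℝ → ℝ := fun y => ∫ t in (0:ℝ)..y, (b t - m) with hB_def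
  have hbm_cont : Continuous fun t => b t - m := hbcont.sub continuous_const
  have hBd : ∀ y, HasDerivAt B (b y - m) y :=
    fun y => (hbm_cont.integral_hasStrictDerivAt 0 y).hasDerivAt
  have hB0 : B 0 = 0 := intervalIntegral.integral_same
  have hbmper : Function.Periodic (fun t => b t - m) 1 := fun y => by simp [hbper y]
  have hBper : Function.Periodic B 1 := by
    intro y
    have h1 : B (y + 1) = B y + ∫ t in y..(y+1), (b t - m) :=
      (intervalIntegral.integral_add_adjacent_intervals (hbm_cont.intervalIntegrable _ _)
        (hbm_cont.intervalIntegrable _ _)).symm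
    have h2 : (∫ t in y..(y+1), (b t - m)) = ∫ t in (0:ℝ)..(0+1), (b t - m) :=
      hbmper.intervalIntegral_add_eq y 0
    have h3 : (∫ t in (0:ℝ)..(0+1), (b t - m)) = 0 := by
      rw [zero_add, intervalIntegral.integral_sub (hbcont.intervalIntegrable _ _)
        (intervalIntegrable_const), ← hm_def]
      simp
    rw [h1, h2, h3, add_zero]
  have hBsmall : ∀ r ∈ Icc (0:ℝ) 1, |B r| ≤ α⁻¹ := by
    intro r hr
    have hbnd : ∀ t ∈ uIoc (0:ℝ) r, ‖b t - m‖ ≤ α⁻¹ - β⁻¹ := by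
      intro t _
      rw [Real.norm_eq_abs, abs_le]
      constructor
      · have := hb_lb t; linarith
      · have := hb_ub t; linarith
    have := intervalIntegral.norm_integral_le_of_norm_le_const hbnd
    rw [Real.norm_eq_abs] at this
    have hr1 : |r - 0| ≤ 1 := by rw [sub_zero, abs_of_nonneg hr.1]; exact hr.2
    have hαβinv : β⁻¹ ≤ α⁻¹ := inv_anti₀ hα hαβ
    have hβinv : 0 < β⁻¹ := inv_pos.2 hβ
    calc |B r| ≤ (α⁻¹ - β⁻¹) * |r - 0| := this
      _ ≤ (α⁻¹ - β⁻¹) * 1 := mul_le_mul_of_nonneg_left hr1 (by linarith)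
      _ ≤ α⁻¹ := by linarith
  have hBbd : ∀ y, |B y| ≤ α⁻¹ := by
    intro y
    have h1 : B (y - (⌊y⌋ : ℤ) • (1:ℝ)) = B y := hBper.sub_zsmul_eq ⌊y⌋
    have h2 : y - (⌊y⌋ : ℤ) • (1:ℝ) = Int.fract y := by
      rw [zsmul_eq_mul, mul_one, Int.fract]
    rw [← h1, h2]
    exact hBsmall _ ⟨Int.fract_nonneg y, (Int.fract_lt_one y).le⟩
  -- continuous extension of f
  set fe : ℝ → ℝ := fun t => f (min 1 (max 0 t)) with hfe_def
  have hclamp : ∀ t : ℝ, min 1 (max 0 t) ∈ Icc (0:ℝ) 1 :=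
    fun t => ⟨le_min zero_le_one (le_max_left _ _), min_le_left _ _⟩
  have hfe_cont : Continuous fe :=
    hf.comp_continuous (continuous_const.min (continuous_const.max continuous_id)) hclamp
  have hfe_eq : ∀ t ∈ Icc (0:ℝ) 1, fe t = f t := by
    intro t ht
    simp [hfe_def, max_eq_right ht.1, min_eq_right ht.2]
  obtain ⟨K0, hK0⟩ := isCompact_Icc.exists_bound_of_continuousOn hf
  set K : ℝ := max K0 1 with hK_def
  have hK1 : (1:ℝ) ≤ K := le_max_right _ _
  have hKpos : (0:ℝ) < K := lt_of_lt_of_le one_pos hK1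
  have hfeK : ∀ t, |fe t| ≤ K := by
    intro t
    calc |fe t| = ‖f (min 1 (max 0 t))‖ := by rw [Real.norm_eq_abs]
      _ ≤ K0 := hK0 _ (hclamp t)
      _ ≤ K := le_max_left _ _
  set Fe : ℝ → ℝ := fun x => ∫ t in (0:ℝ)..x, fe t with hFe_def
  have hFed : ∀ x, HasDerivAt Fe (fe x) x :=
    fun x => (hfe_cont.integral_hasStrictDerivAt 0 x).hasDerivAt
  have hFeF : ∀ x ∈ Icc (0:ℝ) 1, Fe x = F x := by
    intro x hx
    rw [hF x, hFe_def]
    apply intervalIntegral.integral_congr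
    intro t ht
    rw [uIcc_of_le hx.1] at ht
    exact hfe_eq t ⟨ht.1, le_trans ht.2 hx.2⟩
  have hFeK : ∀ x ∈ Icc (0:ℝ) 1, |Fe x| ≤ K := by
    intro x hx
    have hbnd : ∀ t ∈ uIoc (0:ℝ) x, ‖fe t‖ ≤ K := by
      intro t _; rw [Real.norm_eq_abs]; exact hfeK t
    have := intervalIntegral.norm_integral_le_of_norm_le_const hbnd
    rw [Real.norm_eq_abs] at this
    have hx1 : |x - 0| ≤ 1 := by rw [sub_zero, abs_of_nonneg hx.1]; exact hx.2
    calc |Fe x| ≤ K * |x - 0| := this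
      _ ≤ K * 1 := mul_le_mul_of_nonneg_left hx1 hKpos.le
      _ = K := mul_one K
  -- constants
  set Mc : ℝ := α⁻¹ with hMc_def
  have hMc_pos : 0 < Mc := inv_pos.2 hα
  set Gc : ℝ := K * α⁻¹ * β with hGc_def
  have hGc_pos : 0 < Gc := by positivity
  set C1 : ℝ := 3 * K * Mc * β with hC1_def
  set C : ℝ := Mc * (Gc + 2 * K) + α⁻¹ * C1 + 1 with hC_def
  refine ⟨C, by positivity, ?_⟩
  intro ε hε x hx
  have hε0 : 0 < ε := hε.1
  have hbε_cont : Continuous fun t => b (t/ε) := hbcont.comp (continuous_id.div_const ε)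
  -- the numerator and denominator
  set D : ℝ := ∫ t in (0:ℝ)..1, b (t/ε) with hD_def
  set N : ℝ := ∫ t in (0:ℝ)..1, Fe t * b (t/ε) with hN_def
  have hD_eq : (∫ t in (0:ℝ)..1, 1 / a (t/ε)) = D := by
    rw [hD_def]; congr 1; funext t; rw [one_div]
  have hN_eq : (∫ t in (0:ℝ)..1, F t / a (t/ε)) = N := by
    rw [hN_def]
    apply intervalIntegral.integral_congr
    intro t ht
    rw [uIcc_of_le zero_le_one] at ht
    show F t / a (t / ε) = Fe t * b (t / ε)
    rw [div_eq_mul_inv, hFeF t ht]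
  have hcε : c ε = N / D := by rw [hc ε, hD_eq, hN_eq]
  have hD_lb : β⁻¹ ≤ D := by
    calc β⁻¹ = ∫ y in (0:ℝ)..1, (β⁻¹:ℝ) := by simp
      _ ≤ D := intervalIntegral.integral_mono_on zero_le_one (intervalIntegrable_const)
          (hbε_cont.intervalIntegrable _ _) (fun y _ => hb_lb _)
  have hD_pos : 0 < D := lt_of_lt_of_le (inv_pos.2 hβ) hD_lb
  have hc0e : c0 = ∫ t in (0:ℝ)..1, Fe t := by
    rw [hc0]
    apply (intervalIntegral.integral_congr _).symm
    intro t ht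
    rw [uIcc_of_le zero_le_one] at ht
    exact hFeF t ht
  have hc0K : |c0| ≤ K := by
    rw [hc0e]
    have hbnd : ∀ t ∈ uIoc (0:ℝ) 1, ‖Fe t‖ ≤ K := by
      intro t ht
      rw [uIoc_of_le zero_le_one] at ht
      rw [Real.norm_eq_abs]; exact hFeK t ⟨ht.1.le, ht.2⟩
    have := intervalIntegral.norm_integral_le_of_norm_le_const hbnd
    rw [Real.norm_eq_abs] at this
    simpa using this
  -- Application 1: g = 1
  have hA1 : |D - m| ≤ ε * (Mc * (1 + 0)) := by
    have h := key_ibp b B m Mc hbcont hBd hB0 hBbd (fun _ => 1) (fun _ => 0)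
      (fun t => hasDerivAt_const t 1) continuous_const 1 0
      (fun t _ => by norm_num) (fun t _ => by norm_num) ε hε0 1 (by norm_num)
    simpa [hD_def] using h
  -- Application 2: g = Fe
  have hA2 : |N - m * c0| ≤ ε * (Mc * (K + K)) := by
    have h := key_ibp b B m Mc hbcont hBd hB0 hBbd Fe fe hFed hfe_cont K K
      (fun t ht => hFeK t ht) (fun t _ => hfeK t) ε hε0 1 (by norm_num)
    rw [hc0e]
    simpa [hN_def] using h
  -- |c ε| ≤ Gc
  have hNbd : |N| ≤ K * α⁻¹ := by
    have hbnd : ∀ t ∈ uIoc (0:ℝ) 1, ‖Fe t * b (t/ε)‖ ≤ K * α⁻¹ := by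
      intro t ht
      rw [uIoc_of_le zero_le_one] at ht
      rw [Real.norm_eq_abs, abs_mul]
      apply mul_le_mul (hFeK t ⟨ht.1.le, ht.2⟩) _ (abs_nonneg _) hKpos.le
      rw [abs_of_pos (lt_of_lt_of_le (inv_pos.2 hβ) (hb_lb _))]
      exact hb_ub _
    have := intervalIntegral.norm_integral_le_of_norm_le_const hbnd
    rw [Real.norm_eq_abs] at this
    simpa [hN_def] using this
  have hcbd : |c ε| ≤ Gc := by
    rw [hcε, abs_div, abs_of_pos hD_pos]
    calc |N| / D ≤ (K * α⁻¹) / β⁻¹ :=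
        div_le_div₀ (by positivity) hNbd (inv_pos.2 hβ) hD_lb
      _ = Gc := by rw [div_eq_mul_inv, inv_inv, hGc_def]
  -- |c ε - c0| ≤ C1 * ε
  have hcdiff : |c ε - c0| ≤ C1 * ε := by
    have hkey : c ε - c0 = (N - m * c0 + c0 * (m - D)) / D := by
      rw [hcε]
      field_simp
      ring
    rw [hkey, abs_div, abs_of_pos hD_pos]
    have hnum : |N - m * c0 + c0 * (m - D)| ≤ 3 * K * Mc * ε := by
      calc |N - m * c0 + c0 * (m - D)| ≤ |N - m * c0| + |c0| * |m - D| := by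
            rw [← abs_mul]; exact abs_add_le _ _
        _ ≤ ε * (Mc * (K + K)) + K * (ε * (Mc * (1 + 0))) := by
            apply add_le_add hA2
            apply mul_le_mul hc0K _ (abs_nonneg _) hKpos.le
            rw [abs_sub_comm]; exact hA1
        _ = 3 * K * Mc * ε := by ring
    calc |N - m * c0 + c0 * (m - D)| / D ≤ (3 * K * Mc * ε) / β⁻¹ :=
        div_le_div₀ (by positivity) hnum (inv_pos.2 hβ) hD_lb
      _ = C1 * ε := by rw [div_eq_mul_inv, inv_inv, hC1_def]; ring
  -- Application 3: g = c ε - Fe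
  have hFec : Continuous Fe := by
    rw [continuous_iff_continuousAt]; exact fun t => (hFed t).continuousAt
  have hg3 : ∀ t, HasDerivAt (fun t => c ε - Fe t) (-fe t) t := by
    intro t
    exact ((hasDerivAt_const t (c ε)).sub (hFed t)).congr_deriv (by ring)
  have hG3 : ∀ t ∈ Icc (0:ℝ) 1, |c ε - Fe t| ≤ Gc + K := by
    intro t ht
    calc |c ε - Fe t| ≤ |c ε| + |Fe t| := abs_sub _ _
      _ ≤ Gc + K := add_le_add hcbd (hFeK t ht)
  have hA3 := key_ibp b B m Mc hbcont hBd hB0 hBbd (fun t => c ε - Fe t) (fun t => -fe t)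
    hg3 hfe_cont.neg (Gc + K) K hG3
    (fun t _ => by rw [abs_neg]; exact hfeK t) ε hε0 x hx
  -- rewrite u and u0
  have huε : u ε x = ∫ t in (0:ℝ)..x, (c ε - Fe t) * b (t/ε) := by
    rw [hu ε x]
    apply intervalIntegral.integral_congr
    intro t ht
    rw [uIcc_of_le hx.1] at ht
    show (c ε - F t) / a (t / ε) = (c ε - Fe t) * b (t / ε)
    rw [div_eq_mul_inv, hFeF t ⟨ht.1, le_trans ht.2 hx.2⟩]
  have hu0x : u0 x = m * ∫ t in (0:ℝ)..x, (c0 - Fe t) := by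
    rw [hu0 x, hastar_m]
    congr 1
    apply intervalIntegral.integral_congr
    intro t ht
    rw [uIcc_of_le hx.1] at ht
    show c0 - F t = c0 - Fe t
    rw [hFeF t ⟨ht.1, le_trans ht.2 hx.2⟩]
  have hI : (∫ t in (0:ℝ)..x, (c ε - Fe t)) - (∫ t in (0:ℝ)..x, (c0 - Fe t))
      = x * (c ε - c0) := by
    rw [← intervalIntegral.integral_sub (f := fun t => c ε - Fe t) (g := fun t => c0 - Fe t)
      ((continuous_const.sub hFec).intervalIntegrable _ _)
      ((continuous_const.sub hFec).intervalIntegrable _ _)]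
    rw [intervalIntegral.integral_congr (g := fun _ => c ε - c0)
      (fun t _ => by show (c ε - Fe t) - (c0 - Fe t) = c ε - c0; ring)]
    simp [smul_eq_mul]
    ring
  have hsplit : u ε x - u0 x
      = ((∫ t in (0:ℝ)..x, (c ε - Fe t) * b (t/ε)) - m * ∫ t in (0:ℝ)..x, (c ε - Fe t))
        + m * (x * (c ε - c0)) := by
    rw [huε, hu0x, ← hI]; ring
  have hterm2 : |m * (x * (c ε - c0))| ≤ α⁻¹ * C1 * ε := by
    rw [abs_mul, abs_mul]
    have h1 : |m| = m := abs_of_pos hm_pos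
    have h2 : |x| ≤ 1 := by rw [abs_of_nonneg hx.1]; exact hx.2
    calc |m| * (|x| * |c ε - c0|) ≤ α⁻¹ * (1 * (C1 * ε)) := by
          rw [h1]
          apply mul_le_mul hm_ub _ (by positivity) (by positivity)
          exact mul_le_mul h2 hcdiff (abs_nonneg _) one_pos.le
      _ = α⁻¹ * C1 * ε := by ring
  calc |u ε x - u0 x|
      ≤ |(∫ t in (0:ℝ)..x, (c ε - Fe t) * b (t/ε)) - m * ∫ t in (0:ℝ)..x, (c ε - Fe t)|
        + |m * (x * (c ε - c0))| := by rw [hsplit]; exact abs_add_le _ _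
    _ ≤ ε * (Mc * (Gc + K + K)) + α⁻¹ * C1 * ε := add_le_add hA3 hterm2
    _ ≤ C * ε := by
        rw [hC_def]
        nlinarith [hε0.le, hMc_pos.le, hGc_pos.le, hKpos.le]
end

section
/- Let a : ℝ → ℝ be continuous and 1-periodic with α ≤ a(y) ≤ β for all y (0 < α ≤ β), and let f : [0,1] → ℝ be continuous. With F(x) := ∫₀ˣ f(t) dt, c_ε := (∫₀¹ F(t)/a(t/ε) dt)/(∫₀¹ 1/a(t/ε) dt), u_ε′(x) := (c_ε − F(x))/a(x/ε), a* := (∫₀¹ 1/a(y) dy)⁻¹, c₀ := ∫₀¹ F(t) dt, and u₀′(x) := (c₀ − F(x))/a*, the derivatives of the multiscale solutions converge weakly to the derivative of the homogenized solution: for every continuous φ : [0,1] → ℝ, lim_{ε→0⁺} ∫₀¹ u_ε′(x) φ(x) dx = ∫₀¹ u₀′(x) φ(x) dx. -/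
open MeasureTheory Set Filter

set_option maxHeartbeats 1000000

private lemma contOn_II {g : ℝ → ℝ} (hg : ContinuousOn g (Icc 0 1)) :
    IntervalIntegrable g volume 0 1 :=
  hg.intervalIntegrable_of_Icc zero_le_one

/-- Mean-zero periodic averaging: oscillatory integrals vanish in the limit. -/
private lemma avg_zero (h g : ℝ → ℝ) (hh : Continuous h) (hper : Function.Periodic h 1)
    (hmean : (∫ y in (0:ℝ)..1, h y) = 0)
    (hg : ContinuousOn g (Icc 0 1)) :
    Tendsto (fun ε => ∫ x in (0:ℝ)..1, g x * h (x / ε)) (nhdsWithin 0 (Ioi 0)) (nhds 0) := by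
  obtain ⟨C, hC⟩ : ∃ C, ∀ y, |h y| ≤ C := by
    obtain ⟨C, hC⟩ := isCompact_Icc.exists_bound_of_continuousOn
      (s := Icc (0:ℝ) 1) hh.continuousOn
    refine ⟨C, fun y => ?_⟩
    have h1 := hper.sub_int_mul_eq (x := y) (n := ⌊y⌋)
    rw [← h1]
    have hb1 : (0:ℝ) ≤ y - (⌊y⌋:ℝ) * 1 := by
      rw [mul_one]; linarith [Int.floor_le y]
    have hb2 : y - (⌊y⌋:ℝ) * 1 ≤ 1 := by
      rw [mul_one]; linarith [Int.lt_floor_add_one y]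
    simpa using hC _ ⟨hb1, hb2⟩
  have hC0 : 0 ≤ C := le_trans (abs_nonneg _) (hC 0)
  obtain ⟨B, hB⟩ := isCompact_Icc.exists_bound_of_continuousOn (s := Icc (0:ℝ) 1) hg
  have hB0 : 0 ≤ B := le_trans (abs_nonneg _) (by simpa using hB 0 ⟨le_rfl, zero_le_one⟩)
  have hu := isCompact_Icc.uniformContinuousOn_of_continuous (s := Icc (0:ℝ) 1) hg
  rw [Metric.tendsto_nhdsWithin_nhds]
  intro η hη
  obtain ⟨r, hr, hru⟩ := Metric.uniformContinuousOn_iff.1 hu (η / (2 * (C + 1)))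
    (by positivity)
  refine ⟨min r (min 1 (η / (2 * (C * B + 1)))), by positivity, fun ε hε hεδ => ?_⟩
  have hε0 : (0:ℝ) < ε := hε
  have hεne : ε ≠ 0 := ne_of_gt hε0
  rw [Real.dist_eq, sub_zero, abs_of_pos hε0] at hεδ
  have hεr : ε < r := lt_of_lt_of_le hεδ (min_le_left _ _)
  have hε1 : ε ≤ 1 :=
    le_of_lt (lt_of_lt_of_le hεδ ((min_le_right _ _).trans (min_le_left _ _)))
  have hεη : ε < η / (2 * (C * B + 1)) :=
    lt_of_lt_of_le hεδ ((min_le_right _ _).trans (min_le_right _ _))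
  set n := ⌊1 / ε⌋₊ with hn
  have h1ε : (1:ℝ) ≤ 1 / ε := by
    rw [le_div_iff₀ hε0, one_mul]; exact hε1
  have hfl : (n : ℝ) ≤ 1 / ε := Nat.floor_le (le_trans zero_le_one h1ε)
  have hnε : (n : ℝ) * ε ≤ 1 := by
    have := mul_le_mul_of_nonneg_right hfl hε0.le
    rwa [one_div, inv_mul_cancel₀ hεne] at this
  have hfl2 : 1 / ε < (n : ℝ) + 1 := Nat.lt_floor_add_one (1 / ε)
  have hn1 : 1 - (n : ℝ) * ε ≤ ε := by
    have := mul_lt_mul_of_pos_right hfl2 hε0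
    rw [one_div, inv_mul_cancel₀ hεne] at this
    nlinarith
  have hnε0 : 0 ≤ (n : ℝ) * ε := by positivity
  -- integrability
  have hcont : ContinuousOn (fun x => g x * h (x / ε)) (Icc 0 1) :=
    hg.mul (hh.comp (continuous_id.div_const ε)).continuousOn
  have hint : ∀ s t : ℝ, s ∈ Icc (0:ℝ) 1 → t ∈ Icc (0:ℝ) 1 →
      IntervalIntegrable (fun x => g x * h (x / ε)) volume s t := by
    intro s t hs ht
    apply ContinuousOn.intervalIntegrable
    apply hcont.mono
    rw [← uIcc_of_le (zero_le_one (α := ℝ))]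
    exact uIcc_subset_uIcc (by rwa [uIcc_of_le (zero_le_one (α := ℝ))])
      (by rwa [uIcc_of_le (zero_le_one (α := ℝ))])
  -- each full period of h (x/ε) integrates to zero
  have hzero : ∀ i : ℕ, (∫ x in ((i:ℝ) * ε)..(((i:ℝ) + 1) * ε), h (x / ε)) = 0 := by
    intro i
    rw [intervalIntegral.integral_comp_div (f := h) (c := ε) hεne]
    have e1 : ((i:ℝ) * ε) / ε = (i : ℝ) := by field_simp
    have e2 : (((i:ℝ) + 1) * ε) / ε = (i : ℝ) + 1 := by field_simp
    rw [e1, e2]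
    have := hper.intervalIntegral_add_eq (i : ℝ) 0
    rw [zero_add] at this
    rw [this, hmean, smul_zero]
  -- bound each full-period term
  have key : ∀ i : ℕ, (i : ℝ) + 1 ≤ (n : ℝ) →
      |∫ x in ((i:ℝ) * ε)..(((i:ℝ) + 1) * ε), g x * h (x / ε)|
        ≤ η / (2 * (C + 1)) * C * ε := by
    intro i hi
    have hiL : 0 ≤ (i:ℝ) * ε := by positivity
    have hiU : ((i:ℝ) + 1) * ε ≤ 1 := le_trans (by nlinarith) hnε
    have hmem : (i:ℝ) * ε ∈ Icc (0:ℝ) 1 := ⟨hiL, by nlinarith⟩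
    have hmem2 : ((i:ℝ) + 1) * ε ∈ Icc (0:ℝ) 1 := ⟨by positivity, hiU⟩
    have e1 : IntervalIntegrable (fun x => g x * h (x / ε)) volume
        ((i:ℝ) * ε) (((i:ℝ) + 1) * ε) := hint _ _ hmem hmem2
    have e2 : IntervalIntegrable (fun x => g ((i:ℝ) * ε) * h (x / ε)) volume
        ((i:ℝ) * ε) (((i:ℝ) + 1) * ε) :=
      (Continuous.intervalIntegrable (by fun_prop) _ _)
    have h3 : (∫ x in ((i:ℝ) * ε)..(((i:ℝ) + 1) * ε),
          (g x - g ((i:ℝ) * ε)) * h (x / ε))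
        = (∫ x in ((i:ℝ) * ε)..(((i:ℝ) + 1) * ε), g x * h (x / ε))
          - ∫ x in ((i:ℝ) * ε)..(((i:ℝ) + 1) * ε), g ((i:ℝ) * ε) * h (x / ε) := by
      rw [← intervalIntegral.integral_sub e1 e2]
      congr 1; funext x; ring
    have h4 : (∫ x in ((i:ℝ) * ε)..(((i:ℝ) + 1) * ε), g ((i:ℝ) * ε) * h (x / ε)) = 0 := by
      rw [intervalIntegral.integral_const_mul, hzero i, mul_zero]
    have hrw : (∫ x in ((i:ℝ) * ε)..(((i:ℝ) + 1) * ε), g x * h (x / ε))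
        = ∫ x in ((i:ℝ) * ε)..(((i:ℝ) + 1) * ε), (g x - g ((i:ℝ) * ε)) * h (x / ε) := by
      rw [h3, h4, sub_zero]
    rw [hrw]
    have hb : ‖∫ x in ((i:ℝ) * ε)..(((i:ℝ) + 1) * ε),
        (g x - g ((i:ℝ) * ε)) * h (x / ε)‖
        ≤ η / (2 * (C + 1)) * C * |(((i:ℝ) + 1) * ε) - ((i:ℝ) * ε)| := by
      apply intervalIntegral.norm_integral_le_of_norm_le_const
      intro x hx
      rw [uIoc_of_le (by nlinarith : (i:ℝ) * ε ≤ ((i:ℝ) + 1) * ε)] at hx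
      have hx1 : (i:ℝ) * ε < x := hx.1
      have hx2 : x ≤ ((i:ℝ) + 1) * ε := hx.2
      have hxm : x ∈ Icc (0:ℝ) 1 := ⟨le_trans hiL hx1.le, le_trans hx2 hiU⟩
      have hdist : dist x ((i:ℝ) * ε) < r := by
        rw [Real.dist_eq, abs_of_pos (by linarith)]
        nlinarith
      have hgd := hru x hxm _ hmem hdist
      rw [Real.dist_eq] at hgd
      rw [Real.norm_eq_abs, abs_mul]
      exact mul_le_mul hgd.le (hC _) (abs_nonneg _) (by positivity)
    calc |∫ x in ((i:ℝ) * ε)..(((i:ℝ) + 1) * ε), (g x - g ((i:ℝ) * ε)) * h (x / ε)|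
        ≤ η / (2 * (C + 1)) * C * |(((i:ℝ) + 1) * ε) - ((i:ℝ) * ε)| := hb
      _ = η / (2 * (C + 1)) * C * ε := by
          rw [show (((i:ℝ) + 1) * ε) - ((i:ℝ) * ε) = ε by ring, abs_of_pos hε0]
  -- decompose the integral
  have hints : ∀ k : ℕ, k < n → IntervalIntegrable (fun x => g x * h (x / ε)) volume
      ((k:ℝ) * ε) ((((k+1 : ℕ)):ℝ) * ε) := by
    intro k hk
    have hk1 : (k : ℝ) + 1 ≤ (n : ℝ) := by exact_mod_cast Nat.succ_le_of_lt hk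
    have hkn : (k : ℝ) ≤ (n : ℝ) := by linarith
    apply hint
    · refine ⟨by positivity, ?_⟩
      nlinarith [hε0.le, hnε, Nat.cast_nonneg (α := ℝ) k]
    · push_cast
      refine ⟨by positivity, ?_⟩
      nlinarith [hε0.le, hnε]
  have hsum : (∫ x in (0:ℝ)..((n:ℝ) * ε), g x * h (x / ε))
      = ∑ i ∈ Finset.range n, ∫ x in ((i:ℝ) * ε)..(((i:ℝ) + 1) * ε), g x * h (x / ε) := by
    have hS := intervalIntegral.sum_integral_adjacent_intervals (μ := volume)
      (f := fun x => g x * h (x / ε)) (a := fun i : ℕ => (i : ℝ) * ε) (n := n)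
      (fun k hk => hints k hk)
    simp only [Nat.cast_zero, zero_mul] at hS
    rw [← hS]
    refine Finset.sum_congr rfl fun i _ => ?_
    have e1 : (((i + 1 : ℕ)) : ℝ) = (i : ℝ) + 1 := by push_cast; ring
    rw [e1]
  have hsplit : (∫ x in (0:ℝ)..1, g x * h (x / ε))
      = (∫ x in (0:ℝ)..((n:ℝ) * ε), g x * h (x / ε))
        + ∫ x in ((n:ℝ) * ε)..1, g x * h (x / ε) :=
    (intervalIntegral.integral_add_adjacent_intervals
      (hint 0 ((n:ℝ) * ε) ⟨le_rfl, zero_le_one⟩ ⟨hnε0, hnε⟩)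
      (hint ((n:ℝ) * ε) 1 ⟨hnε0, hnε⟩ ⟨zero_le_one, le_rfl⟩)).symm
  have htail : |∫ x in ((n:ℝ) * ε)..1, g x * h (x / ε)| ≤ B * C * ε := by
    have hb : ‖∫ x in ((n:ℝ) * ε)..1, g x * h (x / ε)‖ ≤ B * C * |1 - (n:ℝ) * ε| := by
      apply intervalIntegral.norm_integral_le_of_norm_le_const
      intro x hx
      rw [uIoc_of_le hnε] at hx
      have hxm : x ∈ Icc (0:ℝ) 1 := ⟨le_trans hnε0 hx.1.le, hx.2⟩
      rw [Real.norm_eq_abs, abs_mul]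
      exact mul_le_mul (by simpa using hB x hxm) (hC _) (abs_nonneg _) hB0
    calc |∫ x in ((n:ℝ) * ε)..1, g x * h (x / ε)| ≤ B * C * |1 - (n:ℝ) * ε| := hb
      _ ≤ B * C * ε := by
          apply mul_le_mul_of_nonneg_left _ (by positivity)
          rw [abs_of_nonneg (by linarith)]
          linarith
  rw [Real.dist_eq, sub_zero, hsplit, hsum]
  have hsb : |∑ i ∈ Finset.range n, ∫ x in ((i:ℝ) * ε)..(((i:ℝ) + 1) * ε), g x * h (x / ε)|
      ≤ (n : ℝ) * (η / (2 * (C + 1)) * C * ε) := by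
    calc |∑ i ∈ Finset.range n, ∫ x in ((i:ℝ) * ε)..(((i:ℝ) + 1) * ε), g x * h (x / ε)|
        ≤ ∑ i ∈ Finset.range n,
            |∫ x in ((i:ℝ) * ε)..(((i:ℝ) + 1) * ε), g x * h (x / ε)| :=
          Finset.abs_sum_le_sum_abs _ _
      _ ≤ ∑ _i ∈ Finset.range n, (η / (2 * (C + 1)) * C * ε) := by
          apply Finset.sum_le_sum
          intro i hi
          apply key
          exact_mod_cast Nat.succ_le_of_lt (Finset.mem_range.1 hi)
      _ = (n : ℝ) * (η / (2 * (C + 1)) * C * ε) := by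
          rw [Finset.sum_const, Finset.card_range]; push_cast; ring
  have hstep : (n : ℝ) * (η / (2 * (C + 1)) * C * ε) ≤ η / (2 * (C + 1)) * C := by
    have : (n : ℝ) * (η / (2 * (C + 1)) * C * ε) = η / (2 * (C + 1)) * C * ((n:ℝ) * ε) := by
      ring
    rw [this]
    exact mul_le_of_le_one_right (by positivity) hnε
  have half1 : η / (2 * (C + 1)) * C < η / 2 := by
    rw [div_mul_eq_mul_div, div_lt_div_iff₀ (by positivity) (by norm_num)]
    nlinarith
  have half2 : B * C * ε < η / 2 := by
    have h1 : B * C * ε ≤ (C * B + 1) * ε := by nlinarith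
    have h2 : (C * B + 1) * ε < (C * B + 1) * (η / (2 * (C * B + 1))) :=
      mul_lt_mul_of_pos_left hεη (by positivity)
    have h3 : (C * B + 1) * (η / (2 * (C * B + 1))) = η / 2 := by
      field_simp
    linarith
  calc |(∑ i ∈ Finset.range n, ∫ x in ((i:ℝ) * ε)..(((i:ℝ) + 1) * ε), g x * h (x / ε))
        + ∫ x in ((n:ℝ) * ε)..1, g x * h (x / ε)|
      ≤ |∑ i ∈ Finset.range n, ∫ x in ((i:ℝ) * ε)..(((i:ℝ) + 1) * ε), g x * h (x / ε)|
        + |∫ x in ((n:ℝ) * ε)..1, g x * h (x / ε)| := abs_add_le _ _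
    _ ≤ (n : ℝ) * (η / (2 * (C + 1)) * C * ε) + B * C * ε := add_le_add hsb htail
    _ ≤ η / (2 * (C + 1)) * C + B * C * ε := by linarith
    _ < η / 2 + η / 2 := by linarith
    _ = η := by ring

/-- Periodic averaging: weak-* convergence of `h (x/ε)` to its mean. -/
private lemma avg (h g : ℝ → ℝ) (hh : Continuous h) (hper : Function.Periodic h 1)
    (hg : ContinuousOn g (Icc 0 1)) :
    Tendsto (fun ε => ∫ x in (0:ℝ)..1, g x * h (x / ε)) (nhdsWithin 0 (Ioi 0))
      (nhds ((∫ x in (0:ℝ)..1, g x) * ∫ y in (0:ℝ)..1, h y)) := by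
  set M := ∫ y in (0:ℝ)..1, h y with hM
  have hk : Continuous (fun y => h y - M) := hh.sub continuous_const
  have hkper : Function.Periodic (fun y => h y - M) 1 := fun y => by simp [hper y]
  have hkmean : (∫ y in (0:ℝ)..1, (h y - M)) = 0 := by
    rw [intervalIntegral.integral_sub (hh.intervalIntegrable _ _) intervalIntegrable_const]
    simp [← hM]
  have h0 := avg_zero _ g hk hkper hkmean hg
  have heq : ∀ ε : ℝ, (∫ x in (0:ℝ)..1, g x * h (x / ε))
      = (∫ x in (0:ℝ)..1, g x * (h (x / ε) - M)) + (∫ x in (0:ℝ)..1, g x) * M := by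
    intro ε
    have hgc : ∀ c : ℝ, ContinuousOn (fun x => g x * (h (x / c) - M)) (Icc 0 1) :=
      fun c => hg.mul (((hh.comp (continuous_id.div_const c)).sub continuous_const).continuousOn)
    have i1 : IntervalIntegrable (fun x => g x * (h (x / ε) - M)) volume 0 1 :=
      contOn_II (hgc ε)
    have i2 : IntervalIntegrable (fun x => g x * M) volume 0 1 :=
      (contOn_II hg).mul_const M
    have e : (∫ x in (0:ℝ)..1, g x * h (x / ε))
        = ∫ x in (0:ℝ)..1, (g x * (h (x / ε) - M) + g x * M) := by
      congr 1; funext x; ring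
    rw [e, intervalIntegral.integral_add i1 i2, intervalIntegral.integral_mul_const]
  simp only [heq]
  simpa using h0.add (tendsto_const_nhds (x := (∫ x in (0:ℝ)..1, g x) * M))

/-- Weak convergence of the derivatives of the multiscale solutions to the derivative of
the homogenized solution: `∫₀¹ u_ε′ φ → ∫₀¹ u₀′ φ` for every continuous test function `φ`. -/
theorem stmt_8 (a f F : ℝ → ℝ) (α β astar c0 : ℝ) (c : ℝ → ℝ)
    (hα : 0 < α) (hαβ : α ≤ β)
    (ha : Continuous a) (hper : ∀ y, a (y + 1) = a y)
    (hbd : ∀ y, α ≤ a y ∧ a y ≤ β)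
    (hf : ContinuousOn f (Icc 0 1))
    (hF : ∀ x, F x = ∫ t in (0:ℝ)..x, f t)
    (hc : ∀ ε, c ε = (∫ t in (0:ℝ)..1, F t / a (t / ε)) / (∫ t in (0:ℝ)..1, 1 / a (t / ε)))
    (hastar : astar = (∫ y in (0:ℝ)..1, 1 / a y)⁻¹)
    (hc0 : c0 = ∫ t in (0:ℝ)..1, F t) :
    ∀ φ : ℝ → ℝ, ContinuousOn φ (Icc 0 1) →
      Tendsto (fun ε => ∫ x in (0:ℝ)..1, (c ε - F x) / a (x / ε) * φ x)
        (nhdsWithin 0 (Ioi 0))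
        (nhds (∫ x in (0:ℝ)..1, (c0 - F x) / astar * φ x)) := by
  intro φ hφ
  have hapos : ∀ y, 0 < a y := fun y => lt_of_lt_of_le hα (hbd y).1
  have hane : ∀ y, a y ≠ 0 := fun y => ne_of_gt (hapos y)
  set h : ℝ → ℝ := fun y => (a y)⁻¹ with hh_def
  have hhc : Continuous h := ha.inv₀ hane
  have hhper : Function.Periodic h 1 := fun y => by simp [hh_def, hper y]
  set M : ℝ := ∫ y in (0:ℝ)..1, h y with hM_def
  have hMeq : (∫ y in (0:ℝ)..1, 1 / a y) = M := by
    simp only [hM_def, one_div]; rfl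
  have hβ : 0 < β := lt_of_lt_of_le hα hαβ
  have hMpos : 0 < M := by
    have h1 : (∫ _y in (0:ℝ)..1, β⁻¹) ≤ ∫ y in (0:ℝ)..1, h y := by
      apply intervalIntegral.integral_mono_on zero_le_one intervalIntegrable_const
        (hhc.intervalIntegrable _ _)
      intro x _
      exact inv_anti₀ (hapos x) (hbd x).2
    have h2 : (∫ _y in (0:ℝ)..1, β⁻¹) = β⁻¹ := by simp
    rw [h2] at h1
    exact lt_of_lt_of_le (inv_pos.2 hβ) h1
  have hMne : M ≠ 0 := ne_of_gt hMpos
  -- F is continuous on [0,1]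
  have hFc : ContinuousOn F (Icc 0 1) := by
    have hFfun : F = fun x => ∫ t in (0:ℝ)..x, f t := funext hF
    rw [hFfun]
    have := intervalIntegral.continuousOn_primitive_interval (a := (0:ℝ)) (b := 1)
      (f := f) (μ := volume) ?_
    · rwa [uIcc_of_le zero_le_one] at this
    · rw [uIcc_of_le zero_le_one]
      exact hf.integrableOn_Icc
  -- averaged limits
  have hA := avg h φ hhc hhper hφ
  have hB := avg h (fun x => F x * φ x) hhc hhper (hFc.mul hφ)
  have hIF := avg h F hhc hhper hFc
  have hI1 := avg h (fun _ => (1:ℝ)) hhc hhper continuousOn_const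
  -- convergence of c
  have hc_lim : Tendsto c (nhdsWithin 0 (Ioi 0)) (nhds c0) := by
    have hone : (∫ x in (0:ℝ)..1, (fun _ : ℝ => (1:ℝ)) x) = 1 := by simp
    have hdiv := hIF.div hI1 (by rw [hone, one_mul]; exact hMne)
    have hlim_eq : ((∫ x in (0:ℝ)..1, F x) * M)
        / ((∫ x in (0:ℝ)..1, (fun _ : ℝ => (1:ℝ)) x) * M) = c0 := by
      rw [hone, one_mul, mul_div_assoc, div_self hMne, mul_one, hc0]
    rw [hlim_eq] at hdiv
    have hre : ∀ ε : ℝ, ((fun ε : ℝ => ∫ x in (0:ℝ)..1, F x * h (x / ε))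
          / (fun ε : ℝ => ∫ x in (0:ℝ)..1, (fun _ : ℝ => (1:ℝ)) x * h (x / ε))) ε = c ε := by
      intro ε
      have e1 : (∫ t in (0:ℝ)..1, F t / a (t / ε)) = ∫ x in (0:ℝ)..1, F x * h (x / ε) := by
        congr 1
      have e2 : (∫ t in (0:ℝ)..1, 1 / a (t / ε))
          = ∫ x in (0:ℝ)..1, (fun _ : ℝ => (1:ℝ)) x * h (x / ε) := by
        congr 1
      show (∫ x in (0:ℝ)..1, F x * h (x / ε))
          / (∫ x in (0:ℝ)..1, (fun _ : ℝ => (1:ℝ)) x * h (x / ε)) = c ε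
      rw [hc ε, e1, e2]
    exact Filter.Tendsto.congr hre hdiv
  -- rewrite the integrand for each ε
  have hiφ : IntervalIntegrable φ volume 0 1 := contOn_II hφ
  have hiFφ : IntervalIntegrable (fun x => F x * φ x) volume 0 1 := contOn_II (hFc.mul hφ)
  have hLHS : ∀ ε : ℝ, (∫ x in (0:ℝ)..1, (c ε - F x) / a (x / ε) * φ x)
      = c ε * (∫ x in (0:ℝ)..1, φ x * h (x / ε))
        - ∫ x in (0:ℝ)..1, (F x * φ x) * h (x / ε) := by
    intro ε
    have hpt : ∀ x : ℝ, (c ε - F x) / a (x / ε) * φ x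
        = c ε * (φ x * h (x / ε)) - (F x * φ x) * h (x / ε) := by
      intro x
      rw [div_eq_mul_inv, hh_def]
      ring
    have i1 : IntervalIntegrable (fun x => φ x * h (x / ε)) volume 0 1 :=
      contOn_II (hφ.mul ((hhc.comp (continuous_id.div_const ε)).continuousOn))
    have i2 : IntervalIntegrable (fun x => (F x * φ x) * h (x / ε)) volume 0 1 :=
      contOn_II ((hFc.mul hφ).mul ((hhc.comp (continuous_id.div_const ε)).continuousOn))
    simp only [hpt]
    rw [intervalIntegral.integral_sub (i1.const_mul _) i2,
      intervalIntegral.integral_const_mul]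
  have hRHS : (∫ x in (0:ℝ)..1, (c0 - F x) / astar * φ x)
      = c0 * ((∫ x in (0:ℝ)..1, φ x) * M) - (∫ x in (0:ℝ)..1, F x * φ x) * M := by
    have hpt : ∀ x : ℝ, (c0 - F x) / astar * φ x
        = c0 * (φ x * M) - (F x * φ x) * M := by
      intro x
      rw [hastar, hMeq, division_def, inv_inv]
      ring
    have i1 : IntervalIntegrable (fun x => φ x * M) volume 0 1 := hiφ.mul_const M
    have i2 : IntervalIntegrable (fun x => (F x * φ x) * M) volume 0 1 := hiFφ.mul_const M
    simp only [hpt]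
    rw [intervalIntegral.integral_sub (i1.const_mul _) i2,
      intervalIntegral.integral_const_mul, intervalIntegral.integral_mul_const,
      intervalIntegral.integral_mul_const]
  simp only [hLHS]
  rw [hRHS]
  exact (hc_lim.mul hA).sub hB
end

section
/- Let a : ℝ → ℝ be continuous and 1-periodic with α ≤ a(y) ≤ β for all y (0 < α ≤ β), and let f : [0,1] → ℝ be continuous. With F(x) := ∫₀ˣ f(t) dt, c_ε := (∫₀¹ F(t)/a(t/ε) dt)/(∫₀¹ 1/a(t/ε) dt), u_ε′(x) := (c_ε − F(x))/a(x/ε), a* := (∫₀¹ 1/a(y) dy)⁻¹, c₀ := ∫₀¹ F(t) dt and u₀′(x) := (c₀ − F(x))/a*, the fluxes converge uniformly: lim_{ε→0⁺} sup_{x∈[0,1]} |a(x/ε) u_ε′(x) − a* u₀′(x)| = 0, even though the derivatives u_ε′ themselves only converge weakly. -/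
open MeasureTheory Set Filter

/-- Uniform convergence of the fluxes `a(x/ε) u_ε′(x) → a* u₀′(x)` on `[0,1]` as `ε → 0⁺`. -/
theorem stmt_9 (a f F : ℝ → ℝ) (α β astar c0 : ℝ) (c : ℝ → ℝ)
    (hα : 0 < α) (hαβ : α ≤ β)
    (ha : Continuous a) (hper : ∀ y, a (y + 1) = a y)
    (hbd : ∀ y, α ≤ a y ∧ a y ≤ β)
    (hf : ContinuousOn f (Icc 0 1))
    (hF : ∀ x, F x = ∫ t in (0:ℝ)..x, f t)
    (hc : ∀ ε, c ε = (∫ t in (0:ℝ)..1, F t / a (t / ε)) / (∫ t in (0:ℝ)..1, 1 / a (t / ε)))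
    (hastar : astar = (∫ y in (0:ℝ)..1, 1 / a y)⁻¹)
    (hc0 : c0 = ∫ t in (0:ℝ)..1, F t) :
    Tendsto
      (fun ε => sSup ((fun x => |a (x / ε) * ((c ε - F x) / a (x / ε)) -
        astar * ((c0 - F x) / astar)|) '' Icc (0:ℝ) 1))
      (nhdsWithin 0 (Ioi 0)) (nhds 0) := by
  have haPos : ∀ y, 0 < a y := fun y => hα.trans_le (hbd y).1
  have hane : ∀ y, a y ≠ 0 := fun y => (haPos y).ne'
  have hβ : (0:ℝ) < β := hα.trans_le hαβ
  have hinva : Continuous fun y => 1 / a y := continuous_const.div ha hane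
  set m : ℝ := ∫ y in (0:ℝ)..1, 1 / a y with hm
  have hminv : (1:ℝ)/β ≤ m := by
    have h1 : IntervalIntegrable (fun _ : ℝ => 1/β) volume 0 1 := intervalIntegrable_const
    have h2 : IntervalIntegrable (fun y => 1 / a y) volume 0 1 := hinva.intervalIntegrable 0 1
    calc (1:ℝ)/β = ∫ _ in (0:ℝ)..1, (1/β : ℝ) := by simp
    _ ≤ ∫ y in (0:ℝ)..1, 1 / a y :=
        intervalIntegral.integral_mono (by norm_num) h1 h2
          (fun y => one_div_le_one_div_of_le (haPos y) (hbd y).2)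
  have hmpos : 0 < m := lt_of_lt_of_le (by positivity) hminv
  have hastarne : astar ≠ 0 := by rw [hastar]; exact inv_ne_zero hmpos.ne'
  -- the oscillating mean-zero part
  set h0 : ℝ → ℝ := fun y => 1 / a y - m with hh0
  have h0c : Continuous h0 := hinva.sub continuous_const
  have h0per : Function.Periodic h0 1 := fun y => by simp only [hh0, hper y]
  have h0mean : (∫ y in (0:ℝ)..1, h0 y) = 0 := by
    rw [hh0]
    rw [intervalIntegral.integral_sub (hinva.intervalIntegrable 0 1) intervalIntegrable_const,
      ← hm, intervalIntegral.integral_const]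
    simp
  set H : ℝ → ℝ := fun y => ∫ t in (0:ℝ)..y, h0 t with hH
  have Hderiv : ∀ y, HasDerivAt H (h0 y) y := fun y =>
    (h0c.integral_hasStrictDerivAt 0 y).hasDerivAt
  have Hcont : Continuous H :=
    continuous_iff_continuousAt.2 fun y => (Hderiv y).continuousAt
  have Hper : Function.Periodic H 1 := by
    intro y
    have hadd : (∫ t in (0:ℝ)..y, h0 t) + ∫ t in y..(y+1), h0 t = ∫ t in (0:ℝ)..(y+1), h0 t :=
      intervalIntegral.integral_add_adjacent_intervals (h0c.intervalIntegrable 0 y)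
        (h0c.intervalIntegrable y (y+1))
    have hseg : (∫ t in y..(y+1), h0 t) = ∫ t in (0:ℝ)..(0+1:ℝ), h0 t :=
      h0per.intervalIntegral_add_eq y 0
    simp only [hH]
    rw [← hadd, hseg]
    simp [h0mean]
  -- bound on H
  obtain ⟨x0, _, hx0⟩ := isCompact_Icc.exists_isMaxOn (⟨0, by norm_num⟩ : (Icc (0:ℝ) 1).Nonempty)
    (Hcont.abs.continuousOn)
  set C : ℝ := |H x0| with hC
  have hC0 : 0 ≤ C := abs_nonneg _
  have HC : ∀ y, |H y| ≤ C := by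
    intro y
    have h2 := Hper.sub_int_mul_eq (x := y) ⌊y⌋
    rw [mul_one, Int.self_sub_floor] at h2
    rw [← h2]
    exact hx0 ⟨Int.fract_nonneg y, (Int.fract_lt_one y).le⟩
  -- bound on f and F on [0,1]
  have huIcc : uIcc (0:ℝ) 1 = Icc 0 1 := uIcc_of_le (by norm_num)
  have hfu : ContinuousOn f (uIcc 0 1) := huIcc ▸ hf
  have hfint : IntervalIntegrable f volume 0 1 := hfu.intervalIntegrable
  obtain ⟨M, hM0, hM⟩ : ∃ M, 0 ≤ M ∧ ∀ t ∈ Icc (0:ℝ) 1, |f t| ≤ M := by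
    obtain ⟨t0, _, ht0⟩ := isCompact_Icc.exists_isMaxOn (⟨0, by norm_num⟩ : (Icc (0:ℝ) 1).Nonempty)
      hf.abs
    exact ⟨|f t0|, abs_nonneg _, fun t ht => ht0 ht⟩
  have hFc : ContinuousOn F (Icc 0 1) := by
    have h1 : ContinuousOn (fun x => ∫ t in (0:ℝ)..x, f t) (uIcc 0 1) :=
      intervalIntegral.continuousOn_primitive_interval
        (huIcc ▸ (intervalIntegrable_iff_integrableOn_Icc_of_le (by norm_num)).1 hfint)
    rw [huIcc] at h1
    exact h1.congr fun x _ => hF x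
  have hFderiv : ∀ t ∈ Ioo (0:ℝ) 1, HasDerivAt F (f t) t := by
    intro t ht
    have hmem : Icc (0:ℝ) 1 ∈ nhds t := Icc_mem_nhds ht.1 ht.2
    have hct : ContinuousAt f t := hf.continuousAt hmem
    have hint : IntervalIntegrable f volume 0 t := by
      apply hfint.mono_set
      rw [uIcc_of_le ht.1.le, uIcc_of_le (by norm_num : (0:ℝ) ≤ 1)]
      exact Icc_subset_Icc le_rfl ht.2.le
    have hmeas : StronglyMeasurableAtFilter f (nhds t) volume :=
      ⟨Icc 0 1, hmem, hf.aestronglyMeasurable measurableSet_Icc⟩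
    have : HasDerivAt (fun x => ∫ s in (0:ℝ)..x, f s) (f t) t :=
      intervalIntegral.integral_hasDerivAt_right hint hmeas hct
    exact (this.congr_deriv rfl).congr_of_eventuallyEq
      (Eventually.of_forall fun x => (hF x))
  -- continuity of scaled oscillating coefficient
  have hcomp : ∀ ε : ℝ, Continuous fun t : ℝ => h0 (t / ε) :=
    fun ε => h0c.comp (continuous_id.div_const ε)
  have hg1 : Tendsto (fun ε : ℝ => C * ε) (nhdsWithin 0 (Ioi 0)) (nhds 0) := by
    have h1 : Tendsto (fun ε : ℝ => C * ε) (nhds 0) (nhds (C * 0)) :=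
      (continuous_const.mul continuous_id).tendsto 0
    rw [mul_zero] at h1
    exact h1.mono_left nhdsWithin_le_nhds
  have hg2 : Tendsto (fun ε : ℝ => (|F 1| + M) * C * ε) (nhdsWithin 0 (Ioi 0)) (nhds 0) := by
    have h1 : Tendsto (fun ε : ℝ => (|F 1| + M) * C * ε) (nhds 0) (nhds ((|F 1| + M) * C * 0)) :=
      (continuous_const.mul continuous_id).tendsto 0
    rw [mul_zero] at h1
    exact h1.mono_left nhdsWithin_le_nhds
  -- Step A : the mean-zero oscillation integrates to something small
  have hA : Tendsto (fun ε => ∫ t in (0:ℝ)..1, h0 (t / ε)) (nhdsWithin 0 (Ioi 0)) (nhds 0) := by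
    apply squeeze_zero_norm' _ hg1
    filter_upwards [self_mem_nhdsWithin] with ε hε
    have hεpos : 0 < ε := hε
    have hεne : ε ≠ 0 := hεpos.ne'
    have h1 : (∫ t in (0:ℝ)..1, h0 (t / ε)) = ε • ∫ t in (0:ℝ)/ε..1/ε, h0 t :=
      intervalIntegral.integral_comp_div _ hεne
    rw [h1]
    simp only [smul_eq_mul, zero_div]
    rw [Real.norm_eq_abs, abs_mul, abs_of_pos hεpos]
    have h2 : |∫ t in (0:ℝ)..1/ε, h0 t| ≤ C := HC (1/ε)
    calc ε * |∫ t in (0:ℝ)..1/ε, h0 t| ≤ ε * C := by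
          exact mul_le_mul_of_nonneg_left h2 hεpos.le
      _ = C * ε := mul_comm _ _
  -- Step B : integration by parts against the primitive of the oscillation
  have hB : Tendsto (fun ε => ∫ t in (0:ℝ)..1, F t * h0 (t / ε))
      (nhdsWithin 0 (Ioi 0)) (nhds 0) := by
    apply squeeze_zero_norm' _ hg2
    filter_upwards [self_mem_nhdsWithin] with ε hε
    have hεpos : 0 < ε := hε
    have hεne : ε ≠ 0 := hεpos.ne'
    set G : ℝ → ℝ := fun t => ε * H (t / ε) with hG
    have hGc : Continuous G := continuous_const.mul (Hcont.comp (continuous_id.div_const ε))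
    have hGd : ∀ t, HasDerivAt G (h0 (t / ε)) t := by
      intro t
      have h1 : HasDerivAt (fun t : ℝ => t / ε) (1 / ε) t := by
        simpa using (hasDerivAt_id t).div_const ε
      have h2 := (Hderiv (t / ε)).comp t h1
      have h3 := h2.const_mul ε
      convert h3 using 1
      case e'_9 => field_simp
      all_goals rfl
    have hGle : ∀ t, |G t| ≤ C * ε := by
      intro t
      rw [hG]
      calc |ε * H (t / ε)| = ε * |H (t / ε)| := by rw [abs_mul, abs_of_pos hεpos]
        _ ≤ ε * C := mul_le_mul_of_nonneg_left (HC _) hεpos.le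
        _ = C * ε := mul_comm _ _
    have hw : ∀ t ∈ Ioo (0:ℝ) 1, HasDerivWithinAt (fun t => F t * G t)
        (f t * G t + F t * h0 (t / ε)) (Ioi t) t := fun t ht =>
      ((hFderiv t ht).mul (hGd t)).hasDerivWithinAt
    have hwcont : ContinuousOn (fun t => f t * G t + F t * h0 (t / ε)) (Icc 0 1) :=
      (hf.mul hGc.continuousOn).add (hFc.mul (hcomp ε).continuousOn)
    have hwint : IntervalIntegrable (fun t => f t * G t + F t * h0 (t / ε)) volume 0 1 :=
      (show ContinuousOn _ (uIcc (0:ℝ) 1) from huIcc ▸ hwcont).intervalIntegrable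
    have hFG : ContinuousOn (fun t => F t * G t) (Icc 0 1) := hFc.mul hGc.continuousOn
    have key := intervalIntegral.integral_eq_sub_of_hasDeriv_right_of_le (by norm_num) hFG hw hwint
    have hF0 : F 0 = 0 := by rw [hF]; simp
    have int1 : IntervalIntegrable (fun t => f t * G t) volume 0 1 :=
      (show ContinuousOn _ (uIcc (0:ℝ) 1) from huIcc ▸ hf.mul hGc.continuousOn).intervalIntegrable
    have int2 : IntervalIntegrable (fun t => F t * h0 (t / ε)) volume 0 1 :=
      (show ContinuousOn _ (uIcc (0:ℝ) 1) from
        huIcc ▸ hFc.mul (hcomp ε).continuousOn).intervalIntegrable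
    rw [intervalIntegral.integral_add int1 int2, hF0, zero_mul, sub_zero] at key
    have hBe : (∫ t in (0:ℝ)..1, F t * h0 (t / ε))
        = F 1 * G 1 - ∫ t in (0:ℝ)..1, f t * G t := by linarith [key]
    rw [hBe]
    have hI : ‖∫ t in (0:ℝ)..1, f t * G t‖ ≤ M * (C * ε) := by
      have := intervalIntegral.norm_integral_le_of_norm_le_const
        (C := M * (C * ε)) (f := fun t => f t * G t) (a := (0:ℝ)) (b := 1) ?_
      · simpa using this
      · intro x hx
        have hx' : x ∈ Icc (0:ℝ) 1 := by
          rw [uIoc_of_le (by norm_num : (0:ℝ) ≤ 1)] at hx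
          exact ⟨hx.1.le, hx.2⟩
        rw [Real.norm_eq_abs, abs_mul]
        exact mul_le_mul (hM x hx') (hGle x) (abs_nonneg _) hM0
    calc ‖F 1 * G 1 - ∫ t in (0:ℝ)..1, f t * G t‖
        ≤ ‖F 1 * G 1‖ + ‖∫ t in (0:ℝ)..1, f t * G t‖ := norm_sub_le _ _
      _ ≤ |F 1| * (C * ε) + M * (C * ε) := by
          refine add_le_add ?_ hI
          rw [Real.norm_eq_abs, abs_mul]
          exact mul_le_mul_of_nonneg_left (hGle 1) (abs_nonneg _)
      _ = (|F 1| + M) * C * ε := by ring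
  -- convergence of the denominator
  have hItend : Tendsto (fun ε => ∫ t in (0:ℝ)..1, 1 / a (t / ε))
      (nhdsWithin 0 (Ioi 0)) (nhds m) := by
    have heq : ∀ ε : ℝ, (∫ t in (0:ℝ)..1, 1 / a (t / ε))
        = (∫ t in (0:ℝ)..1, h0 (t / ε)) + m := by
      intro ε
      have h1 : (∫ t in (0:ℝ)..1, 1 / a (t / ε)) = ∫ t in (0:ℝ)..1, (h0 (t / ε) + m) := by
        apply intervalIntegral.integral_congr
        intro t _
        simp [hh0]
      rw [h1, intervalIntegral.integral_add ((hcomp ε).intervalIntegrable 0 1)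
        intervalIntegrable_const, intervalIntegral.integral_const]
      simp
    have h2 := hA.add (tendsto_const_nhds (x := m))
    rw [zero_add] at h2
    exact h2.congr fun ε => (heq ε).symm
  -- convergence of the numerator
  have hJtend : Tendsto (fun ε => ∫ t in (0:ℝ)..1, F t / a (t / ε))
      (nhdsWithin 0 (Ioi 0)) (nhds (c0 * m)) := by
    have heq : ∀ ε : ℝ, (∫ t in (0:ℝ)..1, F t / a (t / ε))
        = (∫ t in (0:ℝ)..1, F t * h0 (t / ε)) + c0 * m := by
      intro ε
      have h1 : (∫ t in (0:ℝ)..1, F t / a (t / ε))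
          = ∫ t in (0:ℝ)..1, (F t * h0 (t / ε) + F t * m) := by
        apply intervalIntegral.integral_congr
        intro t _
        simp only [hh0]
        ring
      have int2 : IntervalIntegrable (fun t => F t * h0 (t / ε)) volume 0 1 :=
        (show ContinuousOn _ (uIcc (0:ℝ) 1) from
          huIcc ▸ hFc.mul (hcomp ε).continuousOn).intervalIntegrable
      have int3 : IntervalIntegrable (fun t => F t * m) volume 0 1 :=
        (show ContinuousOn _ (uIcc (0:ℝ) 1) from
          huIcc ▸ hFc.mul continuousOn_const).intervalIntegrable
      rw [h1, intervalIntegral.integral_add int2 int3,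
        intervalIntegral.integral_mul_const, ← hc0]
    have h2 := hB.add (tendsto_const_nhds (x := c0 * m))
    rw [zero_add] at h2
    exact h2.congr fun ε => (heq ε).symm
  -- convergence of the constants
  have hcT : Tendsto c (nhdsWithin 0 (Ioi 0)) (nhds c0) := by
    have h1 := hJtend.div hItend hmpos.ne'
    rw [mul_div_cancel_right₀ c0 hmpos.ne'] at h1
    exact h1.congr fun ε => (hc ε).symm
  -- the sSup is just the constant |c ε - c0|
  have hsup : ∀ ε : ℝ, sSup ((fun x => |a (x / ε) * ((c ε - F x) / a (x / ε)) -
      astar * ((c0 - F x) / astar)|) '' Icc (0:ℝ) 1) = |c ε - c0| := by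
    intro ε
    have himg : (fun x => |a (x / ε) * ((c ε - F x) / a (x / ε)) -
        astar * ((c0 - F x) / astar)|) '' Icc (0:ℝ) 1 = {|c ε - c0|} := by
      have hcg : ∀ x ∈ Icc (0:ℝ) 1, |a (x / ε) * ((c ε - F x) / a (x / ε)) -
          astar * ((c0 - F x) / astar)| = |c ε - c0| := by
        intro x _
        have e1 : a (x / ε) * ((c ε - F x) / a (x / ε)) = c ε - F x := by
          rw [mul_comm, div_mul_cancel₀ _ (hane _)]
        have e2 : astar * ((c0 - F x) / astar) = c0 - F x := by
          rw [mul_comm, div_mul_cancel₀ _ hastarne]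
        rw [e1, e2]
        ring_nf
      rw [image_congr hcg]
      exact Set.Nonempty.image_const ⟨0, by norm_num⟩ _
    rw [himg, csSup_singleton]
  have habs : Tendsto (fun ε => |c ε - c0|) (nhdsWithin 0 (Ioi 0)) (nhds 0) := by
    have h1 := (hcT.sub (tendsto_const_nhds (x := c0))).abs
    simpa using h1
  exact habs.congr fun ε => (hsup ε).symm
end

section
/- Let 0 < α ≤ β and let (a_n) be a sequence of measurable functions a_n : [0,1] → ℝ with α ≤ a_n(x) ≤ β for almost every x ∈ [0,1]. Then there exist a strictly increasing function k ↦ n_k of indices and a measurable function a* : [0,1] → ℝ with α ≤ a*(x) ≤ β almost everywhere, such that for every integrable g : [0,1] → ℝ, lim_{k→∞} ∫₀¹ g(x)/a_{n_k}(x) dx = ∫₀¹ g(x)/a*(x) dx. -/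
open MeasureTheory Set Filter
open scoped NNReal ENNReal

lemma gc_ii {u : ℝ → ℝ} (hu : Measurable u) {C : ℝ} (hbd : ∀ x, |u x| ≤ C) (s t : ℝ) :
    IntervalIntegrable u volume s t := by
  rw [intervalIntegrable_iff]
  refine Integrable.mono' (g := fun _ => C)
    (integrableOn_const measure_Ioc_lt_top.ne) hu.aestronglyMeasurable.restrict
    (ae_of_all _ hbd)

lemma gc_extract (lb ub : ℝ) (hlb : 0 < lb) (hle : lb ≤ ub) (b : ℕ → ℝ → ℝ)
    (hmeas : ∀ n, Measurable (b n)) (hbd : ∀ n x, b n x ∈ Icc lb ub) :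
    ∃ ψ : ℕ → ℕ, StrictMono ψ ∧ ∃ F : ℝ → ℝ,
      F 0 = 0 ∧
      (∀ s t, s ≤ t → lb * (t - s) ≤ F t - F s ∧ F t - F s ≤ ub * (t - s)) ∧
      (∀ t, Tendsto (fun k => ∫ x in (0:ℝ)..t, b (ψ k) x) atTop (nhds (F t))) := by
  have hub : 0 < ub := hlb.trans_le hle
  have habs : ∀ n x, |b n x| ≤ ub := fun n x =>
    abs_le.2 ⟨le_trans (by linarith) (hbd n x).1, (hbd n x).2⟩
  have hii : ∀ n s t, IntervalIntegrable (b n) volume s t := fun n =>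
    gc_ii (hmeas n) (habs n)
  set Fn : ℕ → ℝ → ℝ := fun n t => ∫ x in (0:ℝ)..t, b n x with hFn
  have hF0 : ∀ n, Fn n 0 = 0 := fun n => intervalIntegral.integral_same
  have hdiff : ∀ n s t, Fn n t - Fn n s = ∫ x in s..t, b n x := fun n s t =>
    intervalIntegral.integral_interval_sub_left (hii n 0 t) (hii n 0 s)
  have hFb : ∀ n s t, s ≤ t → lb * (t - s) ≤ Fn n t - Fn n s ∧ Fn n t - Fn n s ≤ ub * (t - s) := by
    intro n s t hst
    rw [hdiff]
    constructor
    · have : ∫ x in s..t, lb ≤ ∫ x in s..t, b n x :=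
        intervalIntegral.integral_mono_on hst intervalIntegrable_const (hii n s t)
          (fun x _ => (hbd n x).1)
      simpa [intervalIntegral.integral_const, smul_eq_mul, mul_comm] using this
    · have : ∫ x in s..t, b n x ≤ ∫ x in s..t, ub :=
        intervalIntegral.integral_mono_on hst (hii n s t) intervalIntegrable_const
          (fun x _ => (hbd n x).2)
      simpa [intervalIntegral.integral_const, smul_eq_mul, mul_comm] using this
  have hlip : ∀ n s t, |Fn n t - Fn n s| ≤ ub * |t - s| := by
    intro n s t
    rcases le_total s t with h | h
    · have h1 := (hFb n s t h).1
      have h2 := (hFb n s t h).2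
      have hpos : 0 ≤ Fn n t - Fn n s := le_trans (by nlinarith) h1
      rw [abs_of_nonneg hpos, abs_of_nonneg (sub_nonneg.2 h)]
      exact h2
    · have h1 := (hFb n t s h).1
      have h2 := (hFb n t s h).2
      have hpos : 0 ≤ Fn n s - Fn n t := le_trans (by nlinarith) h1
      rw [abs_sub_comm, abs_sub_comm t s, abs_of_nonneg hpos, abs_of_nonneg (sub_nonneg.2 h)]
      exact h2
  -- extraction on rationals
  have hmem : ∀ n, (fun q : ℚ => Fn n q) ∈ Set.pi univ fun q : ℚ =>
      Icc (-(ub * |(q:ℝ)|)) (ub * |(q:ℝ)|) := by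
    intro n q _
    have := hlip n 0 q
    rw [hF0 n, sub_zero, sub_zero] at this
    exact abs_le.1 this
  have hc : IsCompact (Set.pi univ fun q : ℚ => Icc (-(ub * |(q:ℝ)|)) (ub * |(q:ℝ)|)) :=
    isCompact_univ_pi fun q => isCompact_Icc
  obtain ⟨L, -, ψ, hψ, hL⟩ := hc.tendsto_subseq hmem
  have hLq : ∀ q : ℚ, Tendsto (fun k => Fn (ψ k) q) atTop (nhds (L q)) := fun q =>
    tendsto_pi_nhds.1 hL q
  -- Lipschitz bound on L
  have hLlip : ∀ q r : ℚ, |L r - L q| ≤ ub * |(r:ℝ) - q| := by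
    intro q r
    have ht : Tendsto (fun k => Fn (ψ k) r - Fn (ψ k) q) atTop (nhds (L r - L q)) :=
      (hLq r).sub (hLq q)
    have : ∀ k, |Fn (ψ k) r - Fn (ψ k) q| ≤ ub * |(r:ℝ) - q| := fun k => hlip _ _ _
    have habs' : Tendsto (fun k => |Fn (ψ k) r - Fn (ψ k) q|) atTop (nhds (|L r - L q|)) :=
      ht.abs
    exact le_of_tendsto habs' (Eventually.of_forall this)
  -- extend L to a Lipschitz function on ℝ
  set s : Set ℝ := Set.range (fun q : ℚ => (q:ℝ)) with hs
  set L' : ℝ → ℝ := Function.extend (fun q : ℚ => (q:ℝ)) L (fun _ => 0) with hL'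
  have hinj : Function.Injective (fun q : ℚ => (q:ℝ)) := fun p q h => by simpa using h
  have hL'q : ∀ q : ℚ, L' (q:ℝ) = L q := fun q => hinj.extend_apply L _ q
  have hL'lip : LipschitzOnWith (Real.toNNReal ub) L' s := by
    rw [lipschitzOnWith_iff_dist_le_mul]
    rintro x ⟨q, rfl⟩ y ⟨r, rfl⟩
    show dist (L' (q:ℝ)) (L' (r:ℝ)) ≤ _
    rw [hL'q, hL'q, Real.dist_eq]
    show |L q - L r| ≤ (Real.toNNReal ub : ℝ) * dist ((q:ℝ)) ((r:ℝ))
    rw [Real.dist_eq, Real.coe_toNNReal _ hub.le]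
    exact hLlip r q
  obtain ⟨F, hFlip, hFeq⟩ := hL'lip.extend_real
  have hFq : ∀ q : ℚ, F (q:ℝ) = L q := fun q => by
    rw [← hFeq ⟨q, rfl⟩, hL'q]
  have hFlip' : ∀ x y : ℝ, |F x - F y| ≤ ub * |x - y| := by
    intro x y
    have := hFlip.dist_le_mul x y
    rwa [Real.dist_eq, Real.dist_eq, Real.coe_toNNReal _ hub.le] at this
  -- convergence at every real point
  have hconv : ∀ t, Tendsto (fun k => Fn (ψ k) t) atTop (nhds (F t)) := by
    intro t
    rw [Metric.tendsto_atTop]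
    intro ε hε
    have hd : 0 < ε / (3 * (ub + 1)) := by positivity
    obtain ⟨q, hq⟩ := exists_rat_near t hd
    have hq' : |t - (q:ℝ)| ≤ ε / (3 * (ub + 1)) := hq.le
    have h3 : ub * |t - (q:ℝ)| ≤ ε / 3 := by
      calc ub * |t - (q:ℝ)| ≤ (ub + 1) * (ε / (3 * (ub + 1))) := by
            apply mul_le_mul (by linarith) hq' (abs_nonneg _) (by linarith)
        _ = ε / 3 := by field_simp
    have := (hLq q).eventually (Metric.ball_mem_nhds (L q) (by positivity : (0:ℝ) < ε / 3))
    obtain ⟨N, hN⟩ := this.exists_forall_of_atTop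
    refine ⟨N, fun k hk => ?_⟩
    have h1 : dist (Fn (ψ k) t) (Fn (ψ k) q) ≤ ε / 3 := by
      rw [Real.dist_eq]; exact le_trans (hlip _ _ _) h3
    have h2 : dist (Fn (ψ k) q) (L q) < ε / 3 := hN k hk
    have h4 : dist (L q) (F t) ≤ ε / 3 := by
      rw [Real.dist_eq, ← hFq q]
      exact le_trans (hFlip' _ _) (by rwa [abs_sub_comm])
    calc dist (Fn (ψ k) t) (F t)
        ≤ dist (Fn (ψ k) t) (Fn (ψ k) q) + dist (Fn (ψ k) q) (L q) + dist (L q) (F t) :=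
          dist_triangle4 _ _ _ _
      _ < ε := by linarith
  refine ⟨ψ, hψ, F, ?_, ?_, hconv⟩
  · have h0 : Tendsto (fun k => Fn (ψ k) 0) atTop (nhds 0) := by
      simp only [hF0]
      exact tendsto_const_nhds
    exact tendsto_nhds_unique (hconv 0) h0
  · intro u t hut
    have ht : Tendsto (fun k => Fn (ψ k) t - Fn (ψ k) u) atTop (nhds (F t - F u)) :=
      (hconv t).sub (hconv u)
    constructor
    · exact ge_of_tendsto ht (Eventually.of_forall fun k => (hFb _ _ _ hut).1)
    · exact le_of_tendsto ht (Eventually.of_forall fun k => (hFb _ _ _ hut).2)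

lemma gc_density (lb ub : ℝ) (hlb : 0 < lb) (hle : lb ≤ ub) (F : ℝ → ℝ) (hF0 : F 0 = 0)
    (hFbd : ∀ s t, s ≤ t → lb * (t - s) ≤ F t - F s ∧ F t - F s ≤ ub * (t - s)) :
    ∃ h : ℝ → ℝ, Measurable h ∧ (∀ x, h x ∈ Icc lb ub) ∧
      ∀ t, 0 ≤ t → ∫ x in (0:ℝ)..t, h x = F t := by
  have hub : 0 < ub := hlb.trans_le hle
  have hmono : Monotone F := by
    intro s t hst
    have := (hFbd s t hst).1
    nlinarith [mul_nonneg hlb.le (sub_nonneg.2 hst)]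
  have key : ∀ s t : ℝ, s ≤ t → |F t - F s| ≤ ub * (t - s) := by
    intro s t hst
    have h1 := (hFbd s t hst).1
    have h2 := (hFbd s t hst).2
    rw [abs_of_nonneg (le_trans (by nlinarith [mul_nonneg hlb.le (sub_nonneg.2 hst)]) h1)]
    exact h2
  have hlipF : LipschitzWith (Real.toNNReal ub) F := by
    apply LipschitzWith.of_dist_le_mul
    intro x y
    rw [Real.dist_eq, Real.dist_eq, Real.coe_toNNReal _ hub.le]
    rcases le_total x y with h | h
    · rw [abs_sub_comm, abs_sub_comm x y, abs_of_nonneg (sub_nonneg.2 h)]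
      exact key x y h
    · rw [abs_of_nonneg (sub_nonneg.2 h)]
      exact key y x h
  have hcont : Continuous F := hlipF.continuous
  set SF : StieltjesFunction ℝ :=
    ⟨F, hmono, fun x => (hcont.continuousAt).continuousWithinAt⟩ with hSF
  have hSFapp : ∀ t, SF t = F t := fun t => rfl
  set H : ℝ → ℝ := fun t => ub * t - F t with hH
  have hHmono : Monotone H := by
    intro s t hst
    have := (hFbd s t hst).2
    simp only [hH]; nlinarith
  have hHcont : Continuous H := (continuous_const.mul continuous_id).sub hcont
  set SH : StieltjesFunction ℝ :=
    ⟨H, hHmono, fun x => (hHcont.continuousAt).continuousWithinAt⟩ with hSH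
  set G : ℝ → ℝ := fun t => F t - lb * t with hG
  have hGmono : Monotone G := by
    intro s t hst
    have := (hFbd s t hst).1
    simp only [hG]; nlinarith
  have hGcont : Continuous G := hcont.sub (continuous_const.mul continuous_id)
  set SG : StieltjesFunction ℝ :=
    ⟨G, hGmono, fun x => (hGcont.continuousAt).continuousWithinAt⟩ with hSG
  have claim1 : SF.measure + SH.measure = (Real.toNNReal ub) • (volume : Measure ℝ) := by
    refine (Measure.ext_of_Ioc _ _ (fun s t hst => ?_)).symm
    rw [eq_comm, Measure.add_apply, SF.measure_Ioc, SH.measure_Ioc, Measure.smul_apply,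
      Real.volume_Ioc]
    have h1 : (0:ℝ) ≤ F t - F s := by
      have := (hFbd s t hst.le).1
      nlinarith [mul_nonneg hlb.le (sub_nonneg.2 hst.le)]
    have h2 : (0:ℝ) ≤ H t - H s := sub_nonneg.2 (hHmono hst.le)
    have harg : F t - F s + (H t - H s) = ub * (t - s) := by simp only [hH]; ring
    rw [hSFapp, hSFapp, show SH t = H t from rfl, show SH s = H s from rfl,
      ← ENNReal.ofReal_add h1 h2, harg, ENNReal.smul_def, smul_eq_mul,
      ENNReal.ofReal_mul hub.le]
    rfl
  have claim2 : SF.measure = SG.measure + (Real.toNNReal lb) • (volume : Measure ℝ) := by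
    refine Measure.ext_of_Ioc _ _ (fun s t hst => ?_)
    rw [Measure.add_apply, SG.measure_Ioc, Measure.smul_apply, Real.volume_Ioc, SF.measure_Ioc]
    have h2 : (0:ℝ) ≤ G t - G s := sub_nonneg.2 (hGmono hst.le)
    have harg : G t - G s + lb * (t - s) = F t - F s := by simp only [hG]; ring
    rw [hSFapp, hSFapp, show SG t = G t from rfl, show SG s = G s from rfl,
      ENNReal.smul_def, smul_eq_mul,
      show ((Real.toNNReal lb : ℝ≥0) : ℝ≥0∞) * ENNReal.ofReal (t - s)
        = ENNReal.ofReal (lb * (t - s)) from by rw [ENNReal.ofReal_mul hlb.le]; rfl,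
      ← ENNReal.ofReal_add h2 (by nlinarith [sub_nonneg.2 hst.le] : (0:ℝ) ≤ lb * (t - s)), harg]
  set μ := SF.measure with hμ
  have hac : μ ≪ (volume : Measure ℝ) := by
    intro s hs
    have : μ s ≤ (SF.measure + SH.measure) s := by
      rw [Measure.add_apply]; exact le_self_add
    rw [claim1, Measure.smul_apply, hs, smul_zero] at this
    exact le_antisymm this bot_le
  set rn := μ.rnDeriv volume with hrn
  have hupper : ∀ᵐ x ∂(volume : Measure ℝ), rn x ≤ ENNReal.ofReal ub := by
    have h1 := Measure.rnDeriv_add' SF.measure SH.measure volume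
    have h2 := Measure.rnDeriv_smul_left' (volume : Measure ℝ) volume (Real.toNNReal ub)
    have h3 := Measure.rnDeriv_self (volume : Measure ℝ)
    rw [claim1] at h1
    filter_upwards [h1, h2, h3] with x hx1 hx2 hx3
    calc rn x ≤ SF.measure.rnDeriv volume x + SH.measure.rnDeriv volume x := le_self_add
      _ = (SF.measure.rnDeriv volume + SH.measure.rnDeriv volume) x := rfl
      _ = ((Real.toNNReal ub) • (volume : Measure ℝ)).rnDeriv volume x := hx1.symm
      _ = ((Real.toNNReal ub) • (volume : Measure ℝ).rnDeriv volume) x := hx2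
      _ = (Real.toNNReal ub) • (volume : Measure ℝ).rnDeriv volume x := rfl
      _ = ENNReal.ofReal ub := by
          rw [hx3, ENNReal.smul_def, smul_eq_mul, mul_one]; rfl
  have hlower : ∀ᵐ x ∂(volume : Measure ℝ), ENNReal.ofReal lb ≤ rn x := by
    have h1 := Measure.rnDeriv_add' SG.measure ((Real.toNNReal lb) • (volume : Measure ℝ)) volume
    have h2 := Measure.rnDeriv_smul_left' (volume : Measure ℝ) volume (Real.toNNReal lb)
    have h3 := Measure.rnDeriv_self (volume : Measure ℝ)
    rw [← claim2] at h1
    filter_upwards [h1, h2, h3] with x hx1 hx2 hx3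
    calc ENNReal.ofReal lb
        = (Real.toNNReal lb) • (volume : Measure ℝ).rnDeriv volume x := by
          rw [hx3, ENNReal.smul_def, smul_eq_mul, mul_one]; rfl
      _ = ((Real.toNNReal lb) • (volume : Measure ℝ).rnDeriv volume) x := rfl
      _ = ((Real.toNNReal lb) • (volume : Measure ℝ)).rnDeriv volume x := hx2.symm
      _ ≤ SG.measure.rnDeriv volume x +
            ((Real.toNNReal lb) • (volume : Measure ℝ)).rnDeriv volume x := le_add_self
      _ = (SG.measure.rnDeriv volume + ((Real.toNNReal lb) • (volume : Measure ℝ)).rnDeriv volume) x := rfl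
      _ = rn x := hx1.symm
  set h0 : ℝ → ℝ := fun x => (rn x).toReal with hh0
  set h : ℝ → ℝ := fun x => max lb (min ub (h0 x)) with hh
  have hmeas : Measurable h := by
    apply Measurable.max measurable_const
    apply Measurable.min measurable_const
    exact (Measure.measurable_rnDeriv μ volume).ennreal_toReal
  have hbd : ∀ x, h x ∈ Icc lb ub := fun x =>
    ⟨le_max_left _ _, max_le hle (min_le_left _ _)⟩
  have haeq : ∀ᵐ x ∂(volume : Measure ℝ), h x = h0 x := by
    filter_upwards [hupper, hlower] with x hx1 hx2
    have hne : rn x ≠ ⊤ := (hx1.trans_lt ENNReal.ofReal_lt_top).ne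
    have hub' : h0 x ≤ ub := by
      rw [hh0]
      calc (rn x).toReal ≤ (ENNReal.ofReal ub).toReal :=
            ENNReal.toReal_mono ENNReal.ofReal_ne_top hx1
        _ = ub := ENNReal.toReal_ofReal hub.le
    have hlb' : lb ≤ h0 x := by
      rw [hh0]
      calc lb = (ENNReal.ofReal lb).toReal := (ENNReal.toReal_ofReal hlb.le).symm
        _ ≤ (rn x).toReal := ENNReal.toReal_mono hne hx2
    rw [hh]
    simp only [min_eq_right hub', max_eq_right hlb']
  refine ⟨h, hmeas, hbd, fun t ht => ?_⟩
  rw [intervalIntegral.integral_of_le ht]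
  have : ∫ x in Ioc (0:ℝ) t, h x = ∫ x in Ioc (0:ℝ) t, h0 x := by
    apply setIntegral_congr_ae measurableSet_Ioc
    filter_upwards [haeq] with x hx _
    exact hx
  rw [this, hh0]
  have := Measure.setIntegral_toReal_rnDeriv hac (Ioc (0:ℝ) t)
  rw [this, hμ, measureReal_def, SF.measure_Ioc, hSFapp, hSFapp, hF0, sub_zero, ENNReal.toReal_ofReal]
  have := (hFbd 0 t ht).1
  rw [hF0, sub_zero] at this
  nlinarith

lemma gc_ii' {u : ℝ → ℝ} (hu : Measurable u) {C : ℝ} (hbd : ∀ x, |u x| ≤ C) (s t : ℝ) :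
    IntervalIntegrable u volume s t := by
  rw [intervalIntegrable_iff]
  refine Integrable.mono' (g := fun _ => C)
    (integrableOn_const measure_Ioc_lt_top.ne) hu.aestronglyMeasurable.restrict
    (ae_of_all _ hbd)

lemma gc_ii_mul {u : ℝ → ℝ} (hu : Measurable u) {C : ℝ} (hbd : ∀ x, |u x| ≤ C)
    {f : ℝ → ℝ} (hf : Continuous f) (s t : ℝ) :
    IntervalIntegrable (fun x => f x * u x) volume s t := by
  obtain ⟨Cf, hCf⟩ := (isCompact_uIcc (a := s) (b := t)).exists_bound_of_continuousOn
    hf.continuousOn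
  have hC : 0 ≤ C := le_trans (abs_nonneg _) (hbd 0)
  have hCf0 : 0 ≤ Cf := le_trans (norm_nonneg _) (hCf s left_mem_uIcc)
  rw [intervalIntegrable_iff]
  refine Integrable.mono' (g := fun _ => Cf * C)
    (integrableOn_const measure_Ioc_lt_top.ne)
    ((hf.measurable.mul hu).aestronglyMeasurable.restrict) ?_
  refine (ae_restrict_iff' measurableSet_uIoc).2 (ae_of_all _ fun x hx => ?_)
  have h1 : |f x| ≤ Cf := hCf x (uIoc_subset_uIcc hx)
  calc ‖f x * u x‖ = |f x| * |u x| := abs_mul _ _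
    _ ≤ Cf * C := mul_le_mul h1 (hbd x) (abs_nonneg _) hCf0

lemma gc_riemann (ub : ℝ) (u : ℝ → ℝ) (hu : Measurable u)
    (hbd : ∀ x, |u x| ≤ ub) (f : ℝ → ℝ) (hf : Continuous f)
    (m : ℕ) (hm : 0 < m) (ε : ℝ) (hε : 0 ≤ ε)
    (hosc : ∀ x y, x ∈ Icc (0:ℝ) 1 → y ∈ Icc (0:ℝ) 1 → |x - y| ≤ 1/m → |f x - f y| ≤ ε) :
    |(∫ x in (0:ℝ)..1, f x * u x) -
      ∑ i ∈ Finset.range m, f ((i:ℝ)/m) *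
        ((∫ x in (0:ℝ)..(((i:ℝ)+1)/m), u x) - ∫ x in (0:ℝ)..((i:ℝ)/m), u x)| ≤ ε * ub := by
  have hub : 0 ≤ ub := le_trans (abs_nonneg _) (hbd 0)
  have hm' : (0:ℝ) < m := Nat.cast_pos.2 hm
  set P : ℕ → ℝ := fun i => (i:ℝ)/m with hP
  have hPmono : ∀ i : ℕ, P i ≤ P (i+1) := by
    intro i
    rw [hP, div_le_div_iff₀ hm' hm']
    push_cast
    nlinarith
  have hii : ∀ s t, IntervalIntegrable u volume s t := gc_ii' hu hbd
  have hfu : ∀ s t, IntervalIntegrable (fun x => f x * u x) volume s t :=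
    gc_ii_mul hu hbd hf
  -- decomposition of the full integral
  have hdec : ∫ x in (0:ℝ)..1, f x * u x
      = ∑ i ∈ Finset.range m, ∫ x in P i..P (i+1), f x * u x := by
    rw [intervalIntegral.sum_integral_adjacent_intervals (fun k _ => hfu _ _)]
    have h0 : P 0 = 0 := by simp [hP]
    have h1 : P m = 1 := by simp only [hP]; field_simp
    rw [h0, h1]
  -- per-block bound
  have key : ∀ i : ℕ, i < m →
      |(∫ x in P i..P (i+1), f x * u x) - f (P i) * ∫ x in P i..P (i+1), u x|
        ≤ ε * ub * (1/m) := by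
    intro i hi
    have hsub : (∫ x in P i..P (i+1), f x * u x) - f (P i) * ∫ x in P i..P (i+1), u x
        = ∫ x in P i..P (i+1), (f x - f (P i)) * u x := by
      rw [← intervalIntegral.integral_const_mul,
        ← intervalIntegral.integral_sub (hfu _ _) ((hii _ _).const_mul _)]
      congr 1; ext x; ring
    rw [hsub]
    have hlen : P (i+1) - P i = 1/m := by
      simp only [hP]; push_cast; field_simp; ring
    have hbound : ∀ x ∈ Set.uIoc (P i) (P (i+1)), ‖(f x - f (P i)) * u x‖ ≤ ε * ub := by
      intro x hx
      rw [uIoc_of_le (hPmono i)] at hx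
      have hPi0 : 0 ≤ P i := by positivity
      have hPi1 : P (i+1) ≤ 1 := by
        rw [hP]
        rw [div_le_one hm']
        push_cast
        exact_mod_cast Nat.cast_le.2 (Nat.succ_le_of_lt hi)
      have hx1 : x ∈ Icc (0:ℝ) 1 := ⟨le_trans hPi0 hx.1.le, hx.2.trans hPi1⟩
      have hxi : |x - P i| ≤ 1/m := by
        rw [abs_of_nonneg (by linarith [hx.1.le])]
        linarith [hx.2, hlen]
      have h1 : |f x - f (P i)| ≤ ε :=
        hosc x (P i) hx1 ⟨hPi0, le_trans (hPmono i) hPi1⟩ hxi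
      calc ‖(f x - f (P i)) * u x‖ = |f x - f (P i)| * |u x| := abs_mul _ _
        _ ≤ ε * ub := mul_le_mul h1 (hbd x) (abs_nonneg _) hε
    calc ‖∫ x in P i..P (i+1), (f x - f (P i)) * u x‖
        ≤ (ε * ub) * |P (i+1) - P i| :=
          intervalIntegral.norm_integral_le_of_norm_le_const hbound
      _ = ε * ub * (1/m) := by rw [hlen, abs_of_nonneg (by positivity)]
  -- assemble
  have hsub2 : ∀ i : ℕ, (∫ x in (0:ℝ)..(((i:ℝ)+1)/m), u x) - ∫ x in (0:ℝ)..((i:ℝ)/m), u x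
      = ∫ x in P i..P (i+1), u x := by
    intro i
    have : P (i+1) = ((i:ℝ)+1)/m := by simp only [hP]; push_cast; ring
    rw [← this]
    exact (intervalIntegral.integral_interval_sub_left (hii _ _) (hii _ _))
  calc |(∫ x in (0:ℝ)..1, f x * u x) -
      ∑ i ∈ Finset.range m, f ((i:ℝ)/m) *
        ((∫ x in (0:ℝ)..(((i:ℝ)+1)/m), u x) - ∫ x in (0:ℝ)..((i:ℝ)/m), u x)|
      = |∑ i ∈ Finset.range m, ((∫ x in P i..P (i+1), f x * u x)
          - f (P i) * ∫ x in P i..P (i+1), u x)| := by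
        rw [hdec, ← Finset.sum_sub_distrib]
        congr 1
        apply Finset.sum_congr rfl
        intro i _
        rw [hsub2 i]
    _ ≤ ∑ i ∈ Finset.range m, |(∫ x in P i..P (i+1), f x * u x)
          - f (P i) * ∫ x in P i..P (i+1), u x| := Finset.abs_sum_le_sum_abs _ _
    _ ≤ ∑ _i ∈ Finset.range m, ε * ub * (1/m) :=
        Finset.sum_le_sum (fun i hi => key i (Finset.mem_range.1 hi))
    _ = ε * ub := by
        rw [Finset.sum_const, Finset.card_range, nsmul_eq_mul]
        field_simp

lemma gc_conv_cont (ub : ℝ) (hub : 0 < ub) (b : ℕ → ℝ → ℝ)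
    (hbmeas : ∀ k, Measurable (b k)) (hbbd : ∀ k x, |b k x| ≤ ub)
    (h : ℝ → ℝ) (hhmeas : Measurable h) (hhbd : ∀ x, |h x| ≤ ub)
    (hconv : ∀ t, t ∈ Icc (0:ℝ) 1 →
      Tendsto (fun k => ∫ x in (0:ℝ)..t, b k x) atTop (nhds (∫ x in (0:ℝ)..t, h x)))
    (f : ℝ → ℝ) (hf : Continuous f) :
    Tendsto (fun k => ∫ x in (0:ℝ)..1, f x * b k x) atTop
      (nhds (∫ x in (0:ℝ)..1, f x * h x)) := by
  rw [Metric.tendsto_atTop]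
  intro ε hε
  set ε' : ℝ := ε / (4 * (ub + 1)) with hε'
  have hε'pos : 0 < ε' := by positivity
  have hε'ub : ε' * ub ≤ ε / 4 := by
    rw [hε']
    rw [div_mul_eq_mul_div, div_le_div_iff₀ (by positivity) (by norm_num)]
    nlinarith
  -- uniform continuity on [0,1]
  obtain ⟨δ, hδpos, hδ⟩ := Metric.uniformContinuousOn_iff.1
    (isCompact_Icc.uniformContinuousOn_of_continuous (hf.continuousOn
      (s := Icc (0:ℝ) 1))) ε' hε'pos
  obtain ⟨n, hn⟩ := exists_nat_one_div_lt hδpos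
  set m : ℕ := n + 1 with hm
  have hmpos : 0 < m := Nat.succ_pos n
  have hosc : ∀ x y, x ∈ Icc (0:ℝ) 1 → y ∈ Icc (0:ℝ) 1 → |x - y| ≤ 1/m → |f x - f y| ≤ ε' := by
    intro x y hx hy hxy
    have : dist x y < δ := by
      rw [Real.dist_eq]
      refine lt_of_le_of_lt hxy ?_
      have : ((m:ℝ)) = (n:ℝ) + 1 := by rw [hm]; push_cast; ring
      rw [this]
      exact hn
    exact (le_of_lt (by simpa [Real.dist_eq] using hδ x hx y hy this))
  -- the Riemann sums
  set S : (ℝ → ℝ) → ℝ := fun u => ∑ i ∈ Finset.range m, f ((i:ℝ)/m) *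
      ((∫ x in (0:ℝ)..(((i:ℝ)+1)/m), u x) - ∫ x in (0:ℝ)..((i:ℝ)/m), u x) with hS
  have hRb : ∀ k, |(∫ x in (0:ℝ)..1, f x * b k x) - S (b k)| ≤ ε' * ub := fun k =>
    gc_riemann ub (b k) (hbmeas k) (hbbd k) f hf m hmpos ε' hε'pos.le hosc
  have hRh : |(∫ x in (0:ℝ)..1, f x * h x) - S h| ≤ ε' * ub :=
    gc_riemann ub h hhmeas hhbd f hf m hmpos ε' hε'pos.le hosc
  -- convergence of the sums
  have hmem : ∀ i : ℕ, i < m → ((i:ℝ)/m ∈ Icc (0:ℝ) 1 ∧ ((i:ℝ)+1)/m ∈ Icc (0:ℝ) 1) := by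
    intro i hi
    have hm' : (0:ℝ) < m := Nat.cast_pos.2 hmpos
    have hi' : (i:ℝ) + 1 ≤ m := by exact_mod_cast Nat.succ_le_of_lt hi
    constructor
    · exact ⟨by positivity, by rw [div_le_one hm']; linarith⟩
    · exact ⟨by positivity, by rw [div_le_one hm']; linarith⟩
  have hStend : Tendsto (fun k => S (b k)) atTop (nhds (S h)) := by
    apply tendsto_finset_sum
    intro i hi
    obtain ⟨h1, h2⟩ := hmem i (Finset.mem_range.1 hi)
    exact ((hconv _ h2).sub (hconv _ h1)).const_mul _
  have hev : ∀ᶠ k in atTop, dist (S (b k)) (S h) < ε / 4 :=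
    hStend (Metric.ball_mem_nhds _ (by positivity))
  obtain ⟨N, hN⟩ := hev.exists_forall_of_atTop
  refine ⟨N, fun k hk => ?_⟩
  have h1 : dist (∫ x in (0:ℝ)..1, f x * b k x) (S (b k)) ≤ ε / 4 := by
    rw [Real.dist_eq]; exact (hRb k).trans hε'ub
  have h2 : dist (S h) (∫ x in (0:ℝ)..1, f x * h x) ≤ ε / 4 := by
    rw [dist_comm, Real.dist_eq]; exact hRh.trans hε'ub
  calc dist (∫ x in (0:ℝ)..1, f x * b k x) (∫ x in (0:ℝ)..1, f x * h x)
      ≤ dist (∫ x in (0:ℝ)..1, f x * b k x) (S (b k)) + dist (S (b k)) (S h)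
        + dist (S h) (∫ x in (0:ℝ)..1, f x * h x) := dist_triangle4 _ _ _ _
    _ < ε := by
        have := hN k hk
        linarith

/-- 1D G-compactness: every sequence of coefficients bounded between `α` and `β` has a
subsequence whose reciprocals converge weakly-* (against all integrable functions) to the
reciprocal of a limit coefficient again bounded between `α` and `β`. -/
theorem stmt_10 (α β : ℝ) (hα : 0 < α) (hαβ : α ≤ β) (a : ℕ → ℝ → ℝ)
    (hmeas : ∀ n, Measurable (a n))
    (hbd : ∀ n, ∀ᵐ x ∂(volume.restrict (Icc (0:ℝ) 1)), α ≤ a n x ∧ a n x ≤ β) :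
    ∃ φ : ℕ → ℕ, StrictMono φ ∧ ∃ astar : ℝ → ℝ, Measurable astar ∧
      (∀ᵐ x ∂(volume.restrict (Icc (0:ℝ) 1)), α ≤ astar x ∧ astar x ≤ β) ∧
      ∀ g : ℝ → ℝ, IntegrableOn g (Icc 0 1) →
        Tendsto (fun k => ∫ x in (0:ℝ)..1, g x / a (φ k) x) atTop
          (nhds (∫ x in (0:ℝ)..1, g x / astar x)) := by
  have hβ : 0 < β := hα.trans_le hαβ
  have hlb : (0:ℝ) < β⁻¹ := by positivity
  have hle : β⁻¹ ≤ α⁻¹ := by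
    rw [inv_le_inv₀ hβ hα]; exact hαβ
  set A : ℕ → ℝ → ℝ := fun n x => max α (min β (a n x)) with hA
  have hAmeas : ∀ n, Measurable (A n) :=
    fun n => measurable_const.max (measurable_const.min (hmeas n))
  have hAbd : ∀ n x, α ≤ A n x ∧ A n x ≤ β := fun n x =>
    ⟨le_max_left _ _, max_le hαβ (min_le_left _ _)⟩
  have hApos : ∀ n x, 0 < A n x := fun n x => hα.trans_le (hAbd n x).1
  set b : ℕ → ℝ → ℝ := fun n x => (A n x)⁻¹ with hb
  have hbmeas : ∀ n, Measurable (b n) := fun n => (hAmeas n).inv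
  have hbbd : ∀ n x, b n x ∈ Icc β⁻¹ α⁻¹ := by
    intro n x
    constructor
    · rw [inv_le_inv₀ hβ (hApos n x)]; exact (hAbd n x).2
    · rw [inv_le_inv₀ (hApos n x) hα]; exact (hAbd n x).1
  have habs : ∀ n x, |b n x| ≤ α⁻¹ := fun n x => by
    rw [abs_of_nonneg (le_of_lt (by positivity : (0:ℝ) < b n x))]
    exact (hbbd n x).2
  obtain ⟨ψ, hψ, F, hF0, hFbd, hFconv⟩ := gc_extract β⁻¹ α⁻¹ hlb hle b hbmeas hbbd
  obtain ⟨h, hhmeas, hhbd, hhint⟩ := gc_density β⁻¹ α⁻¹ hlb hle F hF0 hFbd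
  have hhpos : ∀ x, 0 < h x := fun x => hlb.trans_le (hhbd x).1
  have hhabs : ∀ x, |h x| ≤ α⁻¹ := fun x => by
    rw [abs_of_nonneg (hhpos x).le]; exact (hhbd x).2
  refine ⟨ψ, hψ, fun x => (h x)⁻¹, hhmeas.inv, ae_of_all _ fun x => ?_, ?_⟩
  · constructor
    · have h1 : (α⁻¹)⁻¹ ≤ (h x)⁻¹ := by
        rw [inv_le_inv₀ (by positivity) (hhpos x)]; exact (hhbd x).2
      simpa [inv_inv] using h1
    · have h1 : (h x)⁻¹ ≤ (β⁻¹)⁻¹ := by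
        rw [inv_le_inv₀ (hhpos x) hlb]; exact (hhbd x).1
      simpa [inv_inv] using h1
  · intro g hg
    -- rewrite target point
    have htarget : ∫ x in (0:ℝ)..1, g x / (h x)⁻¹ = ∫ x in (0:ℝ)..1, g x * h x := by
      apply intervalIntegral.integral_congr
      intro x _
      show g x / (h x)⁻¹ = g x * h x
      rw [div_inv_eq_mul]
    rw [htarget]
    -- rewrite the sequence
    have key : ∀ n, ∫ x in (0:ℝ)..1, g x / a n x = ∫ x in (0:ℝ)..1, g x * b n x := by
      intro n
      apply intervalIntegral.integral_congr_ae
      have h1 := (ae_restrict_iff' measurableSet_Icc).1 (hbd n)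
      filter_upwards [h1] with x hx hxI
      have hxIcc : x ∈ Icc (0:ℝ) 1 := by
        rw [uIoc_of_le zero_le_one] at hxI
        exact Ioc_subset_Icc_self hxI
      obtain ⟨ha1, ha2⟩ := hx hxIcc
      have hAx : A n x = a n x := by
        rw [hA]
        simp only
        rw [min_eq_right ha2, max_eq_right ha1]
      rw [div_eq_mul_inv, hb]
      simp only
      rw [hAx]
    have hfun : (fun k => ∫ x in (0:ℝ)..1, g x / a (ψ k) x)
        = fun k => ∫ x in (0:ℝ)..1, g x * b (ψ k) x := funext fun k => key (ψ k)
    rw [hfun]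
    -- the interval convergence transferred to h
    have hconvIcc : ∀ t, t ∈ Icc (0:ℝ) 1 →
        Tendsto (fun k => ∫ x in (0:ℝ)..t, b (ψ k) x) atTop
          (nhds (∫ x in (0:ℝ)..t, h x)) := by
      intro t ht
      rw [hhint t ht.1]
      exact hFconv t
    -- main ε-argument
    rw [Metric.tendsto_atTop]
    intro ε hε
    set ε' : ℝ := ε / (4 * (α⁻¹ + 1)) with hε'
    have hε'pos : 0 < ε' := by positivity
    have hε'bd : α⁻¹ * ε' ≤ ε / 4 := by
      rw [hε', mul_div_assoc']
      rw [div_le_div_iff₀ (by positivity) (by norm_num)]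
      nlinarith [inv_pos.2 hα]
    have hgi : Integrable ((Icc (0:ℝ) 1).indicator g) volume :=
      (integrable_indicator_iff measurableSet_Icc).2 hg
    obtain ⟨f, hfsupp, hfdist, hfcont, hfint⟩ :=
      hgi.exists_hasCompactSupport_integral_sub_le hε'pos
    -- uniform bound step
    have hbnd : ∀ u : ℝ → ℝ, Measurable u → (∀ x, |u x| ≤ α⁻¹) →
        |(∫ x in (0:ℝ)..1, g x * u x) - ∫ x in (0:ℝ)..1, f x * u x| ≤ α⁻¹ * ε' := by
      intro u hu hub
      have hio : IntegrableOn g (Ioc 0 1) volume := hg.mono_set Ioc_subset_Icc_self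
      have hfio : IntegrableOn f (Ioc 0 1) volume := hfint.integrableOn
      have hCu : ∃ C, ∀ x, ‖u x‖ ≤ C := ⟨α⁻¹, fun x => by
        rw [Real.norm_eq_abs]; exact hub x⟩
      have hgu : IntegrableOn (fun x => g x * u x) (Ioc 0 1) volume := by
        have h2 : Integrable (fun x => u x * g x) (volume.restrict (Ioc (0:ℝ) 1)) :=
          Integrable.bdd_mul hio hu.aestronglyMeasurable.restrict (ae_of_all _ hCu.choose_spec)
        simpa [mul_comm, IntegrableOn] using h2
      have hfu : IntegrableOn (fun x => f x * u x) (Ioc 0 1) volume := by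
        have h2 : Integrable (fun x => u x * f x) (volume.restrict (Ioc (0:ℝ) 1)) :=
          Integrable.bdd_mul hfio hu.aestronglyMeasurable.restrict (ae_of_all _ hCu.choose_spec)
        simpa [mul_comm, IntegrableOn] using h2
      have hgu' : IntervalIntegrable (fun x => g x * u x) volume 0 1 := by
        rw [intervalIntegrable_iff, uIoc_of_le zero_le_one]; exact hgu
      have hfu' : IntervalIntegrable (fun x => f x * u x) volume 0 1 := by
        rw [intervalIntegrable_iff, uIoc_of_le zero_le_one]; exact hfu
      have hdiff : (∫ x in (0:ℝ)..1, g x * u x) - ∫ x in (0:ℝ)..1, f x * u x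
          = ∫ x in (0:ℝ)..1, (g x - f x) * u x := by
        rw [← intervalIntegral.integral_sub hgu' hfu']
        congr 1
        ext x
        ring
      rw [hdiff]
      have habs1 : |∫ x in (0:ℝ)..1, (g x - f x) * u x|
          ≤ ∫ x in (0:ℝ)..1, |(g x - f x) * u x| :=
        intervalIntegral.abs_integral_le_integral_abs zero_le_one
      refine habs1.trans ?_
      rw [intervalIntegral.integral_of_le zero_le_one]
      have hint2 : IntegrableOn (fun x => |g x - f x| * α⁻¹) (Ioc 0 1) volume :=
        (hio.sub hfio).abs.mul_const _
      have hmono : ∫ x in Ioc (0:ℝ) 1, |(g x - f x) * u x|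
          ≤ ∫ x in Ioc (0:ℝ) 1, |g x - f x| * α⁻¹ := by
        apply integral_mono_of_nonneg (ae_of_all _ fun x => abs_nonneg _) hint2
        apply ae_of_all
        intro x
        show |(g x - f x) * u x| ≤ |g x - f x| * α⁻¹
        rw [abs_mul]
        exact mul_le_mul_of_nonneg_left (hub x) (abs_nonneg _)
      refine hmono.trans ?_
      rw [integral_mul_const]
      rw [mul_comm]
      apply mul_le_mul_of_nonneg_left ?_ (by positivity : (0:ℝ) ≤ α⁻¹)
      -- ∫ Ioc |g - f| ≤ ε'
      have hequal : ∫ x in Ioc (0:ℝ) 1, |g x - f x|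
          = ∫ x in Ioc (0:ℝ) 1, ‖(Icc (0:ℝ) 1).indicator g x - f x‖ := by
        apply setIntegral_congr_fun measurableSet_Ioc
        intro x hx
        show |g x - f x| = ‖(Icc (0:ℝ) 1).indicator g x - f x‖
        rw [indicator_of_mem (Ioc_subset_Icc_self hx), Real.norm_eq_abs]
      rw [hequal]
      refine le_trans (setIntegral_le_integral ((hgi.sub hfint).norm) 
        (ae_of_all _ fun x => norm_nonneg _)) hfdist
    -- continuous-function convergence
    have hmain := gc_conv_cont α⁻¹ (by positivity) (fun k => b (ψ k))
      (fun k => hbmeas _) (fun k x => habs _ x) h hhmeas hhabs hconvIcc f hfcont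
    have hev : ∀ᶠ k in atTop,
        dist (∫ x in (0:ℝ)..1, f x * b (ψ k) x) (∫ x in (0:ℝ)..1, f x * h x) < ε / 4 :=
      hmain (Metric.ball_mem_nhds _ (by positivity))
    obtain ⟨N, hN⟩ := hev.exists_forall_of_atTop
    refine ⟨N, fun k hk => ?_⟩
    have h1 : dist (∫ x in (0:ℝ)..1, g x * b (ψ k) x) (∫ x in (0:ℝ)..1, f x * b (ψ k) x)
        ≤ ε / 4 := by
      rw [Real.dist_eq]
      exact (hbnd (b (ψ k)) (hbmeas _) (habs _)).trans hε'bd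
    have h2 : dist (∫ x in (0:ℝ)..1, f x * h x) (∫ x in (0:ℝ)..1, g x * h x) ≤ ε / 4 := by
      rw [dist_comm, Real.dist_eq]
      exact (hbnd h hhmeas hhabs).trans hε'bd
    calc dist (∫ x in (0:ℝ)..1, g x * b (ψ k) x) (∫ x in (0:ℝ)..1, g x * h x)
        ≤ dist (∫ x in (0:ℝ)..1, g x * b (ψ k) x) (∫ x in (0:ℝ)..1, f x * b (ψ k) x)
          + dist (∫ x in (0:ℝ)..1, f x * b (ψ k) x) (∫ x in (0:ℝ)..1, f x * h x)
          + dist (∫ x in (0:ℝ)..1, f x * h x) (∫ x in (0:ℝ)..1, g x * h x) :=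
          dist_triangle4 _ _ _ _
      _ < ε := by
          have := hN k hk
          linarith
end

section
/- Let 0 < α ≤ β, let (a_n) be a sequence of measurable functions a_n : [0,1] → ℝ with α ≤ a_n ≤ β almost everywhere, and let a* : [0,1] → ℝ be measurable with α ≤ a* ≤ β almost everywhere. Assume that for every integrable g : [0,1] → ℝ, ∫₀¹ g(x)/a_n(x) dx → ∫₀¹ g(x)/a*(x) dx as n → ∞. Let f : [0,1] → ℝ be continuous, set F(x) := ∫₀ˣ f(t) dt, and for each n define c_n := (∫₀¹ F(t)/a_n(t) dt)/(∫₀¹ 1/a_n(t) dt) and u_n(x) := ∫₀ˣ (c_n − F(t))/a_n(t) dt; define c*, u* analogously with a_n replaced by a*. Then the solutions converge uniformly: lim_{n→∞} sup_{x∈[0,1]} |u_n(x) − u*(x)| = 0. -/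
open MeasureTheory Set Filter

lemma aux_finite : IsFiniteMeasure (volume.restrict (Icc (0:ℝ) 1)) := by
  constructor
  rw [Measure.restrict_apply_univ, Real.volume_Icc]
  exact ENNReal.ofReal_lt_top

lemma aux_equicont {ι : Type*} (G : ι → ℝ → ℝ) (s : Set ℝ) (K : ℝ) (hK : 0 ≤ K)
    (h : ∀ i, ∀ x ∈ s, ∀ y ∈ s, |G i x - G i y| ≤ K * |x - y|) :
    EquicontinuousOn G s := by
  intro x hx U hU
  obtain ⟨ε, hε, hball⟩ := Metric.mem_uniformity_dist.mp hU
  have hmem : Metric.ball x (ε / (K + 1)) ∈ nhdsWithin x s :=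
    nhdsWithin_le_nhds (Metric.ball_mem_nhds x (by positivity))
  filter_upwards [hmem, self_mem_nhdsWithin] with y hy hys i
  apply hball
  have hdy : dist y x < ε / (K + 1) := hy
  calc dist (G i x) (G i y) = |G i x - G i y| := Real.dist_eq _ _
    _ ≤ K * |x - y| := h i x hx y hys
    _ ≤ K * (ε / (K + 1)) := by
        apply mul_le_mul_of_nonneg_left _ hK
        rw [abs_sub_comm, ← Real.dist_eq]
        exact hdy.le
    _ < ε := by
        rw [mul_div_assoc']
        rw [div_lt_iff₀ (by positivity)]
        nlinarith

lemma aux_unif {G : ℕ → ℝ → ℝ} {g : ℝ → ℝ} (heq : EquicontinuousOn G (Icc 0 1))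
    (hpt : ∀ x ∈ Icc (0:ℝ) 1, Tendsto (fun n => G n x) atTop (nhds (g x))) :
    TendstoUniformlyOn G g atTop (Icc 0 1) := by
  have h1 : Tendsto (UniformOnFun.ofFun {Icc (0:ℝ) 1} ∘ G) atTop
      (nhds (UniformOnFun.ofFun {Icc (0:ℝ) 1} g)) := by
    rw [EquicontinuousOn.tendsto_uniformOnFun_iff_pi'
      (by rintro K rfl; exact isCompact_Icc) (by rintro K rfl; exact heq)]
    rw [tendsto_pi_nhds]
    intro x
    have hx : (x : ℝ) ∈ Icc (0:ℝ) 1 := by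
      have := x.2
      simpa using this
    exact hpt x hx
  have := UniformOnFun.tendsto_iff_tendstoUniformlyOn.mp h1 (Icc 0 1) rfl
  exact this

lemma aux_int (α β : ℝ) (hα : 0 < α) (b : ℝ → ℝ) (hb : Measurable b)
    (hbd : ∀ᵐ x ∂(volume.restrict (Icc (0:ℝ) 1)), α ≤ b x ∧ b x ≤ β)
    (g : ℝ → ℝ) (C : ℝ) (hC : 0 ≤ C)
    (hg : AEStronglyMeasurable g (volume.restrict (Icc (0:ℝ) 1)))
    (hgC : ∀ t ∈ Icc (0:ℝ) 1, |g t| ≤ C) :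
    IntegrableOn (fun t => g t / b t) (Icc (0:ℝ) 1) := by
  haveI := aux_finite
  have hmeas : AEStronglyMeasurable (fun t => g t / b t) (volume.restrict (Icc (0:ℝ) 1)) := by
    simp_rw [div_eq_mul_inv]
    exact hg.mul (hb.inv.aestronglyMeasurable)
  apply Integrable.mono' (integrable_const (C / α)) hmeas
  filter_upwards [hbd, ae_restrict_mem measurableSet_Icc] with t ht hts
  rw [Real.norm_eq_abs, abs_div]
  have hb1 : α ≤ |b t| := le_trans ht.1 (le_abs_self _)
  exact div_le_div₀ hC (hgC t hts) hα hb1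

lemma aux_uIoc_subset {x y : ℝ} (hx : x ∈ Icc (0:ℝ) 1) (hy : y ∈ Icc (0:ℝ) 1) :
    Set.uIoc y x ⊆ Icc (0:ℝ) 1 :=
  (Ioc_subset_Icc_self).trans (uIcc_subset_Icc hy hx)

lemma aux_intv (α β : ℝ) (hα : 0 < α) (b : ℝ → ℝ) (hb : Measurable b)
    (hbd : ∀ᵐ x ∂(volume.restrict (Icc (0:ℝ) 1)), α ≤ b x ∧ b x ≤ β)
    (g : ℝ → ℝ) (C : ℝ) (hC : 0 ≤ C)
    (hg : AEStronglyMeasurable g (volume.restrict (Icc (0:ℝ) 1)))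
    (hgC : ∀ t ∈ Icc (0:ℝ) 1, |g t| ≤ C)
    {x y : ℝ} (hx : x ∈ Icc (0:ℝ) 1) (hy : y ∈ Icc (0:ℝ) 1) :
    IntervalIntegrable (fun t => g t / b t) volume y x := by
  rw [intervalIntegrable_iff]
  exact (aux_int α β hα b hb hbd g C hC hg hgC).mono_set (aux_uIoc_subset hx hy)

lemma aux_indic (b g : ℝ → ℝ) {x : ℝ} (hx : x ∈ Icc (0:ℝ) 1) :
    (∫ t in (0:ℝ)..1, (Icc (0:ℝ) x).indicator g t / b t) = ∫ t in (0:ℝ)..x, g t / b t := by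
  rw [intervalIntegral.integral_of_le (zero_le_one), intervalIntegral.integral_of_le hx.1]
  have h1 : (fun t => (Icc (0:ℝ) x).indicator g t / b t)
      = (Icc (0:ℝ) x).indicator (fun t => g t / b t) := by
    funext t
    by_cases ht : t ∈ Icc (0:ℝ) x
    · simp [indicator_of_mem ht]
    · simp [indicator_of_notMem ht]
  rw [h1, setIntegral_indicator measurableSet_Icc]
  have h2 : Ioc (0:ℝ) 1 ∩ Icc (0:ℝ) x = Ioc (0:ℝ) x := by
    ext t
    simp only [mem_inter_iff, mem_Ioc, mem_Icc]
    constructor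
    · rintro ⟨⟨h1, _⟩, _, h4⟩
      exact ⟨h1, h4⟩
    · rintro ⟨h1, h2⟩
      exact ⟨⟨h1, h2.trans hx.2⟩, h1.le, h2⟩
  rw [h2]

lemma aux_den (α β : ℝ) (hα : 0 < α) (hαβ : α ≤ β) (b : ℝ → ℝ) (hb : Measurable b)
    (hbd : ∀ᵐ x ∂(volume.restrict (Icc (0:ℝ) 1)), α ≤ b x ∧ b x ≤ β) :
    1 / β ≤ ∫ t in (0:ℝ)..1, 1 / b t := by
  have hβ : 0 < β := lt_of_lt_of_le hα hαβ
  rw [intervalIntegral.integral_of_le zero_le_one]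
  have hint : IntegrableOn (fun t => (1:ℝ) / b t) (Icc (0:ℝ) 1) :=
    aux_int α β hα b hb hbd (fun _ => 1) 1 zero_le_one aestronglyMeasurable_const
      (fun t _ => by simp)
  have hint' : IntegrableOn (fun t => (1:ℝ) / b t) (Ioc (0:ℝ) 1) :=
    hint.mono_set Ioc_subset_Icc_self
  have hconst : IntegrableOn (fun _ : ℝ => 1 / β) (Ioc (0:ℝ) 1) := by
    apply (integrableOn_const_iff (C := 1 / β)).mpr
    right
    rw [Real.volume_Ioc]
    exact ENNReal.ofReal_lt_top
  have hle : ∀ᵐ t ∂(volume.restrict (Ioc (0:ℝ) 1)), 1 / β ≤ 1 / b t := by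
    have := ae_restrict_of_ae_restrict_of_subset Ioc_subset_Icc_self hbd
    filter_upwards [this] with t ht
    exact one_div_le_one_div_of_le (lt_of_lt_of_le hα ht.1) ht.2
  calc 1 / β = ∫ _ in Ioc (0:ℝ) 1, 1 / β := by
        rw [setIntegral_const, Real.volume_real_Ioc_of_le zero_le_one, smul_eq_mul]
        rw [show (1:ℝ) - 0 = 1 by norm_num, one_mul]
    _ ≤ ∫ t in Ioc (0:ℝ) 1, 1 / b t := integral_mono_ae hconst hint' hle

/-- G-convergence implies uniform convergence of the solutions of the associated 1D
Dirichlet problems. -/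
theorem stmt_11 (α β : ℝ) (hα : 0 < α) (hαβ : α ≤ β)
    (a : ℕ → ℝ → ℝ) (astar : ℝ → ℝ)
    (hmeas : ∀ n, Measurable (a n)) (hmeas' : Measurable astar)
    (hbd : ∀ n, ∀ᵐ x ∂(volume.restrict (Icc (0:ℝ) 1)), α ≤ a n x ∧ a n x ≤ β)
    (hbd' : ∀ᵐ x ∂(volume.restrict (Icc (0:ℝ) 1)), α ≤ astar x ∧ astar x ≤ β)
    (hweak : ∀ g : ℝ → ℝ, IntegrableOn g (Icc 0 1) →
      Tendsto (fun n => ∫ x in (0:ℝ)..1, g x / a n x) atTop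
        (nhds (∫ x in (0:ℝ)..1, g x / astar x)))
    (f F : ℝ → ℝ) (hf : ContinuousOn f (Icc 0 1))
    (hF : ∀ x, F x = ∫ t in (0:ℝ)..x, f t)
    (c : ℕ → ℝ)
    (hc : ∀ n, c n = (∫ t in (0:ℝ)..1, F t / a n t) / (∫ t in (0:ℝ)..1, 1 / a n t))
    (u : ℕ → ℝ → ℝ) (hu : ∀ n x, u n x = ∫ t in (0:ℝ)..x, (c n - F t) / a n t)
    (cstar : ℝ)
    (hcstar : cstar = (∫ t in (0:ℝ)..1, F t / astar t) / (∫ t in (0:ℝ)..1, 1 / astar t))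
    (ustar : ℝ → ℝ) (hustar : ∀ x, ustar x = ∫ t in (0:ℝ)..x, (cstar - F t) / astar t) :
    Tendsto (fun n => sSup ((fun x => |u n x - ustar x|) '' Icc (0:ℝ) 1))
      atTop (nhds 0) := by
  have hβ : 0 < β := lt_of_lt_of_le hα hαβ
  have h0mem : (0:ℝ) ∈ Icc (0:ℝ) 1 := by norm_num
  have h1mem : (1:ℝ) ∈ Icc (0:ℝ) 1 := by norm_num
  -- bound on f
  obtain ⟨Mf, hMf⟩ := isCompact_Icc.exists_bound_of_continuousOn hf
  have hMf0 : 0 ≤ Mf := le_trans (norm_nonneg _) (hMf 0 h0mem)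
  -- F is Lipschitz on [0,1]
  have hint_f : ∀ x ∈ Icc (0:ℝ) 1, ∀ y ∈ Icc (0:ℝ) 1, IntervalIntegrable f volume y x :=
    fun x hx y hy => (hf.mono (uIcc_subset_Icc hy hx)).intervalIntegrable
  have hFsub : ∀ x ∈ Icc (0:ℝ) 1, ∀ y ∈ Icc (0:ℝ) 1, F x - F y = ∫ t in y..x, f t := by
    intro x hx y hy
    rw [hF, hF, ← intervalIntegral.integral_add_adjacent_intervals
      (hint_f y hy 0 h0mem) (hint_f x hx y hy)]
    ring
  have hFlip : ∀ x ∈ Icc (0:ℝ) 1, ∀ y ∈ Icc (0:ℝ) 1, |F x - F y| ≤ Mf * |x - y| := by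
    intro x hx y hy
    rw [hFsub x hx y hy]
    have h := intervalIntegral.norm_integral_le_of_norm_le_const
      (C := Mf) (f := f) (a := y) (b := x) (fun t ht => hMf t (aux_uIoc_subset hx hy ht))
    simpa [Real.norm_eq_abs] using h
  have hFcont : ContinuousOn F (Icc (0:ℝ) 1) := by
    have hl : LipschitzOnWith ⟨Mf, hMf0⟩ F (Icc (0:ℝ) 1) := by
      refine LipschitzOnWith.of_dist_le_mul ?_
      intro x hx y hy
      rw [Real.dist_eq, Real.dist_eq]
      exact hFlip x hx y hy
    exact hl.continuousOn
  -- bound on F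
  obtain ⟨M, hM⟩ := isCompact_Icc.exists_bound_of_continuousOn hFcont
  have hM0 : 0 ≤ M := le_trans (norm_nonneg _) (hM 0 h0mem)
  have hMabs : ∀ t ∈ Icc (0:ℝ) 1, |F t| ≤ M := fun t ht => by
    simpa [Real.norm_eq_abs] using hM t ht
  have hFasm : AEStronglyMeasurable F (volume.restrict (Icc (0:ℝ) 1)) :=
    hFcont.aestronglyMeasurable measurableSet_Icc
  -- pointwise convergence of the integrals on subintervals
  have key : ∀ g : ℝ → ℝ, IntegrableOn g (Icc 0 1) → ∀ x ∈ Icc (0:ℝ) 1,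
      Tendsto (fun n => ∫ t in (0:ℝ)..x, g t / a n t) atTop
        (nhds (∫ t in (0:ℝ)..x, g t / astar t)) := by
    intro g hg x hx
    have hg' : IntegrableOn ((Icc (0:ℝ) x).indicator g) (Icc 0 1) :=
      hg.indicator measurableSet_Icc
    have h := hweak _ hg'
    have e1 : ∀ b : ℝ → ℝ,
        (∫ t in (0:ℝ)..1, (Icc (0:ℝ) x).indicator g t / b t) = ∫ t in (0:ℝ)..x, g t / b t :=
      fun b => aux_indic b g hx
    simp only [e1] at h
    exact h
  have int1 : IntegrableOn (fun _ : ℝ => (1:ℝ)) (Icc (0:ℝ) 1) := by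
    apply (integrableOn_const_iff (C := (1:ℝ))).mpr
    right
    rw [Real.volume_Icc]
    exact ENNReal.ofReal_lt_top
  have intF : IntegrableOn F (Icc (0:ℝ) 1) := hFcont.integrableOn_Icc
  -- convergence of the constants
  have hdenstar : 1 / β ≤ ∫ t in (0:ℝ)..1, 1 / astar t := aux_den α β hα hαβ astar hmeas' hbd'
  have hdenpos : 0 < ∫ t in (0:ℝ)..1, 1 / astar t := lt_of_lt_of_le (by positivity) hdenstar
  have hcc : Tendsto c atTop (nhds cstar) := by
    have hnum := key F intF 1 h1mem
    have hden := key (fun _ => 1) int1 1 h1mem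
    have h := hnum.div hden (ne_of_gt hdenpos)
    have ec : c = fun n => (∫ t in (0:ℝ)..1, F t / a n t) / (∫ t in (0:ℝ)..1, 1 / a n t) :=
      funext hc
    rw [ec, hcstar]
    exact h
  -- bound on the constants
  have hcbound : ∀ b : ℝ → ℝ, Measurable b →
      (∀ᵐ x ∂(volume.restrict (Icc (0:ℝ) 1)), α ≤ b x ∧ b x ≤ β) →
      |(∫ t in (0:ℝ)..1, F t / b t) / (∫ t in (0:ℝ)..1, 1 / b t)| ≤ M := by
    intro b hb hbdb
    have hden : 1 / β ≤ ∫ t in (0:ℝ)..1, 1 / b t := aux_den α β hα hαβ b hb hbdb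
    have hdenpos' : 0 < ∫ t in (0:ℝ)..1, 1 / b t := lt_of_lt_of_le (by positivity) hden
    rw [abs_div, abs_of_pos hdenpos', div_le_iff₀ hdenpos']
    have hintv1 : IntervalIntegrable (fun t => (1:ℝ) / b t) volume 0 1 :=
      aux_intv α β hα b hb hbdb (fun _ => 1) 1 zero_le_one aestronglyMeasurable_const
        (fun t _ => by simp) h1mem h0mem
    have h1 : ‖∫ t in (0:ℝ)..1, F t / b t‖ ≤ |∫ t in (0:ℝ)..1, M * (1 / b t)| := by
      refine le_trans (intervalIntegral.norm_integral_le_of_norm_le zero_le_one ?_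
        (hintv1.const_mul M)) (le_abs_self _)
      rw [← uIoc_of_le (zero_le_one' ℝ), ← ae_restrict_iff' measurableSet_uIoc]
      have hae : ∀ᵐ t ∂(volume.restrict (Set.uIoc (0:ℝ) 1)), α ≤ b t ∧ b t ≤ β :=
        ae_restrict_of_ae_restrict_of_subset (aux_uIoc_subset h1mem h0mem) hbdb
      filter_upwards [hae, ae_restrict_mem measurableSet_uIoc] with t ht hts
      have htIcc : t ∈ Icc (0:ℝ) 1 := aux_uIoc_subset h1mem h0mem hts
      have hbt : 0 < b t := lt_of_lt_of_le hα ht.1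
      rw [Real.norm_eq_abs, abs_div, abs_of_pos hbt, mul_one_div]
      exact div_le_div₀ hM0 (hMabs t htIcc) hbt le_rfl
    rw [intervalIntegral.integral_const_mul] at h1
    rw [abs_of_nonneg (by positivity)] at h1
    simpa [Real.norm_eq_abs] using h1
  have hcnb : ∀ n, |c n| ≤ M := fun n => by
    rw [hc]
    exact hcbound (a n) (hmeas n) (hbd n)
  have hcsb : |cstar| ≤ M := by
    rw [hcstar]
    exact hcbound astar hmeas' hbd'
  -- representation of the solutions
  have hrep : ∀ b : ℝ → ℝ, Measurable b →
      (∀ᵐ x ∂(volume.restrict (Icc (0:ℝ) 1)), α ≤ b x ∧ b x ≤ β) →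
      ∀ cb : ℝ, ∀ x ∈ Icc (0:ℝ) 1,
      (∫ t in (0:ℝ)..x, (cb - F t) / b t)
        = cb * (∫ t in (0:ℝ)..x, 1 / b t) - ∫ t in (0:ℝ)..x, F t / b t := by
    intro b hb hbdb cb x hx
    have h1 : IntervalIntegrable (fun t => (1:ℝ) / b t) volume 0 x :=
      aux_intv α β hα b hb hbdb (fun _ => 1) 1 zero_le_one aestronglyMeasurable_const
        (fun t _ => by simp) hx h0mem
    have h2 : IntervalIntegrable (fun t => F t / b t) volume 0 x :=
      aux_intv α β hα b hb hbdb F M hM0 hFasm hMabs hx h0mem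
    have e : (fun t => (cb - F t) / b t) = fun t => cb * (1 / b t) - F t / b t := by
      funext t
      rw [sub_div, mul_one_div]
    rw [e, intervalIntegral.integral_sub (h1.const_mul cb) h2,
      intervalIntegral.integral_const_mul]
  -- equi-Lipschitz property
  have hlip : ∀ b : ℝ → ℝ, Measurable b →
      (∀ᵐ x ∂(volume.restrict (Icc (0:ℝ) 1)), α ≤ b x ∧ b x ≤ β) →
      ∀ cb : ℝ, |cb| ≤ M → ∀ x ∈ Icc (0:ℝ) 1, ∀ y ∈ Icc (0:ℝ) 1,
      |(∫ t in (0:ℝ)..x, (cb - F t) / b t) - ∫ t in (0:ℝ)..y, (cb - F t) / b t|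
        ≤ (2 * M / α) * |x - y| := by
    intro b hb hbdb cb hcb x hx y hy
    have hgasm : AEStronglyMeasurable (fun t => cb - F t) (volume.restrict (Icc (0:ℝ) 1)) :=
      aestronglyMeasurable_const.sub hFasm
    have hgC : ∀ t ∈ Icc (0:ℝ) 1, |cb - F t| ≤ 2 * M := by
      intro t ht
      have htr : |cb - F t| ≤ |cb| + |F t| := by
        have h := abs_add_le cb (-(F t))
        simpa [sub_eq_add_neg] using h
      have := hMabs t ht
      linarith
    have h2M : (0:ℝ) ≤ 2 * M := by linarith
    have hIy : IntervalIntegrable (fun t => (cb - F t) / b t) volume 0 y :=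
      aux_intv α β hα b hb hbdb _ (2 * M) h2M hgasm hgC hy h0mem
    have hIyx : IntervalIntegrable (fun t => (cb - F t) / b t) volume y x :=
      aux_intv α β hα b hb hbdb _ (2 * M) h2M hgasm hgC hx hy
    have hsplit := intervalIntegral.integral_add_adjacent_intervals hIy hIyx
    have heq : (∫ t in (0:ℝ)..x, (cb - F t) / b t) - (∫ t in (0:ℝ)..y, (cb - F t) / b t)
        = ∫ t in y..x, (cb - F t) / b t := by
      rw [← hsplit]
      ring
    rw [heq]
    have hbnd : ∀ᵐ t, t ∈ Set.uIoc y x → ‖(cb - F t) / b t‖ ≤ 2 * M / α := by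
      have h1 : ∀ᵐ t ∂(volume : Measure ℝ), t ∈ Icc (0:ℝ) 1 → (α ≤ b t ∧ b t ≤ β) :=
        (ae_restrict_iff' measurableSet_Icc).mp hbdb
      filter_upwards [h1] with t ht hti
      have htIcc : t ∈ Icc (0:ℝ) 1 := aux_uIoc_subset hx hy hti
      obtain ⟨hb1, _⟩ := ht htIcc
      rw [Real.norm_eq_abs, abs_div, abs_of_pos (lt_of_lt_of_le hα hb1)]
      exact div_le_div₀ h2M (hgC t htIcc) hα hb1
    have h := intervalIntegral.norm_integral_le_of_norm_le_const_ae hbnd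
    simpa [Real.norm_eq_abs] using h
  -- Lipschitz bounds for u n and ustar
  have hulip : ∀ n, ∀ x ∈ Icc (0:ℝ) 1, ∀ y ∈ Icc (0:ℝ) 1,
      |u n x - u n y| ≤ (2 * M / α) * |x - y| := by
    intro n x hx y hy
    rw [hu, hu]
    exact hlip (a n) (hmeas n) (hbd n) (c n) (hcnb n) x hx y hy
  -- pointwise convergence of u n to ustar
  have hpt : ∀ x ∈ Icc (0:ℝ) 1, Tendsto (fun n => u n x) atTop (nhds (ustar x)) := by
    intro x hx
    have hV := key (fun _ => 1) int1 x hx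
    have hW := key F intF x hx
    have h1 : Tendsto
        (fun n => c n * (∫ t in (0:ℝ)..x, 1 / a n t) - ∫ t in (0:ℝ)..x, F t / a n t) atTop
        (nhds (cstar * (∫ t in (0:ℝ)..x, 1 / astar t) - ∫ t in (0:ℝ)..x, F t / astar t)) :=
      (hcc.mul hV).sub hW
    have e1 : (fun n => u n x)
        = fun n => c n * (∫ t in (0:ℝ)..x, 1 / a n t) - ∫ t in (0:ℝ)..x, F t / a n t := by
      funext n
      rw [hu]
      exact hrep (a n) (hmeas n) (hbd n) (c n) x hx
    rw [e1, hustar, hrep astar hmeas' hbd' cstar x hx]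
    exact h1
  -- uniform convergence
  have hec : EquicontinuousOn u (Icc (0:ℝ) 1) :=
    aux_equicont u _ (2 * M / α) (div_nonneg (by linarith) hα.le) hulip
  have hUU : TendstoUniformlyOn u ustar atTop (Icc 0 1) := aux_unif hec hpt
  -- conclusion
  rw [Metric.tendstoUniformlyOn_iff] at hUU
  rw [NormedAddCommGroup.tendsto_nhds_zero]
  intro ε hε
  filter_upwards [hUU (ε / 2) (by positivity)] with n hn
  set T := (fun x => |u n x - ustar x|) '' Icc (0:ℝ) 1 with hT
  have hne : T.Nonempty := ⟨|u n 0 - ustar 0|, 0, h0mem, rfl⟩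
  have hub : ∀ z ∈ T, z ≤ ε / 2 := by
    rintro z ⟨x, hx, rfl⟩
    have h := hn x hx
    rw [Real.dist_eq] at h
    calc |u n x - ustar x| = |ustar x - u n x| := abs_sub_comm _ _
      _ ≤ ε / 2 := h.le
  have h1 : sSup T ≤ ε / 2 := csSup_le hne hub
  have h2 : 0 ≤ sSup T := by
    obtain ⟨z, hz⟩ := hne
    have hz0 : 0 ≤ z := by
      obtain ⟨x, hx, rfl⟩ := hz
      exact abs_nonneg _
    exact le_trans hz0 (le_csSup ⟨ε / 2, hub⟩ hz)
  rw [Real.norm_eq_abs, abs_of_nonneg h2]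
  linarith
end

section
/- For ε > 0 define the coefficient A^ε(x) := ∫₀¹ (1 + (1/2) sin((y + (1/(2ε)) sin(π√(2/ε) x))²)) e^{y(1 + sin x)} dy for x ∈ [0,1]. Then A^ε converges weakly in L²(0,1), as ε → 0⁺, to A*(x) := (e^{1 + sin x} − 1)/(1 + sin x); that is, for every continuous φ : [0,1] → ℝ, lim_{ε→0⁺} ∫₀¹ A^ε(x) φ(x) dx = ∫₀¹ ((e^{1 + sin x} − 1)/(1 + sin x)) φ(x) dx. -/
open MeasureTheory Set Filter
open scoped ENNReal

section Aux
open intervalIntegral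

lemma osc_bound (c s : ℝ) (hc : 2 ≤ |c|) (hs0 : 0 ≤ s) (hs2 : s ≤ 2) :
    |∫ y in (0:ℝ)..1, Real.sin ((y+c)^2) * Real.exp (y*s)| ≤ 100/|c| := by
  have hc0 : (0:ℝ) < |c| := by linarith
  -- key bounds for y ∈ [0,1]
  have hyc : ∀ y : ℝ, y ∈ Icc (0:ℝ) 1 → |c|/2 ≤ |y + c| := by
    intro y hy
    rcases abs_cases c with ⟨h1, h2⟩ | ⟨h1, h2⟩
    · rw [abs_of_nonneg (by nlinarith [hy.1] : (0:ℝ) ≤ y + c)]; nlinarith [hy.1]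
    · rw [abs_of_nonpos (by nlinarith [hy.2] : y + c ≤ 0)]; nlinarith [hy.2]
  have hne : ∀ y : ℝ, y ∈ Icc (0:ℝ) 1 → y + c ≠ 0 := by
    intro y hy h
    have := hyc y hy; rw [h] at this; simp at this; linarith
  set u : ℝ → ℝ := fun y => -Real.exp (y*s) / (2*(y+c)) with hu_def
  set u' : ℝ → ℝ := fun y => Real.exp (y*s) * (1 - s*(y+c)) / (2*(y+c)^2) with hu'_def
  set v : ℝ → ℝ := fun y => Real.cos ((y+c)^2) with hv_def
  set v' : ℝ → ℝ := fun y => -Real.sin ((y+c)^2) * (2*(y+c)) with hv'_def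
  have huIcc : uIcc (0:ℝ) 1 = Icc 0 1 := by rw [uIcc_of_le]; norm_num
  have hu : ∀ y ∈ uIcc (0:ℝ) 1, HasDerivAt u (u' y) y := by
    rw [huIcc]; intro y hy
    have h1 : HasDerivAt (fun y : ℝ => -Real.exp (y*s)) (-(Real.exp (y*s) * s)) y := by
      have := ((hasDerivAt_id y).mul_const s).exp
      simpa using this.fun_neg
    have h2 : HasDerivAt (fun y : ℝ => 2*(y+c)) 2 y := by
      simpa using (((hasDerivAt_id y).add_const c).const_mul 2)
    have := h1.div h2 (by
      have := hne y hy
      intro h; apply this; linarith)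
    have hyne : y + c ≠ 0 := hne y hy
    have h3 : ((-(Real.exp (y*s)*s)) * (2*(y+c)) - (-Real.exp (y*s)) * 2) / (2*(y+c))^2
        = Real.exp (y*s) * (1 - s*(y+c)) / (2*(y+c)^2) := by
      rw [div_eq_div_iff (by positivity) (by positivity)]
      ring
    simpa [hu'_def] using h3 ▸ this
  have hv : ∀ y ∈ uIcc (0:ℝ) 1, HasDerivAt v (v' y) y := by
    intro y _
    have h1 : HasDerivAt (fun y : ℝ => (y+c)^2) (2*(y+c)) y := by
      simpa [mul_comm] using (((hasDerivAt_id y).add_const c).fun_pow 2)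
    have := h1.cos
    simpa [hv'_def, mul_comm] using this
  have he8 : Real.exp 2 ≤ 8 := by
    have h2 : Real.exp 2 = Real.exp 1 * Real.exp 1 := by
      rw [← Real.exp_add]; norm_num
    nlinarith [Real.exp_one_lt_d9, Real.exp_pos 1]
  have hexp : ∀ y : ℝ, y ∈ Icc (0:ℝ) 1 → Real.exp (y*s) ≤ 8 := by
    intro y hy
    refine le_trans (Real.exp_le_exp.2 ?_) he8
    nlinarith [hy.1, hy.2]
  -- continuity / integrability
  have hcontu' : ContinuousOn u' (Icc 0 1) := by
    apply ContinuousOn.div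
    · fun_prop
    · fun_prop
    · intro y hy
      have := hne y hy
      positivity
  have hcontv' : Continuous v' := by fun_prop
  have hiu' : IntervalIntegrable u' volume 0 1 :=
    (huIcc.symm ▸ hcontu').intervalIntegrable
  have hiv' : IntervalIntegrable v' volume 0 1 := hcontv'.intervalIntegrable 0 1
  have hibp := intervalIntegral.integral_mul_deriv_eq_deriv_mul hu hv hiu' hiv'
  have hcongr : ∫ y in (0:ℝ)..1, Real.sin ((y+c)^2) * Real.exp (y*s)
      = ∫ y in (0:ℝ)..1, u y * v' y := by
    apply intervalIntegral.integral_congr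
    intro y hy
    rw [huIcc] at hy
    have hyne := hne y hy
    simp only [hu_def, hv'_def]
    field_simp
  rw [hcongr, hibp]
  -- bounds
  have hub : ∀ y : ℝ, y ∈ Icc (0:ℝ) 1 → |u y| ≤ 8/|c| := by
    intro y hy
    have h1 := hyc y hy
    have h2 := hexp y hy
    rw [hu_def]
    simp only
    rw [abs_div, abs_neg, abs_of_nonneg (Real.exp_pos _).le, abs_mul, abs_two]
    have hpos : (0:ℝ) < 2 * |y+c| := by
      have := abs_pos.2 (hne y hy); linarith
    rw [div_le_div_iff₀ hpos hc0]
    nlinarith [Real.exp_pos (y*s), abs_nonneg (y+c)]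
  have hu'b : ∀ y : ℝ, y ∈ Icc (0:ℝ) 1 → |u' y| ≤ 56/|c| := by
    intro y hy
    have h1 := hyc y hy
    have h2 := hexp y hy
    have h3 : c^2/4 ≤ (y+c)^2 := by
      have := mul_self_le_mul_self (by positivity : (0:ℝ) ≤ |c|/2) h1
      nlinarith [sq_abs (y+c), sq_abs c]
    have h4 : |1 - s*(y+c)| ≤ 2*|c| + 3 := by
      have hy1 := hy.1; have hy2 := hy.2
      have : |y + c| ≤ |c| + 1 := by
        calc |y + c| ≤ |y| + |c| := abs_add_le _ _
        _ ≤ |c| + 1 := by rw [abs_of_nonneg hy1]; linarith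
      calc |1 - s*(y+c)| ≤ |(1:ℝ)| + |s*(y+c)| := abs_sub _ _
      _ = 1 + s * |y+c| := by rw [abs_one, abs_mul, abs_of_nonneg hs0]
      _ ≤ 2*|c| + 3 := by nlinarith [abs_nonneg (y+c), abs_nonneg c]
    rw [hu'_def]
    simp only
    rw [abs_div, abs_mul, abs_of_nonneg (Real.exp_pos _).le]
    have hq : (0:ℝ) < (y+c)^2 :=
      lt_of_le_of_ne (sq_nonneg _) (Ne.symm (pow_ne_zero 2 (hne y hy)))
    have h5 : |2*(y+c)^2| = 2*(y+c)^2 := abs_of_nonneg (by positivity)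
    rw [h5, div_le_div_iff₀ (by linarith) hc0]
    nlinarith [Real.exp_pos (y*s), abs_nonneg (1 - s*(y+c)), sq_abs c, abs_nonneg c,
      mul_le_mul_of_nonneg_right (mul_le_mul h2 h4 (abs_nonneg _) (by norm_num : (0:ℝ) ≤ 8)) (abs_nonneg c),
      mul_le_mul_of_nonneg_right hc (abs_nonneg c)]
  have hvb : ∀ y : ℝ, |v y| ≤ 1 := fun y => Real.abs_cos_le_one _
  have hI : |∫ y in (0:ℝ)..1, u' y * v y| ≤ 56/|c| := by
    have := intervalIntegral.norm_integral_le_of_norm_le_const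
      (C := 56/|c|) (f := fun y => u' y * v y) (a := 0) (b := 1) ?_
    · simpa using this
    · intro y hy
      have hy' : y ∈ Icc (0:ℝ) 1 := by
        rw [uIoc_of_le (by norm_num)] at hy
        exact ⟨hy.1.le, hy.2⟩
      rw [Real.norm_eq_abs, abs_mul]
      calc |u' y| * |v y| ≤ (56/|c|) * 1 :=
        mul_le_mul (hu'b y hy') (hvb y) (abs_nonneg _) (by positivity)
      _ = 56/|c| := by ring
  have h0 : (0:ℝ) ∈ Icc (0:ℝ) 1 := by norm_num
  have h1 : (1:ℝ) ∈ Icc (0:ℝ) 1 := by norm_num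
  calc |u 1 * v 1 - u 0 * v 0 - ∫ y in (0:ℝ)..1, u' y * v y|
      ≤ |u 1 * v 1| + |u 0 * v 0| + |∫ y in (0:ℝ)..1, u' y * v y| := by
        have t1 := abs_sub (u 1 * v 1 - u 0 * v 0) (∫ y in (0:ℝ)..1, u' y * v y)
        have t2 := abs_sub (u 1 * v 1) (u 0 * v 0)
        linarith
    _ ≤ 8/|c| + 8/|c| + 56/|c| := by
        gcongr ?_ + ?_ + ?_
        · rw [abs_mul]
          calc |u 1| * |v 1| ≤ (8/|c|) * 1 :=
            mul_le_mul (hub 1 h1) (hvb 1) (abs_nonneg _) (by positivity)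
          _ = 8/|c| := by ring
        · rw [abs_mul]
          calc |u 0| * |v 0| ≤ (8/|c|) * 1 :=
            mul_le_mul (hub 0 h0) (hvb 0) (abs_nonneg _) (by positivity)
          _ = 8/|c| := by ring
    _ ≤ 100/|c| := by
        rw [← add_div, ← add_div, div_le_div_iff₀ hc0 hc0]
        nlinarith

end Aux

section Aux2
open Real

lemma sin_lower (t : ℝ) : 2/π * |t - round (t/π) * π| ≤ |Real.sin t| := by
  set k := round (t/π) with hk
  set r := t - k * π with hr
  have hpi := Real.pi_pos
  have hrabs : |r| ≤ π/2 := by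
    have h := abs_sub_round (t/π)
    have : |r| = |t/π - k| * π := by
      have h2 : r = (t/π - k) * π := by rw [hr]; field_simp
      rw [h2, abs_mul, abs_of_pos hpi]
    rw [this]
    calc |t/π - k| * π ≤ (1/2) * π := by nlinarith [abs_nonneg (t/π - k)]
    _ = π/2 := by ring
  have hts : Real.sin t = (-1)^k * Real.sin r := by
    have : t = r + k * π := by rw [hr]; ring
    rw [this, Real.sin_add_int_mul_pi]
  have habs : |Real.sin t| = |Real.sin r| := by
    rw [hts, abs_mul]
    have : |((-1:ℝ))^k| = 1 := by
      rcases Int.even_or_odd k with he | ho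
      · rw [he.neg_one_zpow]; simp
      · rw [Odd.neg_one_zpow ho]; simp
    rw [this, one_mul]
  rw [habs]
  have : |Real.sin r| = Real.sin |r| := by
    rcases abs_cases r with ⟨h1, h2⟩ | ⟨h1, h2⟩
    · rw [h1, abs_of_nonneg (Real.sin_nonneg_of_nonneg_of_le_pi h2 (by linarith))]
    · rw [h1, Real.sin_neg]
      have hs : Real.sin r ≤ 0 := by
        have hge : Real.sin (-r) ≥ 0 := Real.sin_nonneg_of_nonneg_of_le_pi (by linarith) (by
          have := neg_le_of_abs_le hrabs; linarith)
        rw [Real.sin_neg] at hge; linarith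
      rw [abs_of_nonpos hs]
  rw [this]
  exact Real.mul_le_sin (abs_nonneg r) hrabs

lemma bad_measure (N δ : ℝ) (hN : 2*π ≤ N) (hδ0 : 0 < δ) (hδ1 : δ ≤ 1) :
    volume {x : ℝ | x ∈ Icc (0:ℝ) 1 ∧ |Real.sin (N*x)| < δ} ≤ ENNReal.ofReal (2*δ) := by
  have hpi := Real.pi_pos
  have hN0 : 0 < N := by linarith
  set K : ℕ := ⌊N/π⌋₊ + 1 with hK
  have hsub : {x : ℝ | x ∈ Icc (0:ℝ) 1 ∧ |Real.sin (N*x)| < δ} ⊆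
      ⋃ k ∈ Finset.range (K+1), Ioo ((k*π - π*δ/2)/N) ((k*π + π*δ/2)/N) := by
    intro x ⟨hx, hsin⟩
    set t := N * x with ht
    have ht0 : 0 ≤ t := mul_nonneg hN0.le hx.1
    have htN : t ≤ N := by
      calc t = N * x := ht
      _ ≤ N * 1 := by nlinarith [hx.2]
      _ = N := by ring
    have hlow := sin_lower t
    set k : ℤ := round (t/π) with hk
    have hk0 : 0 ≤ k := by
      rw [hk, round_eq]
      have : (0:ℝ) ≤ t/π + 1/2 := by positivity
      exact Int.floor_nonneg.2 this
    have hrb : |t - k*π| < π*δ/2 := by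
      by_contra hcon
      push_neg at hcon
      have : 2/π * (π*δ/2) ≤ 2/π * |t - k*π| := by
        apply mul_le_mul_of_nonneg_left hcon (by positivity)
      have h2 : 2/π * (π*δ/2) = δ := by field_simp
      linarith [lt_of_le_of_lt (le_trans this hlow) hsin]
    have hkK : k ≤ K := by
      have h1 : (k:ℝ)*π ≤ t + π*δ/2 := by
        have := abs_lt.1 hrb
        linarith [this.2]
      have h2 : (k:ℝ) ≤ N/π + 1/2 := by
        rw [div_add' _ _ _ (ne_of_gt hpi)]
        rw [le_div_iff₀ hpi]
        nlinarith
      have h3 : (K:ℝ) + 1/2 ≥ N/π + 1/2 := by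
        have := Nat.lt_floor_add_one (N/π)
        push_cast [hK]
        linarith
      have h4 : (k:ℝ) < (K:ℝ) + 1 := by linarith
      have h5 : (k:ℝ) < ((K:ℤ):ℝ) + 1 := by exact_mod_cast h4
      exact_mod_cast Int.lt_add_one_iff.mp (by exact_mod_cast h5)
    have hmem1 : k.toNat ∈ Finset.range (K+1) := by
      simp only [Finset.mem_range]
      omega
    have hkt : ((k.toNat : ℕ) : ℝ) = (k:ℝ) := by
      exact_mod_cast congrArg (Int.cast : ℤ → ℝ) (Int.toNat_of_nonneg hk0)
    have habs := abs_lt.1 hrb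
    have hmem2 : x ∈ Ioo (((k.toNat:ℕ)*π - π*δ/2)/N) (((k.toNat:ℕ)*π + π*δ/2)/N) := by
      constructor
      · rw [div_lt_iff₀ hN0, hkt]
        linarith [habs.1]
      · rw [lt_div_iff₀ hN0, hkt]
        linarith [habs.2]
    exact mem_biUnion hmem1 hmem2
  calc volume {x : ℝ | x ∈ Icc (0:ℝ) 1 ∧ |Real.sin (N*x)| < δ}
      ≤ volume (⋃ k ∈ Finset.range (K+1), Ioo ((k*π - π*δ/2)/N) ((k*π + π*δ/2)/N)) :=
        measure_mono hsub
    _ ≤ ∑ k ∈ Finset.range (K+1), volume (Ioo ((k*π - π*δ/2)/N) ((k*π + π*δ/2)/N)) :=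
        measure_biUnion_finset_le _ _
    _ = ∑ k ∈ Finset.range (K+1), ENNReal.ofReal (π*δ/N) := by
        apply Finset.sum_congr rfl
        intro k _
        rw [Real.volume_Ioo]
        congr 1
        field_simp
        ring
    _ = ((K+1 : ℕ) : ℝ≥0∞) * ENNReal.ofReal (π*δ/N) := by
        rw [Finset.sum_const, Finset.card_range]
        simp [nsmul_eq_mul]
    _ ≤ ENNReal.ofReal (2*δ) := by
        rw [show ((K+1 : ℕ) : ℝ≥0∞) * ENNReal.ofReal (π*δ/N)
            = ENNReal.ofReal (((K+1:ℕ):ℝ) * (π*δ/N)) by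
          rw [ENNReal.ofReal_mul (by positivity), ENNReal.ofReal_natCast]]
        apply ENNReal.ofReal_le_ofReal
        have hNpi : 2 ≤ N/π := by rw [le_div_iff₀ hpi]; linarith
        have hKb : ((K+1:ℕ):ℝ) ≤ 2*(N/π) := by
          have h1 := Nat.floor_le (by positivity : (0:ℝ) ≤ N/π)
          push_cast [hK]
          linarith
        calc ((K+1:ℕ):ℝ) * (π*δ/N) ≤ (2*(N/π)) * (π*δ/N) := by
              apply mul_le_mul_of_nonneg_right hKb (by positivity)
        _ = 2*δ := by field_simp

end Aux2

lemma exp8 : Real.exp 2 ≤ 8 := by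
  have h2 : Real.exp 2 = Real.exp 1 * Real.exp 1 := by
    rw [← Real.exp_add]; norm_num
  nlinarith [Real.exp_one_lt_d9, Real.exp_pos 1]

lemma triv_bound (c s : ℝ) (hs0 : 0 ≤ s) (hs2 : s ≤ 2) :
    |∫ y in (0:ℝ)..1, Real.sin ((y+c)^2) * Real.exp (y*s)| ≤ 8 := by
  have := intervalIntegral.norm_integral_le_of_norm_le_const
    (C := 8) (f := fun y => Real.sin ((y+c)^2) * Real.exp (y*s)) (a := 0) (b := 1) ?_
  · simpa using this
  · intro y hy
    rw [uIoc_of_le (by norm_num)] at hy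
    rw [Real.norm_eq_abs, abs_mul]
    have h1 : |Real.sin ((y+c)^2)| ≤ 1 := Real.abs_sin_le_one _
    have h2 : |Real.exp (y*s)| ≤ 8 := by
      rw [abs_of_nonneg (Real.exp_pos _).le]
      refine le_trans (Real.exp_le_exp.2 ?_) exp8
      nlinarith [hy.1.le, hy.2]
    nlinarith [abs_nonneg (Real.sin ((y+c)^2)), abs_nonneg (Real.exp (y*s))]

lemma decomp (c s : ℝ) (hs : s ≠ 0) :
    (∫ y in (0:ℝ)..1, (1 + (1/2) * Real.sin ((y + c)^2)) * Real.exp (y*s))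
      = (Real.exp s - 1)/s
        + (1/2) * ∫ y in (0:ℝ)..1, Real.sin ((y+c)^2) * Real.exp (y*s) := by
  have h1 : ∀ y : ℝ, (1 + (1/2) * Real.sin ((y + c)^2)) * Real.exp (y*s)
      = Real.exp (y*s) + (1/2) * (Real.sin ((y+c)^2) * Real.exp (y*s)) := by
    intro y; ring
  simp_rw [h1]
  rw [intervalIntegral.integral_add ((by fun_prop : Continuous fun y : ℝ => Real.exp (y*s)).intervalIntegrable _ _)
    ((by fun_prop : Continuous fun y : ℝ => (1/2) * (Real.sin ((y+c)^2) * Real.exp (y*s))).intervalIntegrable _ _),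
    intervalIntegral.integral_const_mul]
  congr 1
  -- ∫ exp(y*s) = (exp s - 1)/s
  have : ∀ y : ℝ, Real.exp (y*s) = Real.exp (s*y) := fun y => by ring_nf
  simp_rw [this]
  rw [intervalIntegral.integral_comp_mul_left (fun x => Real.exp x) hs]
  simp [integral_exp, mul_comm, div_eq_inv_mul]

lemma A_cont (d N : ℝ) : Continuous (fun x : ℝ => ∫ y in (0:ℝ)..1,
    (1 + (1/2) * Real.sin ((y + d * Real.sin (N * x)) ^ 2)) * Real.exp (y * (1 + Real.sin x))) := by
  apply intervalIntegral.continuous_parametric_intervalIntegral_of_continuous'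
  apply Continuous.mul
  · apply Continuous.add continuous_const
    apply Continuous.mul continuous_const
    apply Real.continuous_sin.comp
    fun_prop
  · fun_prop

/-- The heavily oscillatory coefficient `A^ε` converges weakly in `L²(0,1)` to
`A*(x) = (e^{1+sin x} − 1)/(1 + sin x)` as `ε → 0⁺`. -/
theorem stmt_14 (A : ℝ → ℝ → ℝ)
    (hA : ∀ ε x, A ε x = ∫ y in (0:ℝ)..1,
      (1 + (1 / 2) * Real.sin ((y + (1 / (2 * ε)) *
        Real.sin (Real.pi * Real.sqrt (2 / ε) * x)) ^ 2)) *
        Real.exp (y * (1 + Real.sin x))) :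
    ∀ φ : ℝ → ℝ, ContinuousOn φ (Icc 0 1) →
      Tendsto (fun ε => ∫ x in (0:ℝ)..1, A ε x * φ x)
        (nhdsWithin 0 (Ioi 0))
        (nhds (∫ x in (0:ℝ)..1,
          ((Real.exp (1 + Real.sin x) - 1) / (1 + Real.sin x)) * φ x)) := by
  intro φ hφ
  have hpi := Real.pi_pos
  have hpi3 := Real.two_le_pi
  have hI01 : uIcc (0:ℝ) 1 = Icc 0 1 := by rw [uIcc_of_le]; norm_num
  -- bound for φ
  obtain ⟨M0, hM0⟩ := (isCompact_Icc : IsCompact (Icc (0:ℝ) 1)).exists_bound_of_continuousOn hφ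
  set M := max M0 1 with hM
  have hMpos : (0:ℝ) < M := lt_of_lt_of_le one_pos (le_max_right _ _)
  have hφb : ∀ x ∈ Icc (0:ℝ) 1, |φ x| ≤ M := fun x hx =>
    le_trans (hM0 x hx) (le_max_left _ _)
  set g : ℝ → ℝ := fun x => (Real.exp (1 + Real.sin x) - 1) / (1 + Real.sin x) with hg
  -- basic facts on [0,1]
  have hsin : ∀ x ∈ Icc (0:ℝ) 1, 0 ≤ Real.sin x := by
    intro x hx
    exact Real.sin_nonneg_of_nonneg_of_le_pi hx.1 (by linarith [hx.2])
  have hgcont : ContinuousOn g (Icc 0 1) := by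
    apply ContinuousOn.div (by fun_prop) (by fun_prop)
    intro x hx
    have := hsin x hx
    intro h; linarith
  have hig : IntervalIntegrable (fun x => g x * φ x) volume 0 1 := by
    apply ContinuousOn.intervalIntegrable
    rw [hI01]
    exact hgcont.mul hφ
  -- the key quantitative estimate
  have key : ∀ ε : ℝ, ε ∈ Ioc (0:ℝ) (1/100) →
      |(∫ x in (0:ℝ)..1, A ε x * φ x) - ∫ x in (0:ℝ)..1, g x * φ x|
        ≤ 108 * M * Real.sqrt ε := by
    intro ε hε
    obtain ⟨hε0, hε1⟩ := hε
    set δ := Real.sqrt ε with hδ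
    have hδ0 : 0 < δ := Real.sqrt_pos.2 hε0
    have hδsq : δ^2 = ε := Real.sq_sqrt hε0.le
    have hδ1 : δ ≤ 1/10 := by
      rw [hδ, show (1/10 : ℝ) = Real.sqrt (1/100) by
        rw [show (1/100:ℝ) = (1/10)^2 by norm_num, Real.sqrt_sq (by norm_num)]]
      exact Real.sqrt_le_sqrt hε1
    set N := Real.pi * Real.sqrt (2/ε) with hN
    have hNb : 2 * Real.pi ≤ N := by
      rw [hN]
      have h2 : (2:ℝ) ≤ Real.sqrt (2/ε) := by
        have hdiv : (4:ℝ) ≤ 2/ε := by rw [le_div_iff₀ hε0]; linarith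
        nlinarith [Real.sq_sqrt (by positivity : (0:ℝ) ≤ 2/ε), Real.sqrt_nonneg (2/ε)]
      nlinarith
    set B : Set ℝ := {x : ℝ | |Real.sin (N * x)| < δ} with hB
    have hBmeas : MeasurableSet B := by
      have : B = (fun x => |Real.sin (N * x)|) ⁻¹' Iio δ := rfl
      rw [this]
      exact ((Real.continuous_sin.comp (continuous_const.mul continuous_id)).abs).measurable
        measurableSet_Iio
    -- decomposition of A ε on [0,1]
    set R : ℝ → ℝ := fun x => ∫ y in (0:ℝ)..1,
      Real.sin ((y + (1 / (2 * ε)) * Real.sin (N * x))^2) * Real.exp (y * (1 + Real.sin x)) with hR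
    have hsne : ∀ x ∈ Icc (0:ℝ) 1, (1 + Real.sin x) ≠ 0 := by
      intro x hx; have := hsin x hx; intro h; linarith
    have hAx : ∀ x ∈ Icc (0:ℝ) 1, A ε x = g x + (1/2) * R x := by
      intro x hx
      rw [hA ε x, hg, hR]
      exact decomp ((1 / (2 * ε)) * Real.sin (N * x)) (1 + Real.sin x) (hsne x hx)
    -- bounds on R
    have hs02 : ∀ x ∈ Icc (0:ℝ) 1, 0 ≤ 1 + Real.sin x ∧ 1 + Real.sin x ≤ 2 := by
      intro x hx
      have h1 := hsin x hx
      have h2 := Real.sin_le_one x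
      constructor <;> linarith
    have hRb : ∀ x ∈ Icc (0:ℝ) 1, |R x| ≤ 8 := by
      intro x hx
      exact triv_bound _ _ (hs02 x hx).1 (hs02 x hx).2
    have hRgood : ∀ x ∈ Icc (0:ℝ) 1, δ ≤ |Real.sin (N * x)| → |R x| ≤ 200 * δ := by
      intro x hx hgood
      have hcabs : |(1 / (2 * ε)) * Real.sin (N * x)| = |Real.sin (N * x)| / (2*ε) := by
        rw [abs_mul, abs_of_pos (div_pos one_pos (by linarith) : (0:ℝ) < 1/(2*ε))]
        ring
      have hc2 : 2 ≤ |(1 / (2 * ε)) * Real.sin (N * x)| := by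
        rw [hcabs, le_div_iff₀ (by linarith)]
        calc 2 * (2*ε) = 4 * δ * δ := by rw [← hδsq]; ring
        _ ≤ (4 * (1/10)) * δ := by nlinarith [hδ0, hδ1]
        _ ≤ 1 * δ := by nlinarith [hδ0]
        _ ≤ |Real.sin (N*x)| := by linarith
      have := osc_bound ((1 / (2 * ε)) * Real.sin (N * x)) (1 + Real.sin x) hc2
        (hs02 x hx).1 (hs02 x hx).2
      refine le_trans this ?_
      have hsinpos : 0 < |Real.sin (N*x)| := lt_of_lt_of_le hδ0 hgood
      have hclow : 1/(2*δ) ≤ |1 / (2 * ε) * Real.sin (N * x)| := by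
        rw [hcabs, div_le_div_iff₀ (by linarith) (by linarith)]
        calc 1 * (2*ε) = δ * (2*δ) := by rw [← hδsq]; ring
        _ ≤ |Real.sin (N*x)| * (2*δ) := by nlinarith
      calc 100 / |1 / (2 * ε) * Real.sin (N * x)| ≤ 100 / (1/(2*δ)) := by
            apply div_le_div_of_nonneg_left (by norm_num) (by positivity) hclow
      _ = 200 * δ := by field_simp; ring
    -- pointwise bound
    have hpt : ∀ x ∈ Icc (0:ℝ) 1, |(A ε x - g x) * φ x|
        ≤ (4 * B.indicator (fun _ => (1:ℝ)) x + 100 * δ) * M := by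
      intro x hx
      rw [abs_mul]
      have hbound : |A ε x - g x| ≤ 4 * B.indicator (fun _ => (1:ℝ)) x + 100 * δ := by
        rw [hAx x hx, add_sub_cancel_left, abs_mul, abs_of_pos (by norm_num : (0:ℝ) < 1/2)]
        by_cases hxB : x ∈ B
        · rw [indicator_of_mem hxB]
          have := hRb x hx
          nlinarith
        · rw [indicator_of_notMem hxB]
          have hge : δ ≤ |Real.sin (N * x)| := by
            by_contra hcon; push_neg at hcon; exact hxB hcon
          have := hRgood x hx hge
          nlinarith
      have h2 := hφb x hx
      have hnn : 0 ≤ 4 * B.indicator (fun _ => (1:ℝ)) x + 100 * δ := by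
        have : (0:ℝ) ≤ B.indicator (fun _ => (1:ℝ)) x := by
          apply indicator_nonneg; intro _ _; norm_num
        positivity
      exact mul_le_mul hbound h2 (abs_nonneg _) hnn
    -- continuity of A ε
    have hAc : Continuous (A ε) := by
      have hfun : A ε = fun x => ∫ y in (0:ℝ)..1,
          (1 + (1/2) * Real.sin ((y + (1 / (2 * ε)) * Real.sin (N * x)) ^ 2)) *
            Real.exp (y * (1 + Real.sin x)) := funext (hA ε)
      rw [hfun]
      exact A_cont (1 / (2 * ε)) N
    have hiA : IntervalIntegrable (fun x => A ε x * φ x) volume 0 1 := by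
      apply ContinuousOn.intervalIntegrable
      rw [hI01]
      exact hAc.continuousOn.mul hφ
    -- subtract
    have hsub : (∫ x in (0:ℝ)..1, A ε x * φ x) - ∫ x in (0:ℝ)..1, g x * φ x
        = ∫ x in (0:ℝ)..1, (A ε x - g x) * φ x := by
      rw [← intervalIntegral.integral_sub hiA hig]
      apply intervalIntegral.integral_congr
      intro x _
      ring
    rw [hsub]
    -- integrability of the majorant
    have hind : IntervalIntegrable (B.indicator (fun _ => (1:ℝ))) volume 0 1 := by
      rw [intervalIntegrable_iff]
      exact ((integrableOn_const measure_Ioc_lt_top.ne)).indicator hBmeas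
    have hmaj : IntervalIntegrable
        (fun x => (4 * B.indicator (fun _ => (1:ℝ)) x + 100 * δ) * M) volume 0 1 := by
      apply IntervalIntegrable.mul_const
      exact ((hind.const_mul 4).add (intervalIntegrable_const))
    have hiAg : IntervalIntegrable (fun x => |(A ε x - g x) * φ x|) volume 0 1 := by
      apply ContinuousOn.intervalIntegrable
      rw [hI01]
      exact ((hAc.continuousOn.sub hgcont).mul hφ).abs
    -- chain of inequalities
    have step1 : |∫ x in (0:ℝ)..1, (A ε x - g x) * φ x|
        ≤ ∫ x in (0:ℝ)..1, |(A ε x - g x) * φ x| := by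
      simp only [abs_mul]
      have := intervalIntegral.norm_integral_le_integral_norm (μ := volume)
        (f := fun x => (A ε x - g x) * φ x) (a := 0) (b := 1) (by norm_num)
      simpa [Real.norm_eq_abs, abs_mul] using this
    have step2 : (∫ x in (0:ℝ)..1, |(A ε x - g x) * φ x|)
        ≤ ∫ x in (0:ℝ)..1, (4 * B.indicator (fun _ => (1:ℝ)) x + 100 * δ) * M := by
      apply intervalIntegral.integral_mono_on (by norm_num) hiAg hmaj
      exact hpt
    have hvol : (volume (Ioc (0:ℝ) 1 ∩ B)).toReal ≤ 2 * δ := by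
      have hsubset : Ioc (0:ℝ) 1 ∩ B ⊆ {x : ℝ | x ∈ Icc (0:ℝ) 1 ∧ |Real.sin (N*x)| < δ} := by
        intro x ⟨hx1, hx2⟩
        exact ⟨⟨hx1.1.le, hx1.2⟩, hx2⟩
      have hle := le_trans (measure_mono hsubset)
        (bad_measure N δ hNb hδ0 (by linarith))
      calc (volume (Ioc (0:ℝ) 1 ∩ B)).toReal
          ≤ (ENNReal.ofReal (2*δ)).toReal :=
            ENNReal.toReal_mono ENNReal.ofReal_ne_top hle
      _ = 2 * δ := ENNReal.toReal_ofReal (by linarith)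
    have step3 : (∫ x in (0:ℝ)..1, (4 * B.indicator (fun _ => (1:ℝ)) x + 100 * δ) * M)
        ≤ 108 * M * δ := by
      rw [intervalIntegral.integral_mul_const,
        intervalIntegral.integral_add (hind.const_mul 4) intervalIntegrable_const,
        intervalIntegral.integral_const_mul, intervalIntegral.integral_const]
      have hindint : (∫ x in (0:ℝ)..1, B.indicator (fun _ => (1:ℝ)) x) ≤ 2 * δ := by
        rw [intervalIntegral.integral_of_le (by norm_num : (0:ℝ) ≤ 1),
          MeasureTheory.setIntegral_indicator hBmeas]
        rw [MeasureTheory.setIntegral_const]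
        simp only [smul_eq_mul, mul_one]
        exact hvol
      rw [sub_zero, one_smul]
      have hI0 : (0:ℝ) ≤ ∫ x in (0:ℝ)..1, B.indicator (fun _ => (1:ℝ)) x := by
        apply intervalIntegral.integral_nonneg (by norm_num)
        intro x _
        exact indicator_nonneg (fun _ _ => by norm_num) x
      nlinarith [hindint, hMpos, hI0]
    calc |∫ x in (0:ℝ)..1, (A ε x - g x) * φ x|
        ≤ ∫ x in (0:ℝ)..1, |(A ε x - g x) * φ x| := step1
      _ ≤ ∫ x in (0:ℝ)..1, (4 * B.indicator (fun _ => (1:ℝ)) x + 100 * δ) * M := step2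
      _ ≤ 108 * M * δ := step3
  -- conclude by squeezing
  rw [show (∫ x in (0:ℝ)..1, ((Real.exp (1 + Real.sin x) - 1) / (1 + Real.sin x)) * φ x)
      = ∫ x in (0:ℝ)..1, g x * φ x from rfl]
  rw [tendsto_iff_dist_tendsto_zero]
  have hmem : Ioc (0:ℝ) (1/100) ∈ nhdsWithin (0:ℝ) (Ioi 0) :=
    Ioc_mem_nhdsGT_of_mem ⟨le_refl 0, by norm_num⟩
  apply squeeze_zero' (g := fun ε => 108 * M * Real.sqrt ε)
    (Filter.Eventually.of_forall (fun t => dist_nonneg))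
  · filter_upwards [hmem] with ε hε
    rw [Real.dist_eq]
    exact key ε hε
  · have hsq : Tendsto Real.sqrt (nhdsWithin (0:ℝ) (Ioi 0)) (nhds 0) := by
      have := (Real.continuous_sqrt.tendsto 0)
      rw [Real.sqrt_zero] at this
      exact this.mono_left nhdsWithin_le_nhds
    have := (tendsto_const_nhds (x := (108 * M : ℝ))
      (f := nhdsWithin (0:ℝ) (Ioi 0))).mul hsq
    simpa using this
end
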